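/- arXiv:2411.19364 — 4 statements merged into one kernel-verified Lean document; each statement's English description precedes it below -/
import Mathlib

section
/- Let n be a positive even integer whose binary expansion has at least five nonzero digits (i.e., n is a sum of at least five distinct powers of 2). Then log₂(n) + 2 ≤ ‖n‖₂, where log₂ denotes the real base-2 logarithm. -/
/-- `CanRepr l n m` means `n` can be expressed using exactly `m` copies of `l`
    combined with addition and multiplication (and parentheses). -/
inductive CanRepr (l : ℕ) : ℕ → ℕ → Prop
  | base : CanRepr l l 1
  | add {a b p q : ℕ} : CanRepr l a p → CanRepr l b q → CanRepr l (a + b) (p + q)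
  | mul {a b p q : ℕ} : CanRepr l a p → CanRepr l b q → CanRepr l (a * b) (p + q)

/-- The `l`-complexity `‖n‖_l`: the minimal number of `l`'s needed to express `n`
    using only addition and multiplication. (By convention `sInf ∅ = 0`.) -/
noncomputable def complexity (l n : ℕ) : ℕ := sInf {m | CanRepr l n m}

namespace Stmt11Aux


/-- binary digit sum -/
def s (n : ℕ) : ℕ := (Nat.digits 2 n).sum

lemma s_zero : s 0 = 0 := by simp [s]

lemma s_one : s 1 = 1 := by simp [s]

lemma s_rec (n : ℕ) : s n = n % 2 + s (n / 2) := by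
  rcases Nat.eq_zero_or_pos n with h | h
  · subst h; simp [s]
  · rw [s, Nat.digits_def' (by norm_num : 1 < 2) h]
    simp [s, Nat.add_comm]

lemma s_eq_zero {n : ℕ} (h : s n = 0) : n = 0 := by
  induction n using Nat.strong_induction_on with
  | _ n ih =>
    rcases Nat.eq_zero_or_pos n with h0 | h0
    · exact h0
    · rw [s_rec] at h
      have h1 : n % 2 = 0 := by omega
      have h2 : s (n / 2) = 0 := by omega
      have := ih (n / 2) (by omega) h2
      omega

/-- key subadditivity with carry -/
lemma s_add3 : ∀ N a b c : ℕ, a + b + c ≤ N → c ≤ 1 → s (a + b + c) ≤ s a + s b + c := by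
  intro N
  induction N with
  | zero =>
    intro a b c h hc
    have : a = 0 ∧ b = 0 ∧ c = 0 := by omega
    rcases this with ⟨rfl, rfl, rfl⟩; simp [s_zero]
  | succ N ih =>
    intro a b c h hc
    rcases Nat.eq_zero_or_pos (a + b + c) with h0 | h0
    · have : a = 0 ∧ b = 0 ∧ c = 0 := by omega
      rcases this with ⟨rfl, rfl, rfl⟩; simp [s_zero]
    · have hT := s_rec (a + b + c)
      set d := (a % 2 + b % 2 + c) / 2 with hd
      set r := (a % 2 + b % 2 + c) % 2 with hr
      have hd1 : d ≤ 1 := by omega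
      have hr1 : r ≤ 1 := by omega
      have hT2 : (a + b + c) / 2 = a / 2 + b / 2 + d := by omega
      have hTr : (a + b + c) % 2 = r := by omega
      have hle : a / 2 + b / 2 + d ≤ N := by omega
      have hih := ih (a / 2) (b / 2) d hle hd1
      have hsa := s_rec a
      have hsb := s_rec b
      rw [hT, hT2, hTr]
      omega

lemma s_add_le (a b : ℕ) : s (a + b) ≤ s a + s b := by
  have := s_add3 (a + b) a b 0 (by omega) (by omega)
  simpa using this

lemma s_pow_mul_add : ∀ k y x : ℕ, x < 2 ^ k → s (2 ^ k * y + x) = s y + s x := by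
  intro k
  induction k with
  | zero =>
    intro y x hx
    interval_cases x
    simp [s_zero]
  | succ k ih =>
    intro y x hx
    have hx2 : x / 2 < 2 ^ k := by
      have : (2:ℕ) ^ (k+1) = 2 * 2 ^ k := by ring
      omega
    have hpow : (2:ℕ) ^ (k+1) * y = 2 * (2 ^ k * y) := by ring
    have h1 := s_rec (2 ^ (k+1) * y + x)
    have h2 : (2 ^ (k+1) * y + x) % 2 = x % 2 := by omega
    have h3 : (2 ^ (k+1) * y + x) / 2 = 2 ^ k * y + x / 2 := by omega
    rw [h1, h2, h3, ih y (x / 2) hx2]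
    have h4 := s_rec x
    omega

lemma s_pow (k : ℕ) : s (2 ^ k) = 1 := by
  have := s_pow_mul_add k 1 0 (by positivity)
  simpa [s_one, s_zero] using this

lemma s_pow_mul (k y : ℕ) : s (2 ^ k * y) = s y := by
  have := s_pow_mul_add k y 0 (by positivity)
  simpa [s_zero] using this

lemma s_two_pow_add (i j : ℕ) (h : i < j) : s (2 ^ j + 2 ^ i) = 2 := by
  have h1 : (2:ℕ) ^ i < 2 ^ j := Nat.pow_lt_pow_right (by norm_num) h
  have := s_pow_mul_add j 1 (2 ^ i) h1
  simpa [s_one, s_pow] using this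

lemma two_pow_s_le (n : ℕ) : 2 ^ s n ≤ n + 1 := by
  induction n using Nat.strong_induction_on with
  | _ n ih =>
    rcases Nat.eq_zero_or_pos n with h0 | h0
    · subst h0; simp [s_zero]
    · have h1 := s_rec n
      have h2 := ih (n / 2) (by omega)
      rcases Nat.mod_two_eq_zero_or_one n with hm | hm
      · rw [h1, hm]
        calc 2 ^ (0 + s (n / 2)) = 2 ^ s (n / 2) := by rw [Nat.zero_add]
          _ ≤ n / 2 + 1 := h2
          _ ≤ n + 1 := by omega
      · rw [h1, hm]
        have h3 : (2:ℕ) ^ (1 + s (n / 2)) = 2 * 2 ^ s (n / 2) := by ring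
        omega

lemma s_eq_one {n : ℕ} (h : s n = 1) : ∃ k, n = 2 ^ k := by
  induction n using Nat.strong_induction_on with
  | _ n ih =>
    rcases Nat.eq_zero_or_pos n with h0 | h0
    · subst h0; simp [s_zero] at h
    · have h1 := s_rec n
      rcases Nat.mod_two_eq_zero_or_one n with hm | hm
      · have h2 : s (n / 2) = 1 := by omega
        obtain ⟨k, hk⟩ := ih (n / 2) (by omega) h2
        refine ⟨k + 1, ?_⟩
        have hp : (2:ℕ) ^ (k+1) = 2 * 2 ^ k := by ring
        omega
      · have h2 : s (n / 2) = 0 := by omega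
        have := s_eq_zero h2
        exact ⟨0, by simpa using (by omega : n = 1)⟩

lemma s_eq_two {n : ℕ} (h : s n = 2) : ∃ i j, i < j ∧ n = 2 ^ i + 2 ^ j := by
  induction n using Nat.strong_induction_on with
  | _ n ih =>
    rcases Nat.eq_zero_or_pos n with h0 | h0
    · subst h0; simp [s_zero] at h
    · have h1 := s_rec n
      rcases Nat.mod_two_eq_zero_or_one n with hm | hm
      · have h2 : s (n / 2) = 2 := by omega
        obtain ⟨i, j, hij, hk⟩ := ih (n / 2) (by omega) h2
        refine ⟨i + 1, j + 1, by omega, ?_⟩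
        have hp1 : (2:ℕ) ^ (i+1) = 2 * 2 ^ i := by ring
        have hp2 : (2:ℕ) ^ (j+1) = 2 * 2 ^ j := by ring
        omega
      · have h2 : s (n / 2) = 1 := by omega
        obtain ⟨k, hk⟩ := s_eq_one h2
        refine ⟨0, k + 1, by omega, ?_⟩
        have hp : (2:ℕ) ^ (k+1) = 2 * 2 ^ k := by ring
        simp only [pow_zero]
        omega

/-! ### log base 2 facts -/

abbrev L (n : ℕ) : ℕ := Nat.log 2 n

lemma pow_L_le {n : ℕ} (h : n ≠ 0) : 2 ^ L n ≤ n := Nat.pow_log_le_self 2 h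

lemma lt_pow_L (n : ℕ) : n < 2 ^ (L n + 1) := Nat.lt_pow_succ_log_self (by norm_num) n

lemma le_L {t n : ℕ} (h : 2 ^ t ≤ n) : t ≤ L n := by
  have h1 : (1:ℕ) ≤ 2 ^ t := Nat.one_le_two_pow
  exact (Nat.le_log_iff_pow_le (by norm_num) (by omega)).mpr h

lemma L_lt {t n : ℕ} (hn : n ≠ 0) (h : n < 2 ^ t) : L n < t :=
  (Nat.log_lt_iff_lt_pow (by norm_num) hn).mpr h

lemma L_eq {t n : ℕ} (h1 : 2 ^ t ≤ n) (h2 : n < 2 ^ (t + 1)) : L n = t := by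
  have ha := le_L h1
  have h3 : (1:ℕ) ≤ 2 ^ t := Nat.one_le_two_pow
  have hb := L_lt (by omega) h2
  omega

lemma L_pow (k : ℕ) : L (2 ^ k) = k := Nat.log_pow (by norm_num) k

/-! ### enumeration lemmas -/

/-- `(2^c+1)(2^x+1) ≥ 2^(c+x+1)` forces `c = x = 1`. -/
lemma lemD {c x : ℕ} (hc : 1 ≤ c) (hx : 1 ≤ x)
    (h : 2 ^ (c + x + 1) ≤ (2 ^ c + 1) * (2 ^ x + 1)) : c = 1 ∧ x = 1 := by
  by_contra hcon
  have hkey : ∀ u v : ℕ, 1 ≤ u → 2 ≤ v → (2 ^ u + 1) * (2 ^ v + 1) < 2 ^ (u + v + 1) := by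
    intro u v hu hv
    have h1 : (2:ℕ) ^ u ≥ 2 := by calc (2:ℕ)^u ≥ 2^1 := Nat.pow_le_pow_right (by norm_num) hu
                                       _ = 2 := by norm_num
    have h2 : (2:ℕ) ^ v ≥ 4 := by calc (2:ℕ)^v ≥ 2^2 := Nat.pow_le_pow_right (by norm_num) hv
                                       _ = 4 := by norm_num
    have h3 : (2:ℕ) ^ (u + v + 1) = 2 * (2 ^ u * 2 ^ v) := by rw [pow_add, pow_add]; ring
    nlinarith [h1, h2]
  rcases Nat.lt_or_ge c 2 with hc2 | hc2
  · have hc1 : c = 1 := by omega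
    have hx2 : 2 ≤ x := by omega
    have := hkey c x hc hx2
    omega
  · have := hkey x c hx hc2
    have heq : x + c + 1 = c + x + 1 := by ring
    rw [heq] at this
    nlinarith [this, h]

lemma s_le_four_of_pows (a b c d : ℕ) : s (2 ^ a + 2 ^ b + 2 ^ c + 2 ^ d) ≤ 4 := by
  have h1 := s_add_le (2 ^ a + 2 ^ b + 2 ^ c) (2 ^ d)
  have h2 := s_add_le (2 ^ a + 2 ^ b) (2 ^ c)
  have h3 := s_add_le (2 ^ a) (2 ^ b)
  have := s_pow a; have := s_pow b; have := s_pow c; have := s_pow d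
  omega

lemma s_le_three_of_pows (a b c : ℕ) : s (2 ^ a + 2 ^ b + 2 ^ c) ≤ 3 := by
  have h2 := s_add_le (2 ^ a + 2 ^ b) (2 ^ c)
  have h3 := s_add_le (2 ^ a) (2 ^ b)
  have := s_pow a; have := s_pow b; have := s_pow c
  omega

/-- the triple enumeration: if `(2^c+1)(2^x+1)(2^y+1) ≥ 2^(c+x+y+1)` then the
product has binary digit sum at most 4. -/
lemma lemA_core (x y z : ℕ) (hx : 1 ≤ x) (hxy : x ≤ y) (hyz : y ≤ z)
    (h : 2 ^ (x + y + z + 1) ≤ (2 ^ x + 1) * ((2 ^ y + 1) * (2 ^ z + 1))) :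
    s ((2 ^ x + 1) * ((2 ^ y + 1) * (2 ^ z + 1))) ≤ 4 := by
  rcases Nat.lt_or_ge y 2 with hy1 | hy2
  · -- x = y = 1 : product = 9*(2^z+1) = 2^(z+3) + 2^z + 2^3 + 2^0
    have hx1 : x = 1 := by omega
    have hy1' : y = 1 := by omega
    subst hx1; subst hy1'
    have hprod : (2 ^ 1 + 1) * ((2 ^ 1 + 1) * (2 ^ z + 1))
        = 2 ^ (z + 3) + 2 ^ z + 2 ^ 3 + 2 ^ 0 := by
      rw [pow_add]; ring
    rw [hprod]
    exact s_le_four_of_pows _ _ _ _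
  · rcases Nat.lt_or_ge x 2 with hx1 | hx2
    · have hx1' : x = 1 := by omega
      subst hx1'
      rcases Nat.lt_or_ge y 3 with hy2' | hy3
      · -- x = 1, y = 2
        have hy : y = 2 := by omega
        subst hy
        rcases Nat.lt_or_ge z 4 with hz3 | hz4
        · -- z ∈ {2,3}
          interval_cases z
          · -- 75
            have : (2 ^ 1 + 1) * ((2 ^ 2 + 1) * (2 ^ 2 + 1)) = 2^6 + 2^3 + 2^1 + 2^0 := by norm_num
            rw [this]; exact s_le_four_of_pows _ _ _ _
          · -- 135
            have : (2 ^ 1 + 1) * ((2 ^ 2 + 1) * (2 ^ 3 + 1)) = 2^7 + 2^2 + 2^1 + 2^0 := by norm_num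
            rw [this]; exact s_le_four_of_pows _ _ _ _
        · -- z ≥ 4 contradicts threshold: 16*(2^z+1)*15 < 2^(z+4)*15 ... 
          exfalso
          have hz : (2:ℕ) ^ z ≥ 16 := by
            calc (2:ℕ)^z ≥ 2^4 := Nat.pow_le_pow_right (by norm_num) hz4
                 _ = 16 := by norm_num
          have hpe : (2:ℕ) ^ (1 + 2 + z + 1) = 16 * 2 ^ z := by ring
          have hexp : (2 ^ 1 + 1) * ((2 ^ 2 + 1) * (2 ^ z + 1)) = 15 * 2 ^ z + 15 := by ring
          omega
      · -- x = 1, y ≥ 3 : contradiction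
        exfalso
        have hB : (2:ℕ) ^ y ≥ 8 := by
          calc (2:ℕ)^y ≥ 2^3 := Nat.pow_le_pow_right (by norm_num) hy3
               _ = 8 := by norm_num
        have hGB : (2:ℕ) ^ y ≤ 2 ^ z := Nat.pow_le_pow_right (by norm_num) hyz
        have hpe : (2:ℕ) ^ (1 + y + z + 1) = 4 * (2 ^ y * 2 ^ z) := by ring
        have hexp : (2 ^ 1 + 1) * ((2 ^ y + 1) * (2 ^ z + 1))
            = 3 * (2 ^ y * 2 ^ z) + 3 * 2 ^ y + 3 * 2 ^ z + 3 := by ring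
        have i1 : 8 * 2 ^ z ≤ 2 ^ y * 2 ^ z := Nat.mul_le_mul_right _ hB
        have i2 : (2:ℕ) ^ y ≤ 2 ^ z := hGB
        omega
    · -- x,y,z ≥ 2 : contradiction
      exfalso
      have hA : (2:ℕ) ^ x ≥ 4 := by
        calc (2:ℕ)^x ≥ 2^2 := Nat.pow_le_pow_right (by norm_num) hx2
             _ = 4 := by norm_num
      have hB : (2:ℕ) ^ x ≤ 2 ^ y := Nat.pow_le_pow_right (by norm_num) hxy
      have hG : (2:ℕ) ^ y ≤ 2 ^ z := Nat.pow_le_pow_right (by norm_num) hyz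
      have hpe : (2:ℕ) ^ (x + y + z + 1) = 2 * (2 ^ x * (2 ^ y * 2 ^ z)) := by ring
      have hexp : (2 ^ x + 1) * ((2 ^ y + 1) * (2 ^ z + 1))
          = 2 ^ x * (2 ^ y * 2 ^ z) + 2 ^ x * 2 ^ y + 2 ^ x * 2 ^ z + 2 ^ y * 2 ^ z
            + 2 ^ x + 2 ^ y + 2 ^ z + 1 := by ring
      have i1 : 4 * (2 ^ y * 2 ^ z) ≤ 2 ^ x * (2 ^ y * 2 ^ z) := Nat.mul_le_mul_right _ hA
      have i2 : 2 ^ x * 2 ^ z ≤ 2 ^ y * 2 ^ z := Nat.mul_le_mul_right _ hB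
      have i3 : 2 ^ x * 2 ^ y ≤ 2 ^ x * 2 ^ z := Nat.mul_le_mul_left _ hG
      have i4 : 4 * 2 ^ z ≤ 2 ^ y * 2 ^ z := Nat.mul_le_mul_right _ (le_trans hA hB)
      have i5 : (2:ℕ) ^ x ≤ 2 ^ y := hB
      have i6 : (2:ℕ) ^ y ≤ 2 ^ z := hG
      omega

lemma lemA (c x y : ℕ) (hc : 1 ≤ c) (hx : 1 ≤ x) (hy : 1 ≤ y)
    (h : 2 ^ (c + x + y + 1) ≤ (2 ^ c + 1) * ((2 ^ x + 1) * (2 ^ y + 1))) :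
    s ((2 ^ c + 1) * ((2 ^ x + 1) * (2 ^ y + 1))) ≤ 4 := by
  rcases le_total c x with h1 | h1 <;> rcases le_total x y with h2 | h2 <;>
    rcases le_total c y with h3 | h3
  · exact lemA_core c x y hc h1 h2 h
  · exact lemA_core c x y hc h1 h2 h
  · -- c ≤ x, y ≤ x, c ≤ y : order c y x
    have hre : (2 ^ c + 1) * ((2 ^ x + 1) * (2 ^ y + 1))
        = (2 ^ c + 1) * ((2 ^ y + 1) * (2 ^ x + 1)) := by ring
    have hee : c + x + y + 1 = c + y + x + 1 := by ring
    rw [hre, hee] at h; rw [hre]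
    exact lemA_core c y x hc h3 h2 h
  · -- c ≤ x, y ≤ x, y ≤ c : order y c x
    have hre : (2 ^ c + 1) * ((2 ^ x + 1) * (2 ^ y + 1))
        = (2 ^ y + 1) * ((2 ^ c + 1) * (2 ^ x + 1)) := by ring
    have hee : c + x + y + 1 = y + c + x + 1 := by ring
    rw [hre, hee] at h; rw [hre]
    exact lemA_core y c x hy h3 h1 h
  · -- x ≤ c, x ≤ y, c ≤ y : order x c y
    have hre : (2 ^ c + 1) * ((2 ^ x + 1) * (2 ^ y + 1))
        = (2 ^ x + 1) * ((2 ^ c + 1) * (2 ^ y + 1)) := by ring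
    have hee : c + x + y + 1 = x + c + y + 1 := by ring
    rw [hre, hee] at h; rw [hre]
    exact lemA_core x c y hx h1 h3 h
  · -- x ≤ c, x ≤ y, y ≤ c : order x y c
    have hre : (2 ^ c + 1) * ((2 ^ x + 1) * (2 ^ y + 1))
        = (2 ^ x + 1) * ((2 ^ y + 1) * (2 ^ c + 1)) := by ring
    have hee : c + x + y + 1 = x + y + c + 1 := by ring
    rw [hre, hee] at h; rw [hre]
    exact lemA_core x y c hx h2 h3 h
  · -- x ≤ c, y ≤ x : order y x c
    have hre : (2 ^ c + 1) * ((2 ^ x + 1) * (2 ^ y + 1))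
        = (2 ^ y + 1) * ((2 ^ x + 1) * (2 ^ c + 1)) := by ring
    have hee : c + x + y + 1 = y + x + c + 1 := by ring
    rw [hre, hee] at h; rw [hre]
    exact lemA_core y x c hy h2 h1 h
  · have hre : (2 ^ c + 1) * ((2 ^ x + 1) * (2 ^ y + 1))
        = (2 ^ y + 1) * ((2 ^ x + 1) * (2 ^ c + 1)) := by ring
    have hee : c + x + y + 1 = y + x + c + 1 := by ring
    rw [hre, hee] at h; rw [hre]
    exact lemA_core y x c hy h2 h1 h

/-- enumeration for `u = 2^X + 2^Y + 1` (the A-21, j=1 case). -/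
lemma lemC (X Y c : ℕ) (hY : 1 ≤ Y) (hXY : Y < X) (hc : 1 ≤ c)
    (h : 2 ^ (X + c + 1) ≤ (2 ^ c + 1) * (2 ^ X + 2 ^ Y + 1)) :
    s ((2 ^ c + 1) * (2 ^ X + 2 ^ Y + 1)) ≤ 4 := by
  have hB2 : (2:ℕ) ≤ 2 ^ Y := by
    calc (2:ℕ) = 2 ^ 1 := by norm_num
      _ ≤ 2 ^ Y := Nat.pow_le_pow_right (by norm_num) hY
  have hA2B : 2 * 2 ^ Y ≤ 2 ^ X := by
    calc 2 * 2 ^ Y = 2 ^ (Y + 1) := by ring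
      _ ≤ 2 ^ X := Nat.pow_le_pow_right (by norm_num) (by omega)
  have hc2 : c ≤ 2 := by
    by_contra hc3
    have hC8 : (8:ℕ) ≤ 2 ^ c := by
      calc (8:ℕ) = 2 ^ 3 := by norm_num
        _ ≤ 2 ^ c := Nat.pow_le_pow_right (by norm_num) (by omega)
    have hpe : (2:ℕ) ^ (X + c + 1) = 2 * (2 ^ X * 2 ^ c) := by ring
    have hexp : (2 ^ c + 1) * (2 ^ X + 2 ^ Y + 1)
        = 2 ^ X * 2 ^ c + 2 ^ Y * 2 ^ c + 2 ^ c + 2 ^ X + 2 ^ Y + 1 := by ring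
    have i1 : 2 * (2 ^ Y * 2 ^ c) ≤ 2 ^ X * 2 ^ c := by
      calc 2 * (2 ^ Y * 2 ^ c) = 2 * 2 ^ Y * 2 ^ c := by ring
        _ ≤ 2 ^ X * 2 ^ c := Nat.mul_le_mul_right _ hA2B
    have i2 : 8 * 2 ^ X ≤ 2 ^ X * 2 ^ c := by
      calc 8 * 2 ^ X ≤ 2 ^ c * 2 ^ X := Nat.mul_le_mul_right _ hC8
        _ = 2 ^ X * 2 ^ c := by ring
    have i3 : 8 * 2 ^ Y ≤ 2 ^ Y * 2 ^ c := by
      calc 8 * 2 ^ Y ≤ 2 ^ c * 2 ^ Y := Nat.mul_le_mul_right _ hC8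
        _ = 2 ^ Y * 2 ^ c := by ring
    have i4 : 2 * 2 ^ c ≤ 2 ^ Y * 2 ^ c := Nat.mul_le_mul_right _ hB2
    omega
  interval_cases c
  · -- c = 1
    have hpe : (2:ℕ) ^ (X + 1 + 1) = 4 * 2 ^ X := by ring
    have hexp : ((2:ℕ) ^ 1 + 1) * (2 ^ X + 2 ^ Y + 1) = 3 * 2 ^ X + 3 * 2 ^ Y + 3 := by ring
    have hA3B : 2 ^ X ≤ 3 * 2 ^ Y + 3 := by omega
    rcases Nat.lt_or_ge (Y + 1) X with hY2 | hY1
    · -- Y ≤ X - 2 : forces (X,Y) = (3,1)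
      have h4B : 4 * 2 ^ Y ≤ 2 ^ X := by
        calc 4 * 2 ^ Y = 2 ^ (Y + 2) := by ring
          _ ≤ 2 ^ X := Nat.pow_le_pow_right (by norm_num) (by omega)
      have hBle : (2:ℕ) ^ Y ≤ 3 := by omega
      have hYv : Y = 1 := by
        by_contra hy
        have : (4:ℕ) ≤ 2 ^ Y := by
          calc (4:ℕ) = 2 ^ 2 := by norm_num
            _ ≤ 2 ^ Y := Nat.pow_le_pow_right (by norm_num) (by omega)
        omega
      subst hYv
      have hXv : X = 3 := by
        by_contra hx
        have : (16:ℕ) ≤ 2 ^ X := by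
          calc (16:ℕ) = 2 ^ 4 := by norm_num
            _ ≤ 2 ^ X := Nat.pow_le_pow_right (by norm_num) (by omega)
        omega
      subst hXv
      have hval : ((2:ℕ) ^ 1 + 1) * (2 ^ 3 + 2 ^ 1 + 1) = 2 ^ 5 + 2 ^ 0 := by norm_num
      rw [hval]
      have := s_add_le (2 ^ 5) (2 ^ 0)
      have := s_pow 5; have := s_pow 0
      omega
    · -- Y = X - 1
      have hXv : X = Y + 1 := by omega
      subst hXv
      have hval : ((2:ℕ) ^ 1 + 1) * (2 ^ (Y + 1) + 2 ^ Y + 1)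
          = 2 ^ (Y + 3) + 2 ^ Y + 2 ^ 1 + 2 ^ 0 := by ring
      rw [hval]
      exact s_le_four_of_pows _ _ _ _
  · -- c = 2
    have hpe : (2:ℕ) ^ (X + 2 + 1) = 8 * 2 ^ X := by ring
    have hexp : ((2:ℕ) ^ 2 + 1) * (2 ^ X + 2 ^ Y + 1) = 5 * 2 ^ X + 5 * 2 ^ Y + 5 := by ring
    have h3A : 3 * 2 ^ X ≤ 5 * 2 ^ Y + 5 := by omega
    rcases Nat.lt_or_ge (Y + 1) X with hY2 | hY1
    · exfalso
      have h4B : 4 * 2 ^ Y ≤ 2 ^ X := by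
        calc 4 * 2 ^ Y = 2 ^ (Y + 2) := by ring
          _ ≤ 2 ^ X := Nat.pow_le_pow_right (by norm_num) (by omega)
      omega
    · have hXv : X = Y + 1 := by omega
      subst hXv
      have hA2B' : (2:ℕ) ^ (Y + 1) = 2 * 2 ^ Y := by ring
      have hBle : (2:ℕ) ^ Y ≤ 5 := by omega
      have hYv : Y = 1 ∨ Y = 2 := by
        by_contra hy
        have : (8:ℕ) ≤ 2 ^ Y := by
          calc (8:ℕ) = 2 ^ 3 := by norm_num
            _ ≤ 2 ^ Y := Nat.pow_le_pow_right (by norm_num) (by omega)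
        omega
      rcases hYv with rfl | rfl
      · have hval : ((2:ℕ) ^ 2 + 1) * (2 ^ (1 + 1) + 2 ^ 1 + 1) = 2 ^ 5 + 2 ^ 1 + 2 ^ 0 := by norm_num
        rw [hval]
        have := s_le_three_of_pows 5 1 0
        omega
      · have hval : ((2:ℕ) ^ 2 + 1) * (2 ^ (2 + 1) + 2 ^ 2 + 1) = 2 ^ 6 + 2 ^ 0 := by norm_num
        rw [hval]
        have := s_add_le (2 ^ 6) (2 ^ 0)
        have := s_pow 6; have := s_pow 0
        omega

/-! ### structure extraction -/

/-- an even number with digit sum 2 -/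
lemma even_s2 {a : ℕ} (ha : 2 ∣ a) (hs : s a = 2) :
    ∃ k x, 1 ≤ k ∧ 1 ≤ x ∧ a = 2 ^ k * (2 ^ x + 1) := by
  obtain ⟨i, j, hij, rfl⟩ := s_eq_two hs
  have hi : 1 ≤ i := by
    by_contra hi0
    have hi0' : i = 0 := by omega
    subst hi0'
    have hjodd : 2 ∣ 2 ^ j := dvd_pow_self 2 (by omega)
    simp only [pow_zero] at ha
    omega
  refine ⟨i, j - i, hi, by omega, ?_⟩
  have : 2 ^ i * (2 ^ (j - i) + 1) = 2 ^ (i + (j - i)) + 2 ^ i := by rw [pow_add]; ring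
  rw [this]
  have : i + (j - i) = j := by omega
  rw [this]; omega

lemma L_s2 {k x : ℕ} (hk : 1 ≤ k) (hx : 1 ≤ x) : L (2 ^ k * (2 ^ x + 1)) = k + x := by
  apply L_eq
  · calc (2:ℕ) ^ (k + x) = 2 ^ k * 2 ^ x := by rw [pow_add]
      _ ≤ 2 ^ k * (2 ^ x + 1) := Nat.mul_le_mul_left _ (by omega)
  · calc 2 ^ k * (2 ^ x + 1) < 2 ^ k * (2 ^ x + 2 ^ x) := by
          have h2 : (2:ℕ) ≤ 2 ^ x := by
            calc (2:ℕ) = 2 ^ 1 := by norm_num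
              _ ≤ 2 ^ x := Nat.pow_le_pow_right (by norm_num) hx
          have hkpos : (0:ℕ) < 2 ^ k := by positivity
          exact mul_lt_mul_of_pos_left (by omega) hkpos
      _ = 2 ^ (k + x + 1) := by rw [pow_add, pow_add]; ring

lemma L_of_even_s3 {b : ℕ} (hb : 2 ∣ b) (h2 : 2 ≤ b) (hs : 3 ≤ s b) : 3 ≤ L b := by
  have h1 := two_pow_s_le b
  have h8 : (8:ℕ) ≤ 2 ^ s b := by
    calc (8:ℕ) = 2 ^ 3 := by norm_num
      _ ≤ 2 ^ s b := Nat.pow_le_pow_right (by norm_num) hs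
  have hb8 : 8 ≤ b := by omega
  exact le_L (le_trans (by norm_num : (2:ℕ)^3 ≤ 8) hb8)

lemma pow_add_pow_le {p q : ℕ} (hp : 1 ≤ p) (hq : 1 ≤ q) :
    2 ^ p + 2 ^ q ≤ 2 ^ (p + q) := by
  have h1 : (2:ℕ) ≤ 2 ^ p := by
    calc (2:ℕ) = 2 ^ 1 := by norm_num
      _ ≤ 2 ^ p := Nat.pow_le_pow_right (by norm_num) hp
  have h2 : (2:ℕ) ≤ 2 ^ q := by
    calc (2:ℕ) = 2 ^ 1 := by norm_num
      _ ≤ 2 ^ q := Nat.pow_le_pow_right (by norm_num) hq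
  have h3 : (2:ℕ) ^ (p + q) = 2 ^ p * 2 ^ q := by rw [pow_add]
  nlinarith [h1, h2]

lemma L_pow_mul {k b : ℕ} (hb : 1 ≤ b) : L (2 ^ k * b) = k + L b := by
  apply L_eq
  · calc (2:ℕ) ^ (k + L b) = 2 ^ k * 2 ^ L b := by rw [pow_add]
      _ ≤ 2 ^ k * b := Nat.mul_le_mul_left _ (pow_L_le (by omega))
  · calc 2 ^ k * b < 2 ^ k * 2 ^ (L b + 1) :=
        mul_lt_mul_of_pos_left (lt_pow_L b) (by positivity)
      _ = 2 ^ (k + L b + 1) := by rw [pow_add, pow_add]; ring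

lemma L_le_of_le_pow {a p : ℕ} (h : a ≤ 2 ^ p) : L a ≤ p := by
  rcases Nat.eq_zero_or_pos a with rfl | ha
  · simp [L]
  · have : a < 2 ^ (p + 1) := by
      have : (2:ℕ) ^ p < 2 ^ (p + 1) := Nat.pow_lt_pow_right (by norm_num) (by omega)
      omega
    have := L_lt (by omega) this
    omega

lemma one_le_exp {a p : ℕ} (h2 : 2 ≤ a) (h : a ≤ 2 ^ p) : 1 ≤ p := by
  rcases Nat.eq_zero_or_pos p with rfl | hp
  · simp at h; omega
  · exact hp

/-- the "dangerous top-heavy" flag -/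
def Bad (n : ℕ) : Prop :=
  ∃ c, 1 ≤ c ∧ 2 ^ (L n + c + 1) ≤ (2 ^ c + 1) * n ∧ 5 ≤ s ((2 ^ c + 1) * n)

lemma Bad_pow_mul {k b : ℕ} (hb : 1 ≤ b) : Bad (2 ^ k * b) ↔ Bad b := by
  have hL : L (2 ^ k * b) = k + L b := L_pow_mul hb
  constructor
  · rintro ⟨c, hc, hthr, hs5⟩
    refine ⟨c, hc, ?_, ?_⟩
    · have hre : (2 ^ c + 1) * (2 ^ k * b) = 2 ^ k * ((2 ^ c + 1) * b) := by ring
      rw [hL, hre] at hthr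
      have hpe : (2:ℕ) ^ (k + L b + c + 1) = 2 ^ k * 2 ^ (L b + c + 1) := by
        rw [← pow_add]; ring_nf
      rw [hpe] at hthr
      exact Nat.le_of_mul_le_mul_left hthr (by positivity)
    · have hre : (2 ^ c + 1) * (2 ^ k * b) = 2 ^ k * ((2 ^ c + 1) * b) := by ring
      rw [hre, s_pow_mul] at hs5
      exact hs5
  · rintro ⟨c, hc, hthr, hs5⟩
    refine ⟨c, hc, ?_, ?_⟩
    · have hre : (2 ^ c + 1) * (2 ^ k * b) = 2 ^ k * ((2 ^ c + 1) * b) := by ring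
      rw [hL, hre]
      have hpe : (2:ℕ) ^ (k + L b + c + 1) = 2 ^ k * 2 ^ (L b + c + 1) := by
        rw [← pow_add]; ring_nf
      rw [hpe]
      exact Nat.mul_le_mul_left _ hthr
    · have hre : (2 ^ c + 1) * (2 ^ k * b) = 2 ^ k * ((2 ^ c + 1) * b) := by ring
      rw [hre, s_pow_mul]
      exact hs5

/-- the induction invariant -/
def Q (n m : ℕ) : Prop :=
  2 ≤ n ∧ 2 ∣ n ∧ n ≤ 2 ^ m ∧ (2 ≤ s n → L n + 1 ≤ m) ∧ (3 ≤ s n → L n + 2 ≤ m) ∧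
    (3 ≤ s n → Bad n → L n + 3 ≤ m) ∧ (5 ≤ s n → L n + 3 ≤ m)

lemma s_pos {n : ℕ} (hn : 1 ≤ n) : 1 ≤ s n := by
  by_contra h
  have := s_eq_zero (by omega : s n = 0)
  omega

/-- scaling case of multiplication: `n = 2^i * b` -/
lemma mul_pow_case {i b p q : ℕ} (Hb : Q b q) (hip : i ≤ p) : Q (2 ^ i * b) (p + q) := by
  obtain ⟨hb2, hbdvd, hble, hb4, hb5, hb6, hb7⟩ := Hb
  have hb1 : 1 ≤ b := by omega
  have hsn : s (2 ^ i * b) = s b := s_pow_mul _ _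
  have hLn : L (2 ^ i * b) = i + L b := L_pow_mul hb1
  refine ⟨?_, ?_, ?_, ?_, ?_, ?_, ?_⟩
  · calc 2 ≤ b := hb2
      _ = 1 * b := (one_mul b).symm
      _ ≤ 2 ^ i * b := Nat.mul_le_mul_right _ Nat.one_le_two_pow
  · exact Dvd.dvd.mul_left hbdvd _
  · calc 2 ^ i * b ≤ 2 ^ p * 2 ^ q :=
        Nat.mul_le_mul (Nat.pow_le_pow_right (by norm_num) hip) hble
      _ = 2 ^ (p + q) := by rw [pow_add]
  · intro h2; rw [hsn] at h2; rw [hLn]; have := hb4 h2; omega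
  · intro h3; rw [hsn] at h3; rw [hLn]; have := hb5 h3; omega
  · intro h3 hbad
    rw [hsn] at h3
    rw [Bad_pow_mul hb1] at hbad
    rw [hLn]; have := hb6 h3 hbad; omega
  · intro h5; rw [hsn] at h5; rw [hLn]; have := hb7 h5; omega

lemma mul_core {a b p q : ℕ} (Ha : Q a p) (Hb : Q b q) (hord : s a ≤ s b) :
    Q (a * b) (p + q) := by
  obtain ⟨ha2, hadvd, hale, ha4, ha5, ha6, ha7⟩ := Ha
  obtain ⟨hb2, hbdvd, hble, hb4, hb5, hb6, hb7⟩ := Hb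
  have hsa1 : 1 ≤ s a := s_pos (by omega)
  have hsb1 : 1 ≤ s b := s_pos (by omega)
  rcases Nat.lt_or_ge (s a) 2 with hsa | hsa2
  · -- s a = 1 : a = 2^i
    obtain ⟨i, rfl⟩ := s_eq_one (by omega : s a = 1)
    have hip : i ≤ p := by
      have := le_L hale
      rw [L_pow] at this
      exact this
    exact mul_pow_case ⟨hb2, hbdvd, hble, hb4, hb5, hb6, hb7⟩ hip
  · rcases Nat.lt_or_ge (s b) 3 with hsb | hsb3
    · -- s a = s b = 2
      have hsa' : s a = 2 := by omega
      have hsb' : s b = 2 := by omega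
      obtain ⟨k1, x, hk1, hx, rfl⟩ := even_s2 hadvd hsa'
      obtain ⟨k2, y, hk2, hy, rfl⟩ := even_s2 hbdvd hsb'
      have hLa : L (2 ^ k1 * (2 ^ x + 1)) = k1 + x := L_s2 hk1 hx
      have hLb : L (2 ^ k2 * (2 ^ y + 1)) = k2 + y := L_s2 hk2 hy
      have hp : k1 + x + 1 ≤ p := by have := ha4 (by omega); omega
      have hq : k2 + y + 1 ≤ q := by have := hb4 (by omega); omega
      have hre : 2 ^ k1 * (2 ^ x + 1) * (2 ^ k2 * (2 ^ y + 1))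
          = 2 ^ (k1 + k2) * ((2 ^ x + 1) * (2 ^ y + 1)) := by rw [pow_add]; ring
      rw [hre]
      set P := (2 ^ x + 1) * (2 ^ y + 1) with hP
      have hP1 : 1 ≤ P := by
        rw [hP]
        have : 0 < (2 ^ x + 1) * (2 ^ y + 1) := by positivity
        omega
      have hsn : s (2 ^ (k1 + k2) * P) = s P := s_pow_mul _ _
      have hLn : L (2 ^ (k1 + k2) * P) = k1 + k2 + L P := L_pow_mul hP1
      have hP9 : 2 ^ (x + y) ≤ P := by
        calc (2:ℕ) ^ (x + y) = 2 ^ x * 2 ^ y := by rw [pow_add]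
          _ ≤ P := Nat.mul_le_mul (by omega) (by omega)
      have hbasics : 2 ≤ 2 ^ (k1 + k2) * P ∧ 2 ∣ 2 ^ (k1 + k2) * P ∧
          2 ^ (k1 + k2) * P ≤ 2 ^ (p + q) := by
        refine ⟨?_, ?_, ?_⟩
        · have h1 : (2:ℕ) ≤ 2 ^ (k1 + k2) := by
            calc (2:ℕ) = 2 ^ 1 := by norm_num
              _ ≤ 2 ^ (k1 + k2) := Nat.pow_le_pow_right (by norm_num) (by omega)
          calc 2 ≤ 2 ^ (k1 + k2) := h1
            _ = 2 ^ (k1 + k2) * 1 := (mul_one _).symm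
            _ ≤ 2 ^ (k1 + k2) * P := Nat.mul_le_mul_left _ hP1
        · have : (2:ℕ) ∣ 2 ^ (k1 + k2) := dvd_pow_self 2 (by omega)
          exact Dvd.dvd.mul_right this _
        · rw [← hre]
          calc 2 ^ k1 * (2 ^ x + 1) * (2 ^ k2 * (2 ^ y + 1)) ≤ 2 ^ p * 2 ^ q :=
              Nat.mul_le_mul hale hble
            _ = 2 ^ (p + q) := by rw [pow_add]
      rcases Nat.lt_or_ge (P) (2 ^ (x + y + 1)) with hPlt | hPge
      · -- generic: L P = x + y
        have hLP : L P = x + y := L_eq hP9 hPlt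
        have hsP : s P ≤ 4 := by
          have : P = 2 ^ (x + y) + 2 ^ x + 2 ^ y + 2 ^ 0 := by
            rw [hP, pow_add]; ring
          rw [this]; exact s_le_four_of_pows _ _ _ _
        refine ⟨hbasics.1, hbasics.2.1, hbasics.2.2, ?_, ?_, ?_, ?_⟩
        · intro _; rw [hLn, hLP]; omega
        · intro _; rw [hLn, hLP]; omega
        · intro h3 hbad
          exfalso
          rw [hsn] at h3
          rw [Bad_pow_mul hP1] at hbad
          obtain ⟨c, hc, hthr, hs5⟩ := hbad
          rw [hLP] at hthr
          have hthr' : 2 ^ (c + x + y + 1) ≤ (2 ^ c + 1) * ((2 ^ x + 1) * (2 ^ y + 1)) := by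
            have : x + y + c + 1 = c + x + y + 1 := by ring
            rw [← this]; exact hthr
          have := lemA c x y hc hx hy hthr'
          rw [← hP] at this
          omega
        · intro h5; exfalso; rw [hsn] at h5; omega
      · -- P ≥ 2^(x+y+1) : forces x = y = 1, P = 9
        obtain ⟨hx1, hy1⟩ : x = 1 ∧ y = 1 := by
          apply lemD hx hy
          have : x + y + 1 = x + y + 1 := rfl
          calc (2:ℕ) ^ (x + y + 1) ≤ P := hPge
            _ = (2 ^ x + 1) * (2 ^ y + 1) := hP
        subst hx1; subst hy1
        have hP9' : P = 9 := by rw [hP]; norm_num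
        have hs9 : s 9 = 2 := by
          have h9 : (9:ℕ) = 2 ^ 3 * 1 + 1 := by norm_num
          rw [h9, s_pow_mul_add 3 1 1 (by norm_num), s_one]
        have hL9 : L 9 = 3 := L_eq (by norm_num) (by norm_num)
        refine ⟨hbasics.1, hbasics.2.1, hbasics.2.2, ?_, ?_, ?_, ?_⟩
        · intro _; rw [hLn, hP9', hL9]; omega
        · intro h3; exfalso; rw [hsn, hP9', hs9] at h3; omega
        · intro h3 _; exfalso; rw [hsn, hP9', hs9] at h3; omega
        · intro h5; exfalso; rw [hsn, hP9', hs9] at h5; omega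
    · -- s a = 2, s b ≥ 3  (or s a ≥ 3)
      rcases Nat.lt_or_ge (s a) 3 with hsa3 | hsa3
      · -- s a = 2 exactly
        have hsa' : s a = 2 := by omega
        obtain ⟨k1, x, hk1, hx, rfl⟩ := even_s2 hadvd hsa'
        have hLa : L (2 ^ k1 * (2 ^ x + 1)) = k1 + x := L_s2 hk1 hx
        have hp : k1 + x + 1 ≤ p := by have := ha4 (by omega); omega
        have hq : L b + 2 ≤ q := hb5 hsb3
        have hb1 : 1 ≤ b := by omega
        have hre : 2 ^ k1 * (2 ^ x + 1) * b = 2 ^ k1 * ((2 ^ x + 1) * b) := by ring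
        rw [hre]
        set R := (2 ^ x + 1) * b with hR
        have hR1 : 1 ≤ R := by
          rw [hR]
          have : 0 < (2 ^ x + 1) * b := by positivity
          omega
        have hsn : s (2 ^ k1 * R) = s R := s_pow_mul _ _
        have hLn : L (2 ^ k1 * R) = k1 + L R := L_pow_mul hR1
        have hRlow : x + L b ≤ L R := by
          apply le_L
          calc (2:ℕ) ^ (x + L b) = 2 ^ x * 2 ^ L b := by rw [pow_add]
            _ ≤ (2 ^ x + 1) * b := Nat.mul_le_mul (by omega) (pow_L_le (by omega))
        have hRhigh : L R ≤ x + L b + 1 := by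
          have h1 : R < 2 ^ (x + 1) * 2 ^ (L b + 1) := by
            apply Nat.mul_lt_mul_of_le_of_lt
            · have : (1:ℕ) ≤ 2 ^ x := Nat.one_le_two_pow
              have hpe : (2:ℕ) ^ (x + 1) = 2 * 2 ^ x := by ring
              omega
            · exact lt_pow_L b
            · positivity
          have h2 : (2:ℕ) ^ (x + 1) * 2 ^ (L b + 1) = 2 ^ (x + L b + 1 + 1) := by
            rw [← pow_add]; ring_nf
          rw [h2] at h1
          have := L_lt (by omega : R ≠ 0) h1
          omega
        have hbasics : 2 ≤ 2 ^ k1 * R ∧ 2 ∣ 2 ^ k1 * R ∧ 2 ^ k1 * R ≤ 2 ^ (p + q) := by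
          refine ⟨?_, ?_, ?_⟩
          · have h2R : 2 ≤ R := by
              calc 2 ≤ b := hb2
                _ = 1 * b := (one_mul b).symm
                _ ≤ (2 ^ x + 1) * b := mul_le_mul_left (Nat.le_add_left 1 (2 ^ x)) b
            calc 2 ≤ R := h2R
              _ = 1 * R := (one_mul R).symm
              _ ≤ 2 ^ k1 * R := Nat.mul_le_mul_right _ Nat.one_le_two_pow
          · exact Dvd.dvd.mul_left (Dvd.dvd.mul_left hbdvd _) _
          · rw [← hre]
            calc 2 ^ k1 * (2 ^ x + 1) * b ≤ 2 ^ p * 2 ^ q := Nat.mul_le_mul hale hble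
              _ = 2 ^ (p + q) := by rw [pow_add]
        refine ⟨hbasics.1, hbasics.2.1, hbasics.2.2, ?_, ?_, ?_, ?_⟩
        · intro _; rw [hLn]; omega
        · intro _; rw [hLn]; omega
        · -- G3'
          intro h3 hbad
          rw [hLn]
          rcases Nat.lt_or_ge (L R) (x + L b + 1) with hcase | hcase
          · omega
          · have hLR : L R = x + L b + 1 := by omega
            rw [Bad_pow_mul hR1] at hbad
            obtain ⟨c, hc, hthr, hs5⟩ := hbad
            rw [hLR] at hthr
            -- derive (2^c+1)(2^x+1) ≥ 2^(c+x+1)+1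
            have hkey : 2 ^ (c + x + 1) < (2 ^ c + 1) * (2 ^ x + 1) := by
              by_contra hcon
              push_neg at hcon
              have h1 : (2 ^ c + 1) * R ≤ 2 ^ (c + x + 1) * b := by
                calc (2 ^ c + 1) * R = (2 ^ c + 1) * (2 ^ x + 1) * b := by rw [hR]; ring
                  _ ≤ 2 ^ (c + x + 1) * b := Nat.mul_le_mul_right _ hcon
              have h2 : 2 ^ (c + x + 1) * b < 2 ^ (c + x + 1) * 2 ^ (L b + 1) :=
                mul_lt_mul_of_pos_left (lt_pow_L b) (by positivity)
              have h3' : (2:ℕ) ^ (c + x + 1) * 2 ^ (L b + 1) = 2 ^ (x + L b + 1 + c + 1) := by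
                rw [← pow_add]; ring_nf
              omega
            obtain ⟨hc1, hx1⟩ := lemD hc hx (by omega)
            subst hc1; subst hx1
            have h9b : 2 ^ (L b + 3 + 1) ≤ (2 ^ 3 + 1) * b := by
              have : (2 ^ 1 + 1) * R = (2 ^ 3 + 1) * b := by rw [hR]; ring
              rw [this] at hthr
              calc (2:ℕ) ^ (L b + 3 + 1) = 2 ^ (1 + (L b + 1) + 1 + 1) := by ring_nf
                _ ≤ (2 ^ 3 + 1) * b := hthr
            have hs9b : 5 ≤ s ((2 ^ 3 + 1) * b) := by
              have : (2 ^ 1 + 1) * R = (2 ^ 3 + 1) * b := by rw [hR]; ring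
              rw [this] at hs5
              exact hs5
            have hbadb : Bad b := ⟨3, by norm_num, h9b, hs9b⟩
            have := hb6 hsb3 hbadb
            omega
        · -- G4
          intro h5
          rw [hLn]
          rcases Nat.lt_or_ge (L R) (x + L b + 1) with hcase | hcase
          · omega
          · have hLR : L R = x + L b + 1 := by omega
            have hthr : 2 ^ (L b + x + 1) ≤ (2 ^ x + 1) * b := by
              have h1 : (2:ℕ) ^ (x + L b + 1) ≤ R := by
                calc (2:ℕ) ^ (x + L b + 1) = 2 ^ L R := by rw [hLR]
                  _ ≤ R := pow_L_le (by omega)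
              calc (2:ℕ) ^ (L b + x + 1) = 2 ^ (x + L b + 1) := by ring_nf
                _ ≤ R := h1
                _ = (2 ^ x + 1) * b := hR
            have hs5' : 5 ≤ s ((2 ^ x + 1) * b) := by
              rw [hsn] at h5; rw [← hR]; exact h5
            have hbadb : Bad b := ⟨x, hx, hthr, hs5'⟩
            have := hb6 hsb3 hbadb
            omega
      · -- s a ≥ 3 and s b ≥ 3
        have hp : L a + 2 ≤ p := ha5 hsa3
        have hq : L b + 2 ≤ q := hb5 hsb3
        have hn : a * b < 2 ^ (L a + L b + 2) := by
          calc a * b < 2 ^ (L a + 1) * 2 ^ (L b + 1) :=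
              Nat.mul_lt_mul_of_lt_of_le (lt_pow_L a) (le_of_lt (lt_pow_L b)) (by positivity)
            _ = 2 ^ (L a + L b + 2) := by rw [← pow_add]; ring_nf
        have hLn : L (a * b) ≤ L a + L b + 1 := by
          have := L_lt (Nat.mul_ne_zero (by omega) (by omega)) hn
          omega
        refine ⟨?_, ?_, ?_, ?_, ?_, ?_, ?_⟩
        · calc 2 ≤ a := ha2
            _ = a * 1 := (mul_one a).symm
            _ ≤ a * b := Nat.mul_le_mul_left _ (by omega)
        · exact Dvd.dvd.mul_right hadvd _
        · calc a * b ≤ 2 ^ p * 2 ^ q := Nat.mul_le_mul hale hble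
            _ = 2 ^ (p + q) := by rw [pow_add]
        · intro _; omega
        · intro _; omega
        · intro _ _; omega
        · intro _; omega

lemma two_le_pow {x : ℕ} (hx : 1 ≤ x) : (2:ℕ) ≤ 2 ^ x := by
  calc (2:ℕ) = 2 ^ 1 := by norm_num
    _ ≤ 2 ^ x := Nat.pow_le_pow_right (by norm_num) hx

lemma add_core {a b p q : ℕ} (Ha : Q a p) (Hb : Q b q) (hord : s a ≤ s b) :
    Q (a + b) (p + q) := by
  obtain ⟨ha2, hadvd, hale, ha4, ha5, ha6, ha7⟩ := Ha
  obtain ⟨hb2, hbdvd, hble, hb4, hb5, hb6, hb7⟩ := Hb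
  have hp1 : 1 ≤ p := one_le_exp ha2 hale
  have hq1 : 1 ≤ q := one_le_exp hb2 hble
  have hbasic1 : 2 ≤ a + b := by omega
  have hbasic2 : 2 ∣ a + b := Nat.dvd_add hadvd hbdvd
  have hbasic3 : a + b ≤ 2 ^ (p + q) := by
    have := pow_add_pow_le hp1 hq1
    omega
  have hsa1 : 1 ≤ s a := s_pos (by omega)
  have hLa1 : 1 ≤ L a := le_L (show 2 ^ 1 ≤ a by omega)
  have hLb1 : 1 ≤ L b := le_L (show 2 ^ 1 ≤ b by omega)
  have hpa : L a + 1 ≤ p + 1 := by have := L_le_of_le_pow hale; omega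
  have hqa : L b + 1 ≤ q + 1 := by have := L_le_of_le_pow hble; omega
  -- generic bound on L (a+b)
  have hLab : ∀ n : ℕ, 1 ≤ n → n ≤ a + b → a + b < 2 ^ (max (L a) (L b) + 2) := by
    intro n _ _
    have h1 : a < 2 ^ (L a + 1) := lt_pow_L a
    have h2 : b < 2 ^ (L b + 1) := lt_pow_L b
    have h3 : (2:ℕ) ^ (L a + 1) ≤ 2 ^ (max (L a) (L b) + 1) :=
      Nat.pow_le_pow_right (by norm_num) (by omega)
    have h4 : (2:ℕ) ^ (L b + 1) ≤ 2 ^ (max (L a) (L b) + 1) :=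
      Nat.pow_le_pow_right (by norm_num) (by omega)
    have h5 : (2:ℕ) ^ (max (L a) (L b) + 2) = 2 ^ (max (L a) (L b) + 1) * 2 := by ring
    omega
  have hLn_le : L (a + b) ≤ max (L a) (L b) + 1 := by
    have := L_lt (show a + b ≠ 0 by omega) (hLab 1 (by omega) (by omega))
    omega
  rcases Nat.lt_or_ge (s a) 2 with hsa | hsa2
  · -- s a = 1 : a = 2^j
    have hsa' : s a = 1 := by omega
    obtain ⟨j, rfl⟩ := s_eq_one hsa'
    have hj1 : 1 ≤ j := by
      by_contra hj
      have : j = 0 := by omega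
      subst this; simp at ha2
    have hjp : j ≤ p := by have := le_L hale; rw [L_pow] at this; exact this
    have hLaj : L (2 ^ j) = j := L_pow j
    rcases Nat.lt_or_ge (s b) 2 with hsb | hsb2
    · -- s b = 1 : b = 2^i
      have hsb' : s b = 1 := by omega
      obtain ⟨i, rfl⟩ := s_eq_one hsb'
      have hi1 : 1 ≤ i := by
        by_contra hi
        have : i = 0 := by omega
        subst this; simp at hb2
      have hiq : i ≤ q := by have := le_L hble; rw [L_pow] at this; exact this
      rcases lt_trichotomy j i with hji | hji | hji
      · -- j < i
        have hsn : s (2 ^ j + 2 ^ i) = 2 := by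
          rw [Nat.add_comm]; exact s_two_pow_add j i hji
        have hLn : L (2 ^ j + 2 ^ i) = i := by
          apply L_eq
          · omega
          · have h1 : (2:ℕ) ^ j < 2 ^ i := Nat.pow_lt_pow_right (by norm_num) (by omega)
            have h2 : (2:ℕ) ^ (i + 1) = 2 * 2 ^ i := by ring
            omega
        refine ⟨hbasic1, hbasic2, hbasic3, ?_, ?_, ?_, ?_⟩
        · intro _; rw [hLn]; omega
        · intro h3; rw [hsn] at h3; omega
        · intro h3 _; rw [hsn] at h3; omega
        · intro h5; rw [hsn] at h5; omega
      · -- j = i : power of two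
        subst hji
        have heq : 2 ^ j + 2 ^ j = 2 ^ (j + 1) := by ring
        have hsn : s (2 ^ j + 2 ^ j) = 1 := by rw [heq, s_pow]
        refine ⟨hbasic1, hbasic2, hbasic3, ?_, ?_, ?_, ?_⟩ <;>
          (intro h; rw [hsn] at h; omega) <;> skip
      · -- i < j
        have hsn : s (2 ^ j + 2 ^ i) = 2 := s_two_pow_add i j hji
        have hLn : L (2 ^ j + 2 ^ i) = j := by
          apply L_eq
          · omega
          · have h1 : (2:ℕ) ^ i < 2 ^ j := Nat.pow_lt_pow_right (by norm_num) (by omega)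
            have h2 : (2:ℕ) ^ (j + 1) = 2 * 2 ^ j := by ring
            omega
        refine ⟨hbasic1, hbasic2, hbasic3, ?_, ?_, ?_, ?_⟩
        · intro _; rw [hLn]; omega
        · intro h3; rw [hsn] at h3; omega
        · intro h3 _; rw [hsn] at h3; omega
        · intro h5; rw [hsn] at h5; omega
    · rcases Nat.lt_or_ge (s b) 3 with hsb | hsb3
      · -- s a = 1, s b = 2
        have hsb' : s b = 2 := by omega
        obtain ⟨k, x, hk, hx, rfl⟩ := even_s2 hbdvd hsb'
        have hLb : L (2 ^ k * (2 ^ x + 1)) = k + x := L_s2 hk hx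
        have hq : k + x + 1 ≤ q := by have := hb4 (by omega); omega
        have hdecomp : 2 ^ j + 2 ^ k * (2 ^ x + 1) = 2 ^ (k + x) + 2 ^ k + 2 ^ j := by
          rw [pow_add]; ring
        rcases Nat.lt_or_ge (k + x) j with hcase | hcase
        · -- j > k + x : L n = j
          have hbk : 2 ^ k * (2 ^ x + 1) < 2 ^ j := by
            have h1 : 2 ^ k * (2 ^ x + 1) < 2 ^ (k + x + 1) := by
              have := lt_pow_L (2 ^ k * (2 ^ x + 1))
              rw [hLb] at this; exact this
            have h2 : (2:ℕ) ^ (k + x + 1) ≤ 2 ^ j := Nat.pow_le_pow_right (by norm_num) (by omega)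
            omega
          have hLn : L (2 ^ j + 2 ^ k * (2 ^ x + 1)) = j := by
            apply L_eq
            · omega
            · have h2 : (2:ℕ) ^ (j + 1) = 2 * 2 ^ j := by ring
              omega
          refine ⟨hbasic1, hbasic2, hbasic3, ?_, ?_, ?_, ?_⟩ <;>
            (intro h; rw [hLn]; omega) <;> skip
        · rcases Nat.lt_or_ge j k with hjk | hjk
          · -- j < k : distinct bits, s = 3, L = k + x
            have hsn : s (2 ^ j + 2 ^ k * (2 ^ x + 1)) = 3 := by
              rw [hdecomp]
              have hlow : 2 ^ k + 2 ^ j < 2 ^ (k + x) := by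
                have h1 : (2:ℕ) ^ j ≤ 2 ^ (k - 1) := Nat.pow_le_pow_right (by norm_num) (by omega)
                have h2 : (2:ℕ) ^ k ≤ 2 ^ (k + x - 1) := Nat.pow_le_pow_right (by norm_num) (by omega)
                have h3 : (2:ℕ) ^ (k - 1) < 2 ^ (k + x - 1) := Nat.pow_lt_pow_right (by norm_num) (by omega)
                have h4 : (2:ℕ) ^ (k + x - 1) * 2 = 2 ^ (k + x) := by
                  rw [← pow_succ]
                  congr 1
                  omega
                omega
              have := s_pow_mul_add (k + x) 1 (2 ^ k + 2 ^ j) (by omega)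
              rw [mul_one] at this
              have h5 : 2 ^ (k + x) + 2 ^ k + 2 ^ j = 2 ^ (k + x) + (2 ^ k + 2 ^ j) := by ring
              rw [h5, this, s_one, s_two_pow_add j k (by omega)]
            have hLn : L (2 ^ j + 2 ^ k * (2 ^ x + 1)) = k + x := by
              apply L_eq
              · rw [hdecomp]
                have e1 : (1:ℕ) ≤ 2 ^ k := Nat.one_le_two_pow
                have e2 : (1:ℕ) ≤ 2 ^ j := Nat.one_le_two_pow
                omega
              · rw [hdecomp]
                have h1 : (2:ℕ) ^ j ≤ 2 ^ (k - 1) := Nat.pow_le_pow_right (by norm_num) (by omega)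
                have h2 : (2:ℕ) ^ k ≤ 2 ^ (k + x - 1) := Nat.pow_le_pow_right (by norm_num) (by omega)
                have h25 : (2:ℕ) ^ (k - 1) < 2 ^ (k + x - 1) := Nat.pow_lt_pow_right (by norm_num) (by omega)
                have h3 : (2:ℕ) ^ (k + x - 1) * 2 = 2 ^ (k + x) := by
                  rw [← pow_succ]; congr 1; omega
                have h4 : (2:ℕ) ^ (k + x + 1) = 2 ^ (k + x) * 2 := by ring
                omega
            refine ⟨hbasic1, hbasic2, hbasic3, ?_, ?_, ?_, ?_⟩
            · intro _; rw [hLn]; omega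
            · intro _; rw [hLn]; omega
            · -- G3' : the lemC case
              intro _ hbad
              rw [hLn]
              rcases Nat.lt_or_ge j 2 with hj2 | hj2
              · -- j = 1, k ≥ 2 : refute Bad
                exfalso
                have hj1' : j = 1 := by omega
                subst hj1'
                have hk2 : 2 ≤ k := by omega
                obtain ⟨c, hc, hthr, hs5⟩ := hbad
                set X := k + x - 1 with hX
                set Y := k - 1 with hYd
                have hu : 2 ^ 1 + 2 ^ k * (2 ^ x + 1) = 2 * (2 ^ X + 2 ^ Y + 1) := by
                  have e1 : (2:ℕ) ^ k = 2 * 2 ^ Y := by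
                    rw [hYd, ← pow_succ']
                    congr 1
                    omega
                  have e2 : (2:ℕ) ^ (k + x) = 2 * 2 ^ X := by
                    rw [hX, ← pow_succ']
                    congr 1
                    omega
                  rw [hdecomp]
                  omega
                have hLnn : L (2 ^ 1 + 2 ^ k * (2 ^ x + 1)) = X + 1 := by
                  rw [hLn]; omega
                rw [hLnn] at hthr
                rw [hu] at hthr hs5
                have hthr2 : 2 ^ (X + c + 1) ≤ (2 ^ c + 1) * (2 ^ X + 2 ^ Y + 1) := by
                  have e3 : (2:ℕ) ^ (X + 1 + c + 1) = 2 * 2 ^ (X + c + 1) := by ring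
                  have e4 : (2 ^ c + 1) * (2 * (2 ^ X + 2 ^ Y + 1))
                      = 2 * ((2 ^ c + 1) * (2 ^ X + 2 ^ Y + 1)) := by ring
                  omega
                have hsle : s ((2 ^ c + 1) * (2 * (2 ^ X + 2 ^ Y + 1))) ≤ 4 := by
                  have e5 : (2 ^ c + 1) * (2 * (2 ^ X + 2 ^ Y + 1))
                      = 2 ^ 1 * ((2 ^ c + 1) * (2 ^ X + 2 ^ Y + 1)) := by ring
                  rw [e5, s_pow_mul]
                  exact lemC X Y c (by omega) (by omega) hc hthr2
                omega
              · omega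
            · intro h5; rw [hsn] at h5; omega
          · -- j ≥ k and j ≤ k + x : j = k or k < j < k+x or j = k+x
            rcases Nat.eq_or_lt_of_le hjk with hjeq | hjlt
            · -- j = k
              have hjk' : j = k := hjeq.symm
              rcases Nat.lt_or_ge x 2 with hx1 | hx2
              · -- x = 1 : n = 2^(k+2), power of two
                have hx1' : x = 1 := by omega
                subst hx1'
                have heq : 2 ^ j + 2 ^ k * (2 ^ 1 + 1) = 2 ^ (k + 2) := by
                  rw [hjk']; ring
                have hsn : s (2 ^ j + 2 ^ k * (2 ^ 1 + 1)) = 1 := by rw [heq, s_pow]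
                refine ⟨hbasic1, hbasic2, hbasic3, ?_, ?_, ?_, ?_⟩ <;>
                  (intro h; rw [hsn] at h; omega) <;> skip
              · -- x ≥ 2 : n = 2^(k+1)(2^(x-1)+1), s = 2
                have heq : 2 ^ j + 2 ^ k * (2 ^ x + 1) = 2 ^ (k + 1) * (2 ^ (x - 1) + 1) := by
                  have e1 : (2:ℕ) ^ x = 2 * 2 ^ (x - 1) := by
                    rw [← pow_succ']; congr 1; omega
                  rw [hjk', e1]; ring
                have hsn : s (2 ^ j + 2 ^ k * (2 ^ x + 1)) = 2 := by
                  rw [heq, s_pow_mul]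
                  have := s_pow_mul_add (x - 1) 1 1 (by
                    have := two_le_pow (show 1 ≤ x - 1 by omega); omega)
                  rw [mul_one] at this
                  rw [this, s_one]
                have hLn : L (2 ^ j + 2 ^ k * (2 ^ x + 1)) = k + x := by
                  rw [heq, L_s2 (by omega) (by omega)]
                  omega
                refine ⟨hbasic1, hbasic2, hbasic3, ?_, ?_, ?_, ?_⟩
                · intro _; rw [hLn]; omega
                · intro h3; rw [hsn] at h3; omega
                · intro h3 _; rw [hsn] at h3; omega
                · intro h5; rw [hsn] at h5; omega
            · rcases Nat.eq_or_lt_of_le hcase with hjeq2 | hjlt2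
              · -- j = k + x : n = 2^k (2^(x+1)+1), s = 2
                have hjeq2' : j = k + x := by omega
                subst hjeq2'
                have heq : 2 ^ (k + x) + 2 ^ k * (2 ^ x + 1) = 2 ^ k * (2 ^ (x + 1) + 1) := by
                  rw [pow_add, pow_add]; ring
                have hsn : s (2 ^ (k + x) + 2 ^ k * (2 ^ x + 1)) = 2 := by
                  rw [heq, s_pow_mul]
                  have := s_pow_mul_add (x + 1) 1 1 (by
                    have := two_le_pow (show 1 ≤ x + 1 by omega); omega)
                  rw [mul_one] at this
                  rw [this, s_one]
                have hLn : L (2 ^ (k + x) + 2 ^ k * (2 ^ x + 1)) = k + x + 1 := by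
                  rw [heq, L_s2 (by omega) (by omega)]
                  omega
                refine ⟨hbasic1, hbasic2, hbasic3, ?_, ?_, ?_, ?_⟩
                · intro _; rw [hLn]; omega
                · intro h3; rw [hsn] at h3; omega
                · intro h3 _; rw [hsn] at h3; omega
                · intro h5; rw [hsn] at h5; omega
              · -- k < j < k + x : distinct bits, s = 3, L = k + x
                have hsn : s (2 ^ j + 2 ^ k * (2 ^ x + 1)) = 3 := by
                  rw [hdecomp]
                  have hlow : 2 ^ j + 2 ^ k < 2 ^ (k + x) := by
                    have h1 : (2:ℕ) ^ k ≤ 2 ^ (j - 1) := Nat.pow_le_pow_right (by norm_num) (by omega)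
                    have h2 : (2:ℕ) ^ j ≤ 2 ^ (k + x - 1) := Nat.pow_le_pow_right (by norm_num) (by omega)
                    have h25 : (2:ℕ) ^ (j - 1) < 2 ^ (k + x - 1) := Nat.pow_lt_pow_right (by norm_num) (by omega)
                    have h3 : (2:ℕ) ^ (k + x - 1) * 2 = 2 ^ (k + x) := by
                      rw [← pow_succ]; congr 1; omega
                    omega
                  have := s_pow_mul_add (k + x) 1 (2 ^ j + 2 ^ k) (by omega)
                  rw [mul_one] at this
                  have h5 : 2 ^ (k + x) + 2 ^ k + 2 ^ j = 2 ^ (k + x) + (2 ^ j + 2 ^ k) := by ring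
                  rw [h5, this, s_one, s_two_pow_add k j (by omega)]
                have hLn : L (2 ^ j + 2 ^ k * (2 ^ x + 1)) = k + x := by
                  apply L_eq
                  · rw [hdecomp]
                    have e1 : (1:ℕ) ≤ 2 ^ k := Nat.one_le_two_pow
                    have e2 : (1:ℕ) ≤ 2 ^ j := Nat.one_le_two_pow
                    omega
                  · rw [hdecomp]
                    have h1 : (2:ℕ) ^ k ≤ 2 ^ (j - 1) := Nat.pow_le_pow_right (by norm_num) (by omega)
                    have h2 : (2:ℕ) ^ j ≤ 2 ^ (k + x - 1) := Nat.pow_le_pow_right (by norm_num) (by omega)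
                    have h25 : (2:ℕ) ^ (j - 1) < 2 ^ (k + x - 1) := Nat.pow_lt_pow_right (by norm_num) (by omega)
                    have h3 : (2:ℕ) ^ (k + x - 1) * 2 = 2 ^ (k + x) := by
                      rw [← pow_succ]; congr 1; omega
                    have h4 : (2:ℕ) ^ (k + x + 1) = 2 ^ (k + x) * 2 := by ring
                    omega
                refine ⟨hbasic1, hbasic2, hbasic3, ?_, ?_, ?_, ?_⟩
                · intro _; rw [hLn]; omega
                · intro _; rw [hLn]; omega
                · intro _ _; rw [hLn]; omega
                · intro h5; rw [hsn] at h5; omega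
      · -- s a = 1, s b ≥ 3
        have hq : L b + 2 ≤ q := hb5 hsb3
        have hLb3 : 3 ≤ L b := L_of_even_s3 hbdvd hb2 hsb3
        rcases Nat.lt_or_ge (L b) j with hcase | hcase
        · -- j ≥ L b + 1 : L n = j
          have hbj : b < 2 ^ j := by
            have h1 : b < 2 ^ (L b + 1) := lt_pow_L b
            have h2 : (2:ℕ) ^ (L b + 1) ≤ 2 ^ j := Nat.pow_le_pow_right (by norm_num) (by omega)
            omega
          have hLn : L (2 ^ j + b) = j := by
            apply L_eq
            · omega
            · have h2 : (2:ℕ) ^ (j + 1) = 2 * 2 ^ j := by ring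
              omega
          refine ⟨hbasic1, hbasic2, hbasic3, ?_, ?_, ?_, ?_⟩ <;>
            (intro h; rw [hLn]; omega) <;> skip
        · -- j ≤ L b
          have hup : 2 ^ j + b < 2 ^ (L b + 2) := by
            have h1 : (2:ℕ) ^ j ≤ 2 ^ L b := Nat.pow_le_pow_right (by norm_num) hcase
            have h2 : b < 2 ^ (L b + 1) := lt_pow_L b
            have h3 : (2:ℕ) ^ (L b + 2) = 2 ^ L b * 4 := by ring
            have h4 : (2:ℕ) ^ (L b + 1) = 2 ^ L b * 2 := by ring
            omega
          rcases Nat.lt_or_ge (2 ^ j + b) (2 ^ (L b + 1)) with hsmall | hbig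
          · -- L n = L b
            have hLn : L (2 ^ j + b) = L b := by
              apply L_eq
              · have := pow_L_le (show b ≠ 0 by omega)
                omega
              · exact hsmall
            refine ⟨hbasic1, hbasic2, hbasic3, ?_, ?_, ?_, ?_⟩ <;>
              (intro h; rw [hLn]; omega) <;> skip
          · -- L n = L b + 1
            rcases Nat.lt_or_ge j 2 with hj2 | hj2
            · -- j = 1 : forces n = 2^(L b + 1)
              have hj1' : j = 1 := by omega
              subst hj1'
              have hbeq : b = 2 ^ (L b + 1) - 2 := by
                have h1 : b < 2 ^ (L b + 1) := lt_pow_L b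
                omega
              have hneq : 2 ^ 1 + b = 2 ^ (L b + 1) := by
                have h1 : b < 2 ^ (L b + 1) := lt_pow_L b
                have h2 : (2:ℕ) ^ 1 = 2 := by norm_num
                omega
              have hsn : s (2 ^ 1 + b) = 1 := by rw [hneq, s_pow]
              refine ⟨hbasic1, hbasic2, hbasic3, ?_, ?_, ?_, ?_⟩ <;>
                (intro h; rw [hsn] at h; omega) <;> skip
            · -- j ≥ 2
              have hLn : L (2 ^ j + b) = L b + 1 := L_eq hbig hup
              refine ⟨hbasic1, hbasic2, hbasic3, ?_, ?_, ?_, ?_⟩ <;>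
                (intro h; rw [hLn]; omega) <;> skip
  · -- s a ≥ 2
    rcases Nat.lt_or_ge (s a) 3 with hsa3 | hsa3
    · -- s a = 2, so s b ≥ 2
      have hsa' : s a = 2 := by omega
      obtain ⟨k1, x1, hk1, hx1, rfl⟩ := even_s2 hadvd hsa'
      have hLa : L (2 ^ k1 * (2 ^ x1 + 1)) = k1 + x1 := L_s2 hk1 hx1
      have hp : k1 + x1 + 1 ≤ p := by have := ha4 (by omega); omega
      rcases Nat.lt_or_ge (s b) 3 with hsb | hsb3
      · -- s b = 2
        have hsb' : s b = 2 := by omega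
        obtain ⟨k2, x2, hk2, hx2, rfl⟩ := even_s2 hbdvd hsb'
        have hLb : L (2 ^ k2 * (2 ^ x2 + 1)) = k2 + x2 := L_s2 hk2 hx2
        have hq : k2 + x2 + 1 ≤ q := by have := hb4 (by omega); omega
        refine ⟨hbasic1, hbasic2, hbasic3, ?_, ?_, ?_, ?_⟩ <;>
          (intro h; rw [hLa, hLb] at hLn_le; omega) <;> skip
      · -- s b ≥ 3
        have hq : L b + 2 ≤ q := hb5 hsb3
        refine ⟨hbasic1, hbasic2, hbasic3, ?_, ?_, ?_, ?_⟩ <;>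
          (intro h; rw [hLa] at hLn_le; omega) <;> skip
    · -- s a ≥ 3 and s b ≥ 3
      have hp : L a + 2 ≤ p := ha5 hsa3
      have hq : L b + 2 ≤ q := hb5 (le_trans hsa3 hord)
      refine ⟨hbasic1, hbasic2, hbasic3, ?_, ?_, ?_, ?_⟩ <;>
        (intro h; omega) <;> skip


/-- the master induction -/
lemma master {n m : ℕ} (h : CanRepr 2 n m) : Q n m := by
  induction h with
  | base =>
    refine ⟨le_refl 2, dvd_refl 2, by norm_num, ?_, ?_, ?_, ?_⟩ <;>
      (intro h
       have hs2 : s 2 = 1 := by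
         have := s_pow 1
         norm_num at this
         exact this
       omega) <;> skip
  | @add a b p q ha hb iha ihb =>
    rcases le_total (s a) (s b) with hord | hord
    · exact add_core iha ihb hord
    · have := add_core ihb iha hord
      rwa [Nat.add_comm b a, Nat.add_comm q p] at this
  | @mul a b p q ha hb iha ihb =>
    rcases le_total (s a) (s b) with hord | hord
    · exact mul_core iha ihb hord
    · have := mul_core ihb iha hord
      rwa [Nat.mul_comm b a, Nat.add_comm q p] at this

lemma canrepr_two_mul : ∀ j : ℕ, 1 ≤ j → CanRepr 2 (2 * j) j := by
  intro j hj
  induction j with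
  | zero => omega
  | succ j ih =>
    rcases Nat.eq_zero_or_pos j with rfl | hj0
    · have : 2 * 1 = 2 := by norm_num
      rw [this]
      exact CanRepr.base
    · have h1 : CanRepr 2 (2 * j + 2) (j + 1) := CanRepr.add (ih hj0) CanRepr.base
      have : 2 * (j + 1) = 2 * j + 2 := by ring
      rwa [this]

end Stmt11Aux

theorem stmt_11 (n : ℕ) (hn : 0 < n) (heven : 2 ∣ n)
    (hdigits : 5 ≤ (Nat.digits 2 n).sum) :
    Real.logb 2 n + 2 ≤ (complexity 2 n : ℝ) := by
  classical
  have hs5 : 5 ≤ Stmt11Aux.s n := hdigits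
  have hne : {m | CanRepr 2 n m}.Nonempty := by
    obtain ⟨j, rfl⟩ := heven
    exact ⟨j, Stmt11Aux.canrepr_two_mul j (by omega)⟩
  have hmem : CanRepr 2 n (sInf {m | CanRepr 2 n m}) := Nat.sInf_mem hne
  have hQ := Stmt11Aux.master hmem
  set M := sInf {m | CanRepr 2 n m} with hM
  have hMc : complexity 2 n = M := rfl
  obtain ⟨h2n, _, _, _, _, _, hG4⟩ := hQ
  have hLM : Stmt11Aux.L n + 3 ≤ M := hG4 hs5
  -- n ≤ 2 ^ (M - 2)
  have hnat : n ≤ 2 ^ (M - 2) := by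
    have h1 : n < 2 ^ (Stmt11Aux.L n + 1) := Stmt11Aux.lt_pow_L n
    have h2 : (2:ℕ) ^ (Stmt11Aux.L n + 1) ≤ 2 ^ (M - 2) :=
      Nat.pow_le_pow_right (by norm_num) (by omega)
    omega
  have hM2 : 2 ≤ M := by omega
  -- move to the reals
  have hreal : (n:ℝ) ≤ (2:ℝ) ^ (M - 2 : ℕ) := by
    have := hnat
    exact_mod_cast this
  have hlogb : Real.logb 2 n ≤ ((M - 2 : ℕ) : ℝ) := by
    have hlog2 : Real.logb 2 ((2:ℝ) ^ (M - 2 : ℕ)) = ((M - 2 : ℕ) : ℝ) := by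
      rw [Real.logb_pow]
      simp [Real.logb_self_eq_one]
    calc Real.logb 2 n ≤ Real.logb 2 ((2:ℝ) ^ (M - 2 : ℕ)) := by
          apply Real.logb_le_logb_of_le (by norm_num : (1:ℝ) < 2) (by exact_mod_cast hn) hreal
      _ = ((M - 2 : ℕ) : ℝ) := hlog2
  have hcast : ((M - 2 : ℕ) : ℝ) = (M : ℝ) - 2 := by
    push_cast [Nat.cast_sub hM2]
    ring
  rw [hMc]
  rw [hcast] at hlogb
  linarith
end

section
/- For all integers m ≥ 0 and r with 1 ≤ r ≤ 7, one has ‖2^m · 6^r‖₂ = m + 3r. -/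
namespace Aux

lemma basics {n k : ℕ} (h : CanRepr 2 n k) : 2 ≤ n ∧ 1 ≤ k ∧ 2 ∣ n ∧ n ≤ 2 ^ k := by
  induction h with
  | base => norm_num
  | @add a b p q hx hy ihx ihy =>
      obtain ⟨x2, p1, xd, xle⟩ := ihx
      obtain ⟨y2, q1, yd, yle⟩ := ihy
      refine ⟨by omega, by omega, by omega, ?_⟩
      have h1 : (2:ℕ) ≤ 2 ^ p := by
        calc (2:ℕ) = 2 ^ 1 := rfl
        _ ≤ 2 ^ p := Nat.pow_le_pow_right (by norm_num) p1
      have h2 : (2:ℕ) ≤ 2 ^ q := by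
        calc (2:ℕ) = 2 ^ 1 := rfl
        _ ≤ 2 ^ q := Nat.pow_le_pow_right (by norm_num) q1
      have h3 : (2:ℕ) ^ p + 2 ^ q ≤ 2 ^ p * 2 ^ q := Nat.add_le_mul h1 h2
      rw [pow_add]
      omega
  | @mul a b p q hx hy ihx ihy =>
      obtain ⟨x2, p1, xd, xle⟩ := ihx
      obtain ⟨y2, q1, yd, yle⟩ := ihy
      refine ⟨by nlinarith, by omega, Dvd.dvd.mul_right xd b, ?_⟩
      rw [pow_add]
      exact Nat.mul_le_mul xle yle

lemma size {n k : ℕ} (h : CanRepr 2 n k) : n ≤ 2 ^ k := (basics h).2.2.2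

lemma kpos {n k : ℕ} (h : CanRepr 2 n k) : 1 ≤ k := (basics h).2.1

lemma even_n {n k : ℕ} (h : CanRepr 2 n k) : 2 ∣ n := (basics h).2.2.1

lemma qlb {v q c : ℕ} (h : CanRepr 2 v q) (hc : 2 ^ c < v) : c + 1 ≤ q := by
  by_contra h'
  push_neg at h'
  have h1 := size h
  have h2 : (2:ℕ) ^ q ≤ 2 ^ c := Nat.pow_le_pow_right (by norm_num) (by omega)
  omega

lemma inv {n k : ℕ} (h : CanRepr 2 n k) :
    (n = 2 ∧ k = 1) ∨
    ∃ a b p q, CanRepr 2 a p ∧ CanRepr 2 b q ∧ p + q = k ∧ (a + b = n ∨ a * b = n) := by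
  cases h with
  | base => exact Or.inl ⟨rfl, rfl⟩
  | @add a b p q hx hy => exact Or.inr ⟨a, b, p, q, hx, hy, rfl, Or.inl rfl⟩
  | @mul a b p q hx hy => exact Or.inr ⟨a, b, p, q, hx, hy, rfl, Or.inr rfl⟩

lemma budget1 {n : ℕ} (h : CanRepr 2 n 1) : n = 2 := by
  rcases inv h with ⟨h1, _⟩ | ⟨a, b, p, q, hx, hy, hk, _⟩
  · exact h1
  · have := kpos hx; have := kpos hy; omega

lemma budget2 {n : ℕ} (h : CanRepr 2 n 2) : n = 4 := by
  rcases inv h with ⟨h1, h2⟩ | ⟨a, b, p, q, hx, hy, hk, hab⟩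
  · omega
  · have h1 := kpos hx; have h2 := kpos hy
    have hp : p = 1 := by omega
    have hq : q = 1 := by omega
    subst hp; subst hq
    have ha := budget1 hx; have hb := budget1 hy
    subst ha; subst hb
    rcases hab with h | h <;> omega

lemma small_side {x p y q : ℕ} (hx : CanRepr 2 x p) (hy : CanRepr 2 y q)
    (hpq : p ≤ q) (hbig : 2 ^ (p + q) < 4 * (x + y)) : p ≤ 2 := by
  have hxle := size hx
  have hyle := size hy
  have h1 : (2:ℕ) ^ p ≤ 2 ^ q := Nat.pow_le_pow_right (by norm_num) hpq
  by_contra hp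
  push_neg at hp
  have h3 : (8:ℕ) ≤ 2 ^ p := by
    calc (8:ℕ) = 2 ^ 3 := by norm_num
    _ ≤ 2 ^ p := Nat.pow_le_pow_right (by norm_num) hp
  have h4 : (2:ℕ) ^ (p + q) = 2 ^ p * 2 ^ q := pow_add 2 p q
  have c1 : 4 * (x + y) ≤ 8 * 2 ^ q := by omega
  have c2 : 8 * 2 ^ q ≤ 2 ^ p * 2 ^ q := Nat.mul_le_mul_right _ h3
  omega

/-- Inversion for "tight" representations: `n` is `2`, a product of two evens,
    or a sum with small side `2` or `4`. -/
lemma key {n k : ℕ} (h : CanRepr 2 n k) (hbig : 2 ^ k < 4 * n) :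
    (n = 2 ∧ k = 1) ∨
    (∃ c d q1 q2, 2 * c * (2 * d) = n ∧ CanRepr 2 (2 * c) q1 ∧ CanRepr 2 (2 * d) q2 ∧
      q1 + q2 = k) ∨
    (∃ y q, 2 + y = n ∧ CanRepr 2 y q ∧ q + 1 = k) ∨
    (∃ y q, 4 + y = n ∧ CanRepr 2 y q ∧ q + 2 = k) := by
  rcases inv h with ⟨h1, h2⟩ | ⟨a, b, p, q, hx, hy, hk, hab | hab⟩
  · exact Or.inl ⟨h1, h2⟩
  · -- sum case
    subst hk; subst hab
    rcases le_total p q with hpq | hpq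
    · have hp2 : p ≤ 2 := small_side hx hy hpq hbig
      have hp1 : 1 ≤ p := kpos hx
      interval_cases p
      · have h2 := budget1 hx
        subst h2
        exact Or.inr (Or.inr (Or.inl ⟨b, q, rfl, hy, by omega⟩))
      · have h2 := budget2 hx
        subst h2
        exact Or.inr (Or.inr (Or.inr ⟨b, q, rfl, hy, by omega⟩))
    · have hp2 : q ≤ 2 := small_side hy hx hpq (by rw [add_comm q p, add_comm b a] at *; exact hbig)
      have hp1 : 1 ≤ q := kpos hy
      interval_cases q
      · have h2 := budget1 hy
        subst h2
        exact Or.inr (Or.inr (Or.inl ⟨a, p, by omega, hx, by omega⟩))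
      · have h2 := budget2 hy
        subst h2
        exact Or.inr (Or.inr (Or.inr ⟨a, p, by omega, hx, by omega⟩))
  · -- product case
    subst hk; subst hab
    obtain ⟨c, hc⟩ := even_n hx
    obtain ⟨d, hd⟩ := even_n hy
    exact Or.inr (Or.inl ⟨c, d, p, q, by rw [← hc, ← hd], by rw [← hc]; exact hx,
      by rw [← hd]; exact hy, rfl⟩)

lemma sizekill {y q B : ℕ} (hc : CanRepr 2 y q) (hq : q ≤ B) (hY : 2 ^ B < y) : False := by
  have h1 := size hc
  have h2 : (2:ℕ) ^ q ≤ 2 ^ B := Nat.pow_le_pow_right (by norm_num) hq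
  omega

lemma n14 {k : ℕ} (h : CanRepr 2 14 k) : 5 ≤ k := by
  by_contra hk
  push_neg at hk
  have hlb : 3 + 1 ≤ k := qlb h (by norm_num)
  have hup : (2:ℕ) ^ k < 4 * 14 := by
    have : (2:ℕ) ^ k ≤ 2 ^ 4 := Nat.pow_le_pow_right (by norm_num) (by omega)
    omega
  rcases key h hup with ⟨h2, _⟩ | ⟨c, d, q1, q2, hc, hc1, hc2, hq⟩ | ⟨y, q, hy, hcy, hq⟩ |
    ⟨y, q, hy, hcy, hq⟩
  · omega
  · have h4 : 4 * (c * d) = 14 := by rw [← hc]; ring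
    omega
  · exact sizekill hcy (show q ≤ 3 by omega) (show (2:ℕ)^3 < y by omega)
  · exact sizekill hcy (show q ≤ 2 by omega) (show (2:ℕ)^2 < y by omega)

lemma n26 {k : ℕ} (h : CanRepr 2 26 k) : 6 ≤ k := by
  by_contra hk
  push_neg at hk
  have hlb : 4 + 1 ≤ k := qlb h (by norm_num)
  have hup : (2:ℕ) ^ k < 4 * 26 := by
    have : (2:ℕ) ^ k ≤ 2 ^ 5 := Nat.pow_le_pow_right (by norm_num) (by omega)
    omega
  rcases key h hup with ⟨h2, _⟩ | ⟨c, d, q1, q2, hc, hc1, hc2, hq⟩ | ⟨y, q, hy, hcy, hq⟩ |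
    ⟨y, q, hy, hcy, hq⟩
  · omega
  · have h4 : 4 * (c * d) = 26 := by rw [← hc]; ring
    omega
  · exact sizekill hcy (show q ≤ 4 by omega) (show (2:ℕ)^4 < y by omega)
  · exact sizekill hcy (show q ≤ 3 by omega) (show (2:ℕ)^3 < y by omega)

lemma n182 {k : ℕ} (h : CanRepr 2 182 k) : 9 ≤ k := by
  by_contra hk
  push_neg at hk
  have hlb : 7 + 1 ≤ k := qlb h (by norm_num)
  have hup : (2:ℕ) ^ k < 4 * 182 := by
    have : (2:ℕ) ^ k ≤ 2 ^ 8 := Nat.pow_le_pow_right (by norm_num) (by omega)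
    omega
  rcases key h hup with ⟨h2, _⟩ | ⟨c, d, q1, q2, hc, hc1, hc2, hq⟩ | ⟨y, q, hy, hcy, hq⟩ |
    ⟨y, q, hy, hcy, hq⟩
  · omega
  · have h4 : 4 * (c * d) = 182 := by rw [← hc]; ring
    omega
  · exact sizekill hcy (show q ≤ 7 by omega) (show (2:ℕ)^7 < y by omega)
  · exact sizekill hcy (show q ≤ 6 by omega) (show (2:ℕ)^6 < y by omega)

lemma n242 {k : ℕ} (h : CanRepr 2 242 k) : 9 ≤ k := by
  by_contra hk
  push_neg at hk
  have hlb : 7 + 1 ≤ k := qlb h (by norm_num)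
  have hup : (2:ℕ) ^ k < 4 * 242 := by
    have : (2:ℕ) ^ k ≤ 2 ^ 8 := Nat.pow_le_pow_right (by norm_num) (by omega)
    omega
  rcases key h hup with ⟨h2, _⟩ | ⟨c, d, q1, q2, hc, hc1, hc2, hq⟩ | ⟨y, q, hy, hcy, hq⟩ |
    ⟨y, q, hy, hcy, hq⟩
  · omega
  · have h4 : 4 * (c * d) = 242 := by rw [← hc]; ring
    omega
  · exact sizekill hcy (show q ≤ 7 by omega) (show (2:ℕ)^7 < y by omega)
  · exact sizekill hcy (show q ≤ 6 by omega) (show (2:ℕ)^6 < y by omega)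

lemma n2186 {k : ℕ} (h : CanRepr 2 2186 k) : 13 ≤ k := by
  by_contra hk
  push_neg at hk
  have hlb : 11 + 1 ≤ k := qlb h (by norm_num)
  have hup : (2:ℕ) ^ k < 4 * 2186 := by
    have : (2:ℕ) ^ k ≤ 2 ^ 12 := Nat.pow_le_pow_right (by norm_num) (by omega)
    omega
  rcases key h hup with ⟨h2, _⟩ | ⟨c, d, q1, q2, hc, hc1, hc2, hq⟩ | ⟨y, q, hy, hcy, hq⟩ |
    ⟨y, q, hy, hcy, hq⟩
  · omega
  · have h4 : 4 * (c * d) = 2186 := by rw [← hc]; ring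
    omega
  · exact sizekill hcy (show q ≤ 11 by omega) (show (2:ℕ)^11 < y by omega)
  · exact sizekill hcy (show q ≤ 10 by omega) (show (2:ℕ)^10 < y by omega)

lemma n28 {k : ℕ} (h : CanRepr 2 28 k) : 6 ≤ k := by
  by_contra hk
  push_neg at hk
  have hlb : 4 + 1 ≤ k := qlb h (by norm_num)
  have hup : (2:ℕ) ^ k < 4 * 28 := by
    have : (2:ℕ) ^ k ≤ 2 ^ 5 := Nat.pow_le_pow_right (by norm_num) (by omega)
    omega
  rcases key h hup with ⟨h2, _⟩ | ⟨c, d, q1, q2, hc, hc1, hc2, hq⟩ | ⟨y, q, hy, hcy, hq⟩ |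
    ⟨y, q, hy, hcy, hq⟩
  · omega
  · have h4 : 4 * (c * d) = 28 := by rw [← hc]; ring
    have hcle : c ≤ 7 := Nat.le_of_dvd (by norm_num) ⟨d, by omega⟩
    have hcne : 1 ≤ c := Nat.pos_of_ne_zero (by rintro rfl; simp at h4)
    have hcase : c = 1 ∨ c = 7 := by interval_cases c <;> omega
    rcases hcase with rfl | rfl
    ·   have hd : d = 7 := by omega
        subst hd
        have bq1 : 1 ≤ q1 := kpos hc1
        have bq2 : 5 ≤ q2 := n14 hc2
        omega
    ·   have hd : d = 1 := by omega
        subst hd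
        have bq1 : 5 ≤ q1 := n14 hc1
        have bq2 : 1 ≤ q2 := kpos hc2
        omega
  · exact sizekill hcy (show q ≤ 4 by omega) (show (2:ℕ)^4 < y by omega)
  · exact sizekill hcy (show q ≤ 3 by omega) (show (2:ℕ)^3 < y by omega)

lemma n484 {k : ℕ} (h : CanRepr 2 484 k) : 10 ≤ k := by
  by_contra hk
  push_neg at hk
  have hlb : 8 + 1 ≤ k := qlb h (by norm_num)
  have hup : (2:ℕ) ^ k < 4 * 484 := by
    have : (2:ℕ) ^ k ≤ 2 ^ 9 := Nat.pow_le_pow_right (by norm_num) (by omega)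
    omega
  rcases key h hup with ⟨h2, _⟩ | ⟨c, d, q1, q2, hc, hc1, hc2, hq⟩ | ⟨y, q, hy, hcy, hq⟩ |
    ⟨y, q, hy, hcy, hq⟩
  · omega
  · have h4 : 4 * (c * d) = 484 := by rw [← hc]; ring
    have hcle : c ≤ 121 := Nat.le_of_dvd (by norm_num) ⟨d, by omega⟩
    have hcne : 1 ≤ c := Nat.pos_of_ne_zero (by rintro rfl; simp at h4)
    have hcase : c = 1 ∨ c = 11 ∨ c = 121 := by interval_cases c <;> omega
    rcases hcase with rfl | rfl | rfl
    ·   have hd : d = 121 := by omega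
        subst hd
        have bq1 : 1 ≤ q1 := kpos hc1
        have bq2 : 9 ≤ q2 := n242 hc2
        omega
    ·   have hd : d = 11 := by omega
        subst hd
        have bq1 : 4 + 1 ≤ q1 := qlb hc1 (by norm_num)
        have bq2 : 4 + 1 ≤ q2 := qlb hc2 (by norm_num)
        omega
    ·   have hd : d = 1 := by omega
        subst hd
        have bq1 : 9 ≤ q1 := n242 hc1
        have bq2 : 1 ≤ q2 := kpos hc2
        omega
  · exact sizekill hcy (show q ≤ 8 by omega) (show (2:ℕ)^8 < y by omega)
  · exact sizekill hcy (show q ≤ 7 by omega) (show (2:ℕ)^7 < y by omega)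

lemma n364 {k : ℕ} (h : CanRepr 2 364 k) : 10 ≤ k := by
  by_contra hk
  push_neg at hk
  have hlb : 8 + 1 ≤ k := qlb h (by norm_num)
  have hup : (2:ℕ) ^ k < 4 * 364 := by
    have : (2:ℕ) ^ k ≤ 2 ^ 9 := Nat.pow_le_pow_right (by norm_num) (by omega)
    omega
  rcases key h hup with ⟨h2, _⟩ | ⟨c, d, q1, q2, hc, hc1, hc2, hq⟩ | ⟨y, q, hy, hcy, hq⟩ |
    ⟨y, q, hy, hcy, hq⟩
  · omega
  · have h4 : 4 * (c * d) = 364 := by rw [← hc]; ring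
    have hcle : c ≤ 91 := Nat.le_of_dvd (by norm_num) ⟨d, by omega⟩
    have hcne : 1 ≤ c := Nat.pos_of_ne_zero (by rintro rfl; simp at h4)
    have hcase : c = 1 ∨ c = 7 ∨ c = 13 ∨ c = 91 := by interval_cases c <;> omega
    rcases hcase with rfl | rfl | rfl | rfl
    ·   have hd : d = 91 := by omega
        subst hd
        have bq1 : 1 ≤ q1 := kpos hc1
        have bq2 : 9 ≤ q2 := n182 hc2
        omega
    ·   have hd : d = 13 := by omega
        subst hd
        have bq1 : 5 ≤ q1 := n14 hc1
        have bq2 : 6 ≤ q2 := n26 hc2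
        omega
    ·   have hd : d = 7 := by omega
        subst hd
        have bq1 : 6 ≤ q1 := n26 hc1
        have bq2 : 5 ≤ q2 := n14 hc2
        omega
    ·   have hd : d = 1 := by omega
        subst hd
        have bq1 : 9 ≤ q1 := n182 hc1
        have bq2 : 1 ≤ q2 := kpos hc2
        omega
  · exact sizekill hcy (show q ≤ 8 by omega) (show (2:ℕ)^8 < y by omega)
  · exact sizekill hcy (show q ≤ 7 by omega) (show (2:ℕ)^7 < y by omega)

lemma n728 {k : ℕ} (h : CanRepr 2 728 k) : 11 ≤ k := by
  by_contra hk
  push_neg at hk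
  have hlb : 9 + 1 ≤ k := qlb h (by norm_num)
  have hup : (2:ℕ) ^ k < 4 * 728 := by
    have : (2:ℕ) ^ k ≤ 2 ^ 10 := Nat.pow_le_pow_right (by norm_num) (by omega)
    omega
  rcases key h hup with ⟨h2, _⟩ | ⟨c, d, q1, q2, hc, hc1, hc2, hq⟩ | ⟨y, q, hy, hcy, hq⟩ |
    ⟨y, q, hy, hcy, hq⟩
  · omega
  · have h4 : 4 * (c * d) = 728 := by rw [← hc]; ring
    have hcle : c ≤ 182 := Nat.le_of_dvd (by norm_num) ⟨d, by omega⟩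
    have hcne : 1 ≤ c := Nat.pos_of_ne_zero (by rintro rfl; simp at h4)
    have hcase : c = 1 ∨ c = 2 ∨ c = 7 ∨ c = 13 ∨ c = 14 ∨ c = 26 ∨ c = 91 ∨ c = 182 := by interval_cases c <;> omega
    rcases hcase with rfl | rfl | rfl | rfl | rfl | rfl | rfl | rfl
    ·   have hd : d = 182 := by omega
        subst hd
        have bq1 : 1 ≤ q1 := kpos hc1
        have bq2 : 10 ≤ q2 := n364 hc2
        omega
    ·   have hd : d = 91 := by omega
        subst hd
        have bq1 : 1 + 1 ≤ q1 := qlb hc1 (by norm_num)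
        have bq2 : 9 ≤ q2 := n182 hc2
        omega
    ·   have hd : d = 26 := by omega
        subst hd
        have bq1 : 5 ≤ q1 := n14 hc1
        have bq2 : 5 + 1 ≤ q2 := qlb hc2 (by norm_num)
        omega
    ·   have hd : d = 14 := by omega
        subst hd
        have bq1 : 6 ≤ q1 := n26 hc1
        have bq2 : 6 ≤ q2 := n28 hc2
        omega
    ·   have hd : d = 13 := by omega
        subst hd
        have bq1 : 6 ≤ q1 := n28 hc1
        have bq2 : 6 ≤ q2 := n26 hc2
        omega
    ·   have hd : d = 7 := by omega
        subst hd
        have bq1 : 5 + 1 ≤ q1 := qlb hc1 (by norm_num)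
        have bq2 : 5 ≤ q2 := n14 hc2
        omega
    ·   have hd : d = 2 := by omega
        subst hd
        have bq1 : 9 ≤ q1 := n182 hc1
        have bq2 : 1 + 1 ≤ q2 := qlb hc2 (by norm_num)
        omega
    ·   have hd : d = 1 := by omega
        subst hd
        have bq1 : 10 ≤ q1 := n364 hc1
        have bq2 : 1 ≤ q2 := kpos hc2
        omega
  · exact sizekill hcy (show q ≤ 9 by omega) (show (2:ℕ)^9 < y by omega)
  · exact sizekill hcy (show q ≤ 8 by omega) (show (2:ℕ)^8 < y by omega)

lemma n1456 {k : ℕ} (h : CanRepr 2 1456 k) : 12 ≤ k := by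
  by_contra hk
  push_neg at hk
  have hlb : 10 + 1 ≤ k := qlb h (by norm_num)
  have hup : (2:ℕ) ^ k < 4 * 1456 := by
    have : (2:ℕ) ^ k ≤ 2 ^ 11 := Nat.pow_le_pow_right (by norm_num) (by omega)
    omega
  rcases key h hup with ⟨h2, _⟩ | ⟨c, d, q1, q2, hc, hc1, hc2, hq⟩ | ⟨y, q, hy, hcy, hq⟩ |
    ⟨y, q, hy, hcy, hq⟩
  · omega
  · have h4 : 4 * (c * d) = 1456 := by rw [← hc]; ring
    have hcle : c ≤ 364 := Nat.le_of_dvd (by norm_num) ⟨d, by omega⟩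
    have hcne : 1 ≤ c := Nat.pos_of_ne_zero (by rintro rfl; simp at h4)
    have hcase : c = 1 ∨ c = 2 ∨ c = 4 ∨ c = 7 ∨ c = 13 ∨ c = 14 ∨ c = 26 ∨ c = 28 ∨ c = 52 ∨ c = 91 ∨ c = 182 ∨ c = 364 := by interval_cases c <;> omega
    rcases hcase with rfl | rfl | rfl | rfl | rfl | rfl | rfl | rfl | rfl | rfl | rfl | rfl
    ·   have hd : d = 364 := by omega
        subst hd
        have bq1 : 1 ≤ q1 := kpos hc1
        have bq2 : 11 ≤ q2 := n728 hc2
        omega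
    ·   have hd : d = 182 := by omega
        subst hd
        have bq1 : 1 + 1 ≤ q1 := qlb hc1 (by norm_num)
        have bq2 : 10 ≤ q2 := n364 hc2
        omega
    ·   have hd : d = 91 := by omega
        subst hd
        have bq1 : 2 + 1 ≤ q1 := qlb hc1 (by norm_num)
        have bq2 : 9 ≤ q2 := n182 hc2
        omega
    ·   have hd : d = 52 := by omega
        subst hd
        have bq1 : 5 ≤ q1 := n14 hc1
        have bq2 : 6 + 1 ≤ q2 := qlb hc2 (by norm_num)
        omega
    ·   have hd : d = 28 := by omega
        subst hd
        have bq1 : 6 ≤ q1 := n26 hc1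
        have bq2 : 5 + 1 ≤ q2 := qlb hc2 (by norm_num)
        omega
    ·   have hd : d = 26 := by omega
        subst hd
        have bq1 : 6 ≤ q1 := n28 hc1
        have bq2 : 5 + 1 ≤ q2 := qlb hc2 (by norm_num)
        omega
    ·   have hd : d = 14 := by omega
        subst hd
        have bq1 : 5 + 1 ≤ q1 := qlb hc1 (by norm_num)
        have bq2 : 6 ≤ q2 := n28 hc2
        omega
    ·   have hd : d = 13 := by omega
        subst hd
        have bq1 : 5 + 1 ≤ q1 := qlb hc1 (by norm_num)
        have bq2 : 6 ≤ q2 := n26 hc2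
        omega
    ·   have hd : d = 7 := by omega
        subst hd
        have bq1 : 6 + 1 ≤ q1 := qlb hc1 (by norm_num)
        have bq2 : 5 ≤ q2 := n14 hc2
        omega
    ·   have hd : d = 4 := by omega
        subst hd
        have bq1 : 9 ≤ q1 := n182 hc1
        have bq2 : 2 + 1 ≤ q2 := qlb hc2 (by norm_num)
        omega
    ·   have hd : d = 2 := by omega
        subst hd
        have bq1 : 10 ≤ q1 := n364 hc1
        have bq2 : 1 + 1 ≤ q2 := qlb hc2 (by norm_num)
        omega
    ·   have hd : d = 1 := by omega
        subst hd
        have bq1 : 11 ≤ q1 := n728 hc1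
        have bq2 : 1 ≤ q2 := kpos hc2
        omega
  · exact sizekill hcy (show q ≤ 10 by omega) (show (2:ℕ)^10 < y by omega)
  · exact sizekill hcy (show q ≤ 9 by omega) (show (2:ℕ)^9 < y by omega)

lemma n4372 {k : ℕ} (h : CanRepr 2 4372 k) : 14 ≤ k := by
  by_contra hk
  push_neg at hk
  have hlb : 12 + 1 ≤ k := qlb h (by norm_num)
  have hup : (2:ℕ) ^ k < 4 * 4372 := by
    have : (2:ℕ) ^ k ≤ 2 ^ 13 := Nat.pow_le_pow_right (by norm_num) (by omega)
    omega
  rcases key h hup with ⟨h2, _⟩ | ⟨c, d, q1, q2, hc, hc1, hc2, hq⟩ | ⟨y, q, hy, hcy, hq⟩ |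
    ⟨y, q, hy, hcy, hq⟩
  · omega
  · have h4 : 4 * (c * d) = 4372 := by rw [← hc]; ring
    have hp : Nat.Prime 1093 := by norm_num
    have hcase : c = 1 ∨ c = 1093 := hp.eq_one_or_self_of_dvd c ⟨d, by omega⟩
    rcases hcase with rfl | rfl
    ·   have hd : d = 1093 := by omega
        subst hd
        have bq1 : 1 ≤ q1 := kpos hc1
        have bq2 : 13 ≤ q2 := n2186 hc2
        omega
    ·   have hd : d = 1 := by omega
        subst hd
        have bq1 : 13 ≤ q1 := n2186 hc1
        have bq2 : 1 ≤ q2 := kpos hc2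
        omega
  · exact sizekill hcy (show q ≤ 12 by omega) (show (2:ℕ)^12 < y by omega)
  · exact sizekill hcy (show q ≤ 11 by omega) (show (2:ℕ)^11 < y by omega)

lemma dec23 : ∀ (a : ℕ) {r x y : ℕ}, x * y = 2 ^ a * 3 ^ r →
    ∃ a1 r1 a2 r2, x = 2 ^ a1 * 3 ^ r1 ∧ y = 2 ^ a2 * 3 ^ r2 ∧ a1 + a2 = a ∧ r1 + r2 = r := by
  intro a
  induction a with
  | zero =>
      intro r x y h
      simp only [pow_zero, one_mul] at h
      have hx : x ∣ 3 ^ r := ⟨y, h.symm⟩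
      obtain ⟨r1, hr1, rfl⟩ := (Nat.dvd_prime_pow Nat.prime_three).mp hx
      refine ⟨0, r1, 0, r - r1, by ring, ?_, by omega, by omega⟩
      have h3 : (3:ℕ) ^ r1 * y = 3 ^ r1 * 3 ^ (r - r1) := by
        rw [← pow_add, h]
        congr 1
        omega
      have := Nat.eq_of_mul_eq_mul_left (pow_pos (by norm_num) r1) h3
      simpa using this
  | succ a ih =>
      intro r x y h
      rcases Nat.even_or_odd x with ⟨x', hx'⟩ | hodd
      · have hxx : x = 2 * x' := by omega
        subst hxx
        have h' : x' * y = 2 ^ a * 3 ^ r := by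
          apply Nat.eq_of_mul_eq_mul_left (show 0 < 2 by norm_num)
          calc 2 * (x' * y) = 2 * x' * y := by ring
          _ = 2 ^ (a + 1) * 3 ^ r := h
          _ = 2 * (2 ^ a * 3 ^ r) := by ring
        obtain ⟨a1, r1, a2, r2, hx, hy, ha, hr⟩ := ih h'
        exact ⟨a1 + 1, r1, a2, r2, by rw [hx]; ring, hy, by omega, hr⟩
      · have h2 : 2 ∣ x * y := by
          rw [h]
          exact Dvd.dvd.mul_right (dvd_pow_self 2 (Nat.succ_ne_zero a)) _
        have hy2 : 2 ∣ y := by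
          rcases (Nat.Prime.dvd_mul Nat.prime_two).mp h2 with h' | h'
          · exact absurd h' (by simpa [Nat.odd_iff, Nat.two_dvd_ne_zero] using hodd)
          · exact h'
        obtain ⟨y', rfl⟩ := hy2
        have h' : x * y' = 2 ^ a * 3 ^ r := by
          apply Nat.eq_of_mul_eq_mul_left (show 0 < 2 by norm_num)
          calc 2 * (x * y') = x * (2 * y') := by ring
          _ = 2 ^ (a + 1) * 3 ^ r := h
          _ = 2 * (2 ^ a * 3 ^ r) := by ring
        obtain ⟨a1, r1, a2, r2, hx, hy, ha, hr⟩ := ih h'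
        exact ⟨a1, r1, a2 + 1, r2, hx, by rw [hy]; ring, by omega, hr⟩

lemma pow2_ge {a b : ℕ} (h : b ≤ a) : (2:ℕ) ^ b ≤ 2 ^ a := Nat.pow_le_pow_right (by norm_num) h

lemma e2lem (a r : ℕ) : (2:ℕ) ^ (a + 2 * r) = 2 ^ a * 4 ^ r := by
  rw [pow_add, pow_mul]
  norm_num

lemma ADD {x p y q a r : ℕ} (hx : CanRepr 2 x p) (hy : CanRepr 2 y q) (hpq : p ≤ q)
    (hr1 : 1 ≤ r) (hr7 : r ≤ 7) (ha : 1 ≤ a) (heq : x + y = 2 ^ a * 3 ^ r)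
    (hk : p + q + 1 ≤ a + 2 * r) : False := by
  have e2 := e2lem a r
  have ht2 : (2:ℕ) ≤ 2 ^ a := by
    calc (2:ℕ) = 2 ^ 1 := rfl
    _ ≤ 2 ^ a := pow2_ge ha
  have hbig : 2 ^ (p + q) < 4 * (x + y) := by
    rw [heq]
    have e1 : (2:ℕ) ^ (p + q + 1) ≤ 2 ^ (a + 2 * r) := pow2_ge hk
    have e4 : (2:ℕ) ^ (p + q + 1) = 2 * 2 ^ (p + q) := by rw [pow_succ]; ring
    have hcoef : (4:ℕ) ^ r < 8 * 3 ^ r := by interval_cases r <;> norm_num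
    have hdist : (2:ℕ) ^ a * 4 ^ r < 2 ^ a * (8 * 3 ^ r) :=
      mul_lt_mul_of_pos_left hcoef (pow_pos (by norm_num) a)
    have hexp : (2:ℕ) ^ a * (8 * 3 ^ r) = 8 * (2 ^ a * 3 ^ r) := by ring
    omega
  have hp2 : p ≤ 2 := small_side hx hy hpq hbig
  have hp1 : 1 ≤ p := kpos hx
  have hsy := size hy
  interval_cases p
  · -- p = 1, x = 2
    have hx2 := budget1 hx
    subst hx2
    have hy2 : y + 2 = 2 ^ a * 3 ^ r := by omega
    rcases eq_or_lt_of_le ha with ha1 | ha2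
    · -- a = 1
      rw [← ha1] at hy2 hk
      norm_num at hy2
      interval_cases r <;> norm_num at hy2
      · exact sizekill hy (show q ≤ 1 by omega) (show (2:ℕ) ^ 1 < y by omega)
      · exact sizekill hy (show q ≤ 3 by omega) (show (2:ℕ) ^ 3 < y by omega)
      · exact sizekill hy (show q ≤ 5 by omega) (show (2:ℕ) ^ 5 < y by omega)
      · exact sizekill hy (show q ≤ 7 by omega) (show (2:ℕ) ^ 7 < y by omega)
      · have := n484 (show CanRepr 2 484 q by rw [show (484:ℕ) = y by omega]; exact hy)
        omega
      · have := n1456 (show CanRepr 2 1456 q by rw [show (1456:ℕ) = y by omega]; exact hy)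
        omega
      · have := n4372 (show CanRepr 2 4372 q by rw [show (4372:ℕ) = y by omega]; exact hy)
        omega
    · -- 2 ≤ a
      have ht4 : (4:ℕ) ≤ 2 ^ a := by
        calc (4:ℕ) = 2 ^ 2 := rfl
        _ ≤ 2 ^ a := pow2_ge ha2
      have hbig2 : 2 ^ q < 4 * y := by
        have f1 : (2:ℕ) ^ (q + 2) ≤ 2 ^ (a + 2 * r) := pow2_ge (by omega)
        have f2 : (2:ℕ) ^ (q + 2) = 4 * 2 ^ q := by rw [pow_add]; ring
        have hcoef : (4:ℕ) ^ r + 9 ≤ 16 * 3 ^ r := by interval_cases r <;> norm_num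
        have hdist : (2:ℕ) ^ a * (4 ^ r + 9) ≤ 2 ^ a * (16 * 3 ^ r) :=
          Nat.mul_le_mul_left _ hcoef
        have hexp : (2:ℕ) ^ a * (4 ^ r + 9) = 2 ^ a * 4 ^ r + 9 * 2 ^ a := by ring
        have hexp2 : (2:ℕ) ^ a * (16 * 3 ^ r) = 16 * (2 ^ a * 3 ^ r) := by ring
        omega
      rcases key hy hbig2 with ⟨hy2', _⟩ | ⟨c, d, q1, q2, hcd, _, _, _⟩ |
        ⟨z, t, hz, hcz, hqt⟩ | ⟨z, t, hz, hcz, hqt⟩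
      · -- y = 2
        have h3 : (3:ℕ) ≤ 3 ^ r := by
          calc (3:ℕ) = 3 ^ 1 := rfl
          _ ≤ 3 ^ r := Nat.pow_le_pow_right (by norm_num) hr1
        have : (12:ℕ) ≤ 2 ^ a * 3 ^ r := by
          calc (12:ℕ) = 4 * 3 := rfl
          _ ≤ 2 ^ a * 3 ^ r := Nat.mul_le_mul ht4 h3
        omega
      · -- product: 4 ∣ y but y ≡ 2 mod 4
        have hd1 : 4 ∣ y := ⟨c * d, by rw [← hcd]; ring⟩
        have hd2 : (4:ℕ) ∣ 2 ^ a := by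
          have h' : (2:ℕ) ^ 2 ∣ 2 ^ a := pow_dvd_pow 2 ha2
          simpa using h'
        have hd3 : 4 ∣ y + 2 := hy2 ▸ Dvd.dvd.mul_right hd2 _
        omega
      · -- y = 2 + z : z + 4 = 2^a 3^r, budget t = q - 1
        have hsz := size hcz
        have f1 : (2:ℕ) ^ (t + 3) ≤ 2 ^ (a + 2 * r) := pow2_ge (by omega)
        have f2 : (2:ℕ) ^ (t + 3) = 8 * 2 ^ t := by rw [pow_add]; ring
        have hcoef : (4:ℕ) ^ r + 9 ≤ 8 * 3 ^ r := by interval_cases r <;> norm_num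
        have hdist : (2:ℕ) ^ a * (4 ^ r + 9) ≤ 2 ^ a * (8 * 3 ^ r) :=
          Nat.mul_le_mul_left _ hcoef
        have hexp : (2:ℕ) ^ a * (4 ^ r + 9) = 2 ^ a * 4 ^ r + 9 * 2 ^ a := by ring
        have hexp2 : (2:ℕ) ^ a * (8 * 3 ^ r) = 8 * (2 ^ a * 3 ^ r) := by ring
        omega
      · -- y = 4 + z : z + 6 = 2^a 3^r, budget t = q - 2
        have hsz := size hcz
        have f1 : (2:ℕ) ^ (t + 4) ≤ 2 ^ (a + 2 * r) := pow2_ge (by omega)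
        have f2 : (2:ℕ) ^ (t + 4) = 16 * 2 ^ t := by rw [pow_add]; ring
        have hcoef : (4:ℕ) ^ r + 25 ≤ 16 * 3 ^ r := by interval_cases r <;> norm_num
        have hdist : (2:ℕ) ^ a * (4 ^ r + 25) ≤ 2 ^ a * (16 * 3 ^ r) :=
          Nat.mul_le_mul_left _ hcoef
        have hexp : (2:ℕ) ^ a * (4 ^ r + 25) = 2 ^ a * 4 ^ r + 25 * 2 ^ a := by ring
        have hexp2 : (2:ℕ) ^ a * (16 * 3 ^ r) = 16 * (2 ^ a * 3 ^ r) := by ring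
        omega
  · -- p = 2, x = 4
    have hx4 := budget2 hx
    subst hx4
    have f1 : (2:ℕ) ^ (q + 3) ≤ 2 ^ (a + 2 * r) := pow2_ge (by omega)
    have f2 : (2:ℕ) ^ (q + 3) = 8 * 2 ^ q := by rw [pow_add]; ring
    have hcoef : (4:ℕ) ^ r + 17 ≤ 8 * 3 ^ r := by interval_cases r <;> norm_num
    have hdist : (2:ℕ) ^ a * (4 ^ r + 17) ≤ 2 ^ a * (8 * 3 ^ r) :=
      Nat.mul_le_mul_left _ hcoef
    have hexp : (2:ℕ) ^ a * (4 ^ r + 17) = 2 ^ a * 4 ^ r + 17 * 2 ^ a := by ring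
    have hexp2 : (2:ℕ) ^ a * (8 * 3 ^ r) = 8 * (2 ^ a * 3 ^ r) := by ring
    omega

lemma lb {n k : ℕ} (h : CanRepr 2 n k) : ∀ a r : ℕ, r ≤ 7 → n = 2 ^ a * 3 ^ r →
    a + 2 * r ≤ k := by
  induction h with
  | base =>
      intro a r h7 heq
      rcases Nat.eq_zero_or_pos r with rfl | hr
      · simp only [pow_zero, mul_one] at heq
        have ha2 : a < 2 := by
          by_contra h'
          push_neg at h'
          have : (4:ℕ) ≤ 2 ^ a := by
            calc (4:ℕ) = 2 ^ 2 := rfl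
            _ ≤ 2 ^ a := pow2_ge h'
          omega
        interval_cases a
        · norm_num at heq
        · omega
      · exfalso
        have h3 : (3:ℕ) ∣ 2 := by
          rw [heq]
          exact Dvd.dvd.mul_left (dvd_pow_self 3 (by omega)) _
        norm_num at h3
  | @add x y p q hx hy ihx ihy =>
      intro a r h7 heq
      rcases Nat.eq_zero_or_pos r with rfl | hr1
      · have hs := size (CanRepr.add hx hy)
        rw [heq] at hs
        simp only [pow_zero, mul_one] at hs
        have : a ≤ p + q := (Nat.pow_le_pow_iff_right (by norm_num)).mp hs
        omega
      · by_contra hcon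
        push_neg at hcon
        have ha : 1 ≤ a := by
          rcases Nat.eq_zero_or_pos a with rfl | ha
          · exfalso
            simp only [pow_zero, one_mul] at heq
            have h2 : 2 ∣ x + y := dvd_add (even_n hx) (even_n hy)
            rw [heq] at h2
            have := Nat.Prime.dvd_of_dvd_pow Nat.prime_two h2
            norm_num at this
          · exact ha
        rcases le_total p q with hpq | hpq
        · exact absurd (ADD hx hy hpq hr1 h7 ha heq (by omega)) not_false
        · exact absurd (ADD hy hx hpq hr1 h7 ha (by omega) (by omega)) not_false
  | @mul x y p q hx hy ihx ihy =>
      intro a r h7 heq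
      obtain ⟨a1, r1, a2, r2, hx', hy', ha, hr⟩ := dec23 a heq
      have i1 := ihx a1 r1 (by omega) hx'
      have i2 := ihy a2 r2 (by omega) hy'
      omega

lemma up_pow2 : ∀ m : ℕ, 1 ≤ m → CanRepr 2 (2 ^ m) m := by
  intro m
  induction m with
  | zero => omega
  | succ m ih =>
      intro _
      rcases Nat.eq_zero_or_pos m with rfl | hm
      · simpa using CanRepr.base
      · have h := CanRepr.mul CanRepr.base (ih hm)
        have e : (2:ℕ) * 2 ^ m = 2 ^ (m + 1) := by rw [pow_succ]; ring
        have e2 : 1 + m = m + 1 := by omega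
        rw [e, e2] at h
        exact h

lemma up_six : CanRepr 2 6 3 := by
  have h : CanRepr 2 (2 + (2 + 2)) (1 + (1 + 1)) :=
    CanRepr.add CanRepr.base (CanRepr.add CanRepr.base CanRepr.base)
  norm_num at h
  exact h

lemma up_pow6 : ∀ r : ℕ, 1 ≤ r → CanRepr 2 (6 ^ r) (3 * r) := by
  intro r
  induction r with
  | zero => omega
  | succ r ih =>
      intro _
      rcases Nat.eq_zero_or_pos r with rfl | hr
      · simpa using up_six
      · have h := CanRepr.mul up_six (ih hr)
        have e : (6:ℕ) * 6 ^ r = 6 ^ (r + 1) := by rw [pow_succ]; ring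
        have e2 : 3 + 3 * r = 3 * (r + 1) := by ring
        rw [e, e2] at h
        exact h

lemma up_main (m r : ℕ) (hr : 1 ≤ r) : CanRepr 2 (2 ^ m * 6 ^ r) (m + 3 * r) := by
  rcases Nat.eq_zero_or_pos m with rfl | hm
  · simpa using up_pow6 r hr
  · exact CanRepr.mul (up_pow2 m hm) (up_pow6 r hr)

end Aux

theorem stmt_12 (m r : ℕ) (hr1 : 1 ≤ r) (hr2 : r ≤ 7) :
    complexity 2 (2 ^ m * 6 ^ r) = m + 3 * r := by
  have hmem : m + 3 * r ∈ {j | CanRepr 2 (2 ^ m * 6 ^ r) j} := Aux.up_main m r hr1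
  have hform : (2:ℕ) ^ m * 6 ^ r = 2 ^ (m + r) * 3 ^ r := by
    rw [show (6:ℕ) = 2 * 3 from rfl, mul_pow, pow_add]
    ring
  apply le_antisymm
  · exact Nat.sInf_le hmem
  · apply le_csInf ⟨_, hmem⟩
    intro j hj
    have := Aux.lb hj (m + r) r hr2 hform
    omega
end

section
/- For all integers m ≥ 0 and r with 8 ≤ r ≤ 9, one has m + 3r − 1 ≤ ‖2^m · 6^r‖₂ ≤ m + 3r. -/
lemma cr_two_le {n k : ℕ} (h : CanRepr 2 n k) : 2 ≤ n := by
  induction h with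
  | base => exact le_refl _
  | add _ _ iha ihb => omega
  | mul _ _ iha ihb => have := Nat.mul_le_mul iha ihb; omega

lemma cr_even {n k : ℕ} (h : CanRepr 2 n k) : n % 2 = 0 := by
  induction h with
  | base => rfl
  | add _ _ iha ihb => omega
  | mul ha hb iha ihb =>
      rcases Nat.even_iff.2 iha with ⟨a', rfl⟩
      have h2 : a' + a' = 2 * a' := by ring
      rw [h2, Nat.mul_assoc]
      omega

lemma cr_kpos {n k : ℕ} (h : CanRepr 2 n k) : 1 ≤ k := by
  induction h with
  | base => exact le_refl _
  | add _ _ iha ihb => omega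
  | mul _ _ iha ihb => omega

lemma cr_le {n k : ℕ} (h : CanRepr 2 n k) : n ≤ 2 ^ k := by
  induction h with
  | base => norm_num
  | @add a b p q ha hb iha ihb =>
      have hp := cr_kpos ha; have hq := cr_kpos hb
      have h1 : (2:ℕ) ≤ 2 ^ p := by
        calc (2:ℕ) = 2 ^ 1 := by norm_num
        _ ≤ 2 ^ p := Nat.pow_le_pow_right (by norm_num) hp
      have h2 : (2:ℕ) ≤ 2 ^ q := by
        calc (2:ℕ) = 2 ^ 1 := by norm_num
        _ ≤ 2 ^ q := Nat.pow_le_pow_right (by norm_num) hq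
      rw [pow_add]
      nlinarith
  | mul ha hb iha ihb => rw [pow_add]; exact Nat.mul_le_mul iha ihb

lemma cr_one {n k : ℕ} (h : CanRepr 2 n k) (hk : k = 1) : n = 2 := by
  cases h with
  | base => rfl
  | add ha hb => have := cr_kpos ha; have := cr_kpos hb; omega
  | mul ha hb => have := cr_kpos ha; have := cr_kpos hb; omega

lemma cr_small {n k : ℕ} (h : CanRepr 2 n k) (hk : k ≤ 2) :
    (k = 1 ∧ n = 2) ∨ (k = 2 ∧ n = 4) := by
  cases h with
  | base => exact Or.inl ⟨rfl, rfl⟩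
  | @add a b p q ha hb =>
      have h1 := cr_kpos ha; have h2 := cr_kpos hb
      rw [cr_one ha (by omega), cr_one hb (by omega)]
      exact Or.inr ⟨by omega, rfl⟩
  | @mul a b p q ha hb =>
      have h1 := cr_kpos ha; have h2 := cr_kpos hb
      rw [cr_one ha (by omega), cr_one hb (by omega)]
      exact Or.inr ⟨by omega, rfl⟩

lemma bits_ge {y q t : ℕ} (hy : y ≤ 2 ^ q) (ht : 2 ^ t < y) : t + 1 ≤ q := by
  by_contra hc
  have : 2 ^ q ≤ 2 ^ t := Nat.pow_le_pow_right (by norm_num) (by omega)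
  omega

/-- Key bound for the `add` constructor: if `2^(c-2) < a+b-2` and `2^(c-3) < a+b-4`
then any sum decomposition costs at least `c`. -/
lemma add_bound {a b p q c : ℕ} (ha : CanRepr 2 a p) (hb : CanRepr 2 b q)
    (hc : 3 ≤ c) (h1 : 2 ^ (c - 2) < a + b - 2) (h2 : 2 ^ (c - 3) < a + b - 4) :
    c ≤ p + q := by
  rcases le_or_gt p 2 with hp | hp
  · rcases cr_small ha hp with ⟨hp1, ha1⟩ | ⟨hp1, ha1⟩
    · -- a = 2
      have hq := bits_ge (cr_le hb) (show 2 ^ (c-2) < b by omega)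
      omega
    · -- a = 4
      have hq := bits_ge (cr_le hb) (show 2 ^ (c-3) < b by omega)
      omega
  · rcases le_or_gt q 2 with hq | hq
    · rcases cr_small hb hq with ⟨hq1, hb1⟩ | ⟨hq1, hb1⟩
      · have hp' := bits_ge (cr_le ha) (show 2 ^ (c-2) < a by omega)
        omega
      · have hp' := bits_ge (cr_le ha) (show 2 ^ (c-3) < a by omega)
        omega
    · -- both sides use ≥ 3 twos
      have hA : a ≤ 2 ^ (p + q - 3) :=
        le_trans (cr_le ha) (Nat.pow_le_pow_right (by norm_num) (by omega))
      have hB : b ≤ 2 ^ (p + q - 3) :=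
        le_trans (cr_le hb) (Nat.pow_le_pow_right (by norm_num) (by omega))
      have hsum : a + b ≤ 2 ^ (p + q - 2) := by
        have he : 2 ^ (p + q - 2) = 2 ^ (p + q - 3) * 2 := by
          rw [← pow_succ]; congr 1; omega
        omega
      have := bits_ge hsum (show 2 ^ (c-3) < a + b by omega)
      omega

/-- Numbers `≡ 2 (mod 4)` can only arise as sums. -/
lemma addonly_bound {n k c : ℕ} (h : CanRepr 2 n k) (hmod : n % 4 = 2) (hc : 3 ≤ c)
    (h1 : 2 ^ (c - 2) < n - 2) (h2 : 2 ^ (c - 3) < n - 4) : c ≤ k := by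
  cases h with
  | base => have := Nat.one_le_two_pow (n := c - 2); omega
  | add ha hb => exact add_bound ha hb hc h1 h2
  | mul ha hb =>
      exfalso
      rcases Nat.even_iff.2 (cr_even ha) with ⟨a', rfl⟩
      rcases Nat.even_iff.2 (cr_even hb) with ⟨b', rfl⟩
      have h4 : (a' + a') * (b' + b') = 4 * (a' * b') := by ring
      rw [h4] at hmod
      omega

lemma dvd_split : ∀ (α : ℕ) {M x : ℕ}, M % 2 = 1 → x ∣ 2 ^ α * M →
    ∃ i u, i ≤ α ∧ u ∣ M ∧ x = 2 ^ i * u := by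
  intro α
  induction α with
  | zero =>
      intro M x hM hx
      exact ⟨0, x, le_refl _, by simpa using hx, by simp⟩
  | succ α ih =>
      intro M x hM hx
      rcases Nat.even_or_odd x with hex | hox
      · rcases hex with ⟨x', rfl⟩
        have hrw : 2 ^ (α + 1) * M = 2 * (2 ^ α * M) := by ring
        rw [hrw] at hx
        have hx'2 : x' + x' = 2 * x' := by ring
        rw [hx'2] at hx
        have hx' : x' ∣ 2 ^ α * M := (mul_dvd_mul_iff_left (two_ne_zero)).mp hx
        obtain ⟨i, u, hi, hu, rfl⟩ := ih hM hx'
        exact ⟨i + 1, u, by omega, hu, by ring⟩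
      · have hcop : Nat.Coprime x 2 := by
          rw [Nat.coprime_two_right]
          exact hox
        have hcop' : Nat.Coprime x (2 ^ (α + 1)) := Nat.Coprime.pow_right _ hcop
        have hx' : x ∣ M * 2 ^ (α + 1) := by rwa [mul_comm] at hx
        have : x ∣ M := Nat.Coprime.dvd_of_dvd_mul_right hcop' hx'
        exact ⟨0, x, by omega, this, by simp⟩

lemma cofactor {α i u v M y : ℕ} (hi : i ≤ α) (huv : u * v = M) (hu : 0 < u)
    (h : (2 ^ i * u) * y = 2 ^ α * M) : y = 2 ^ (α - i) * v := by
  have hpos : 0 < 2 ^ i * u := Nat.mul_pos (Nat.pow_pos (by norm_num)) hu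
  apply Nat.eq_of_mul_eq_mul_left hpos
  rw [h]
  have hexp : (2:ℕ) ^ i * 2 ^ (α - i) = 2 ^ α := by
    rw [← pow_add]; congr 1; omega
  calc 2 ^ α * M = (2 ^ i * 2 ^ (α - i)) * (u * v) := by rw [hexp, huv]
  _ = 2 ^ i * u * (2 ^ (α - i) * v) := by ring

lemma enum7 {u v : ℕ} (h : u * v = 7) : (u = 1 ∧ v = 7) ∨ (u = 7 ∧ v = 1) := by
  have hu : u ≤ 7 := Nat.le_of_dvd (by norm_num) ⟨v, h.symm⟩
  interval_cases u <;> omega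

lemma enum91 {u v : ℕ} (h : u * v = 91) :
    (u = 1 ∧ v = 91) ∨ (u = 7 ∧ v = 13) ∨ (u = 13 ∧ v = 7) ∨ (u = 91 ∧ v = 1) := by
  have hu : u ≤ 91 := Nat.le_of_dvd (by norm_num) ⟨v, h.symm⟩
  interval_cases u <;> omega

lemma enum121 {u v : ℕ} (h : u * v = 121) :
    (u = 1 ∧ v = 121) ∨ (u = 11 ∧ v = 11) ∨ (u = 121 ∧ v = 1) := by
  have hu : u ≤ 121 := Nat.le_of_dvd (by norm_num) ⟨v, h.symm⟩
  interval_cases u <;> omega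

lemma enum205 {u v : ℕ} (h : u * v = 205) :
    (u = 1 ∧ v = 205) ∨ (u = 5 ∧ v = 41) ∨ (u = 41 ∧ v = 5) ∨ (u = 205 ∧ v = 1) := by
  have hu : u ≤ 205 := Nat.le_of_dvd (by norm_num) ⟨v, h.symm⟩
  interval_cases u <;> omega

lemma enum1093 {u v : ℕ} (h : u * v = 1093) :
    (u = 1 ∧ v = 1093) ∨ (u = 1093 ∧ v = 1) := by
  have hsmall : u ≤ 33 ∨ v ≤ 33 := by
    by_contra hcon
    push_neg at hcon
    have : 34 * 34 ≤ u * v := Nat.mul_le_mul hcon.1 hcon.2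
    omega
  rcases hsmall with hu | hv
  · interval_cases u <;> omega
  · interval_cases v <;> omega

lemma enum9841 {u v : ℕ} (h : u * v = 9841) :
    (u = 1 ∧ v = 9841) ∨ (u = 13 ∧ v = 757) ∨ (u = 757 ∧ v = 13) ∨ (u = 9841 ∧ v = 1) := by
  have hsmall : u ≤ 99 ∨ v ≤ 99 := by
    by_contra hcon
    push_neg at hcon
    have : 100 * 100 ≤ u * v := Nat.mul_le_mul hcon.1 hcon.2
    omega
  rcases hsmall with hu | hv
  · interval_cases u <;> omega
  · interval_cases v <;> omega

lemma Q26 {n k : ℕ} (h : CanRepr 2 n k) (hn : n = 26) : 6 ≤ k := by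
  subst hn; exact addonly_bound h (by norm_num) (by norm_num) (by norm_num) (by norm_num)

lemma Q242 {n k : ℕ} (h : CanRepr 2 n k) (hn : n = 242) : 9 ≤ k := by
  subst hn; exact addonly_bound h (by norm_num) (by norm_num) (by norm_num) (by norm_num)

lemma Q2186 {n k : ℕ} (h : CanRepr 2 n k) (hn : n = 2186) : 13 ≤ k := by
  subst hn; exact addonly_bound h (by norm_num) (by norm_num) (by norm_num) (by norm_num)

lemma Q19682 {n k : ℕ} (h : CanRepr 2 n k) (hn : n = 19682) : 16 ≤ k := by
  subst hn; exact addonly_bound h (by norm_num) (by norm_num) (by norm_num) (by norm_num)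

/-- helper to split an even*even product of a number `4*M` with `M` odd -/
lemma even_prod_split {a b n M : ℕ} (ha : CanRepr 2 a _p) (hb : CanRepr 2 b _q)
    (hab : a * b = n) (hM : n = 4 * M) :
    ∃ u v, a = 2 * u ∧ b = 2 * v ∧ u * v = M := by
  rcases Nat.even_iff.2 (cr_even ha) with ⟨a', rfl⟩
  rcases Nat.even_iff.2 (cr_even hb) with ⟨b', rfl⟩
  refine ⟨a', b', by ring, by ring, ?_⟩
  have h4 : (a' + a') * (b' + b') = 4 * (a' * b') := by ring
  rw [h4] at hab
  omega

lemma Q484 {n k : ℕ} (h : CanRepr 2 n k) (hn : n = 484) : 10 ≤ k := by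
  cases h with
  | base => omega
  | add ha hb => exact add_bound ha hb (by norm_num) (by rw [hn]; norm_num) (by rw [hn]; norm_num)
  | @mul a b p q ha hb =>
      obtain ⟨u, v, rfl, rfl, huv⟩ := even_prod_split ha hb hn (show (484:ℕ) = 4 * 121 by norm_num)
      rcases enum121 huv with ⟨hu, hv⟩ | ⟨hu, hv⟩ | ⟨hu, hv⟩
      · subst hu; subst hv
        have h1 := cr_kpos ha
        have h2 := Q242 hb (by norm_num)
        omega
      · subst hu; subst hv
        have h1 := bits_ge (cr_le ha) (show (2:ℕ)^4 < 2 * 11 by norm_num)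
        have h2 := bits_ge (cr_le hb) (show (2:ℕ)^4 < 2 * 11 by norm_num)
        omega
      · subst hu; subst hv
        have h1 := Q242 ha (by norm_num)
        have h2 := cr_kpos hb
        omega

lemma Q4372 {n k : ℕ} (h : CanRepr 2 n k) (hn : n = 4372) : 14 ≤ k := by
  cases h with
  | base => omega
  | add ha hb => exact add_bound ha hb (by norm_num) (by rw [hn]; norm_num) (by rw [hn]; norm_num)
  | @mul a b p q ha hb =>
      obtain ⟨u, v, rfl, rfl, huv⟩ := even_prod_split ha hb hn (show (4372:ℕ) = 4 * 1093 by norm_num)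
      rcases enum1093 huv with ⟨hu, hv⟩ | ⟨hu, hv⟩
      · subst hu; subst hv
        have h1 := cr_kpos ha
        have h2 := Q2186 hb (by norm_num)
        omega
      · subst hu; subst hv
        have h1 := Q2186 ha (by norm_num)
        have h2 := cr_kpos hb
        omega

lemma Q39364 {n k : ℕ} (h : CanRepr 2 n k) (hn : n = 39364) : 17 ≤ k := by
  cases h with
  | base => omega
  | add ha hb => exact add_bound ha hb (by norm_num) (by rw [hn]; norm_num) (by rw [hn]; norm_num)
  | @mul a b p q ha hb =>
      obtain ⟨u, v, rfl, rfl, huv⟩ := even_prod_split ha hb hn (show (39364:ℕ) = 4 * 9841 by norm_num)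
      rcases enum9841 huv with ⟨hu, hv⟩ | ⟨hu, hv⟩ | ⟨hu, hv⟩ | ⟨hu, hv⟩
      · subst hu; subst hv
        have h1 := cr_kpos ha
        have h2 := Q19682 hb (by norm_num)
        omega
      · subst hu; subst hv
        have h1 := Q26 ha (by norm_num)
        have h2 := bits_ge (cr_le hb) (show (2:ℕ)^10 < 2 * 757 by norm_num)
        omega
      · subst hu; subst hv
        have h1 := bits_ge (cr_le ha) (show (2:ℕ)^10 < 2 * 757 by norm_num)
        have h2 := Q26 hb (by norm_num)
        omega
      · subst hu; subst hv
        have h1 := Q19682 ha (by norm_num)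
        have h2 := cr_kpos hb
        omega

lemma pow2_le_of_le {i p : ℕ} (h : (2:ℕ) ^ i ≤ 2 ^ p) : i ≤ p := by
  by_contra hc
  have : (2:ℕ) ^ p < 2 ^ i := Nat.pow_lt_pow_right (by norm_num) (by omega)
  omega

lemma one_le_pow2 (i : ℕ) : 1 ≤ (2:ℕ) ^ i := Nat.one_le_two_pow

lemma exp_pos_of_even {i u k : ℕ} (h : CanRepr 2 (2 ^ i * u) k) (hu : u % 2 = 1) : 1 ≤ i := by
  by_contra hc
  have hi : i = 0 := by omega
  subst hi
  have := cr_even h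
  simp at this
  omega

/-- if `2^t < c` then any representation of `2^i * c` uses more than `i + t` twos -/
lemma pow_bits {i c t q : ℕ} (h : CanRepr 2 (2 ^ i * c) q) (hct : 2 ^ t < c) :
    i + t + 1 ≤ q := by
  have h1 : (2:ℕ) ^ (i + t) < 2 ^ i * c := by
    rw [pow_add]
    have h2 := one_le_pow2 i
    nlinarith
  exact bits_ge (cr_le h) h1

lemma P7 : ∀ n, ∀ k, CanRepr 2 n k → ∀ a, 1 ≤ a → n = 2 ^ a * 7 → a + 4 ≤ k := by
  intro n
  induction n using Nat.strong_induction_on with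
  | _ n IH =>
    intro k h a ha hn
    have h2a : (2:ℕ) ≤ 2 ^ a := by
      calc (2:ℕ) = 2 ^ 1 := by norm_num
      _ ≤ 2 ^ a := Nat.pow_le_pow_right (by norm_num) ha
    cases h with
    | base => omega
    | add hx hy =>
        apply add_bound hx hy (by omega)
        · rw [hn, show a + 4 - 2 = a + 2 by omega, pow_add]
          have h4 : (2:ℕ) ^ a * 2 ^ 2 = 2 ^ a * 4 := by norm_num
          omega
        · rw [hn, show a + 4 - 3 = a + 1 by omega, pow_add]
          have h4 : (2:ℕ) ^ a * 2 ^ 1 = 2 ^ a * 2 := by norm_num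
          omega
    | @mul x y p q hx hy =>
        obtain ⟨i, u, hia, hu, rfl⟩ := dvd_split a (show (7:ℕ) % 2 = 1 by norm_num) ⟨y, hn.symm⟩
        obtain ⟨v, hv⟩ := hu
        have huv : u * v = 7 := hv.symm
        have hu1 : 0 < u := by
          rcases Nat.eq_zero_or_pos u with h0 | h0
          · subst h0; omega
          · exact h0
        have hyv : y = 2 ^ (a - i) * v := cofactor hia huv hu1 hn
        have hx2 := cr_two_le hx
        have hy2 := cr_two_le hy
        rcases enum7 huv with ⟨hu7, hv7⟩ | ⟨hu7, hv7⟩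
        · -- x = 2^i, y = 2^(a-i)*7
          subst hu7; subst hv7
          have hi1 : 1 ≤ a - i := exp_pos_of_even (hyv ▸ hy) (by norm_num)
          have hylt : y < 2 ^ i * 1 * y := by nlinarith [one_le_pow2 i]
          have hq := IH y hylt q hy (a - i) hi1 hyv
          have hp : i ≤ p := pow2_le_of_le (by have := cr_le hx; simpa using this)
          omega
        · -- x = 2^i*7, y = 2^(a-i)
          subst hu7; subst hv7
          have hi1 : 1 ≤ i := exp_pos_of_even hx (by norm_num)
          have hxlt : 2 ^ i * 7 < 2 ^ i * 7 * y := by nlinarith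
          have hp := IH (2 ^ i * 7) hxlt p hx i hi1 rfl
          have hq : a - i ≤ q := pow2_le_of_le (by have := cr_le hy; rw [hyv, mul_one] at this; exact this)
          omega

lemma P91 : ∀ n, ∀ k, CanRepr 2 n k → ∀ a, 1 ≤ a → n = 2 ^ a * 91 → a + 8 ≤ k := by
  intro n
  induction n using Nat.strong_induction_on with
  | _ n IH =>
    intro k h a ha hn
    have h2a : (2:ℕ) ≤ 2 ^ a := by
      calc (2:ℕ) = 2 ^ 1 := by norm_num
      _ ≤ 2 ^ a := Nat.pow_le_pow_right (by norm_num) ha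
    cases h with
    | base => omega
    | add hx hy =>
        apply add_bound hx hy (by omega)
        · rw [hn, show a + 8 - 2 = a + 6 by omega, pow_add]
          have h4 : (2:ℕ) ^ a * 2 ^ 6 = 2 ^ a * 64 := by norm_num
          omega
        · rw [hn, show a + 8 - 3 = a + 5 by omega, pow_add]
          have h4 : (2:ℕ) ^ a * 2 ^ 5 = 2 ^ a * 32 := by norm_num
          omega
    | @mul x y p q hx hy =>
        obtain ⟨i, u, hia, hu, rfl⟩ := dvd_split a (show (91:ℕ) % 2 = 1 by norm_num) ⟨y, hn.symm⟩
        obtain ⟨v, hv⟩ := hu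
        have huv : u * v = 91 := hv.symm
        have hu1 : 0 < u := by
          rcases Nat.eq_zero_or_pos u with h0 | h0
          · subst h0; omega
          · exact h0
        have hyv : y = 2 ^ (a - i) * v := cofactor hia huv hu1 hn
        have hx2 := cr_two_le hx
        have hy2 := cr_two_le hy
        rcases enum91 huv with ⟨hu7, hv7⟩ | ⟨hu7, hv7⟩ | ⟨hu7, hv7⟩ | ⟨hu7, hv7⟩
        · -- x = 2^i, y = 2^(a-i)*91
          subst hu7; subst hv7
          have hi1 : 1 ≤ a - i := exp_pos_of_even (hyv ▸ hy) (by norm_num)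
          have hylt : y < 2 ^ i * 1 * y := by nlinarith [one_le_pow2 i]
          have hq := IH y hylt q hy (a - i) hi1 hyv
          have hp : i ≤ p := pow2_le_of_le (by have := cr_le hx; simpa using this)
          omega
        · -- x = 2^i*7, y = 2^(a-i)*13
          subst hu7; subst hv7
          have hi1 : 1 ≤ i := exp_pos_of_even hx (by norm_num)
          have hxlt : 2 ^ i * 7 < 2 ^ i * 7 * y := by nlinarith
          have hp := P7 (2 ^ i * 7) p hx i hi1 rfl
          have hq : (a - i) + 3 + 1 ≤ q := pow_bits (hyv ▸ hy) (by norm_num)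
          omega
        · -- x = 2^i*13, y = 2^(a-i)*7
          subst hu7; subst hv7
          have hi1 : 1 ≤ a - i := exp_pos_of_even (hyv ▸ hy) (by norm_num)
          have hp : i + 3 + 1 ≤ p := pow_bits hx (by norm_num)
          have hq := P7 y q hy (a - i) hi1 hyv
          omega
        · -- x = 2^i*91, y = 2^(a-i)
          subst hu7; subst hv7
          have hi1 : 1 ≤ i := exp_pos_of_even hx (by norm_num)
          have hxlt : 2 ^ i * 91 < 2 ^ i * 91 * y := by nlinarith
          have hp := IH (2 ^ i * 91) hxlt p hx i hi1 rfl
          have hq : a - i ≤ q := pow2_le_of_le (by have := cr_le hy; rw [hyv, mul_one] at this; exact this)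
          omega

lemma P205 : ∀ n, ∀ k, CanRepr 2 n k → ∀ a, 1 ≤ a → n = 2 ^ a * 205 → a + 9 ≤ k := by
  intro n
  induction n using Nat.strong_induction_on with
  | _ n IH =>
    intro k h a ha hn
    have h2a : (2:ℕ) ≤ 2 ^ a := by
      calc (2:ℕ) = 2 ^ 1 := by norm_num
      _ ≤ 2 ^ a := Nat.pow_le_pow_right (by norm_num) ha
    cases h with
    | base => omega
    | add hx hy =>
        apply add_bound hx hy (by omega)
        · rw [hn, show a + 9 - 2 = a + 7 by omega, pow_add]
          have h4 : (2:ℕ) ^ a * 2 ^ 7 = 2 ^ a * 128 := by norm_num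
          omega
        · rw [hn, show a + 9 - 3 = a + 6 by omega, pow_add]
          have h4 : (2:ℕ) ^ a * 2 ^ 6 = 2 ^ a * 64 := by norm_num
          omega
    | @mul x y p q hx hy =>
        obtain ⟨i, u, hia, hu, rfl⟩ := dvd_split a (show (205:ℕ) % 2 = 1 by norm_num) ⟨y, hn.symm⟩
        obtain ⟨v, hv⟩ := hu
        have huv : u * v = 205 := hv.symm
        have hu1 : 0 < u := by
          rcases Nat.eq_zero_or_pos u with h0 | h0
          · subst h0; omega
          · exact h0
        have hyv : y = 2 ^ (a - i) * v := cofactor hia huv hu1 hn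
        have hx2 := cr_two_le hx
        have hy2 := cr_two_le hy
        rcases enum205 huv with ⟨hu7, hv7⟩ | ⟨hu7, hv7⟩ | ⟨hu7, hv7⟩ | ⟨hu7, hv7⟩
        · subst hu7; subst hv7
          have hi1 : 1 ≤ a - i := exp_pos_of_even (hyv ▸ hy) (by norm_num)
          have hylt : y < 2 ^ i * 1 * y := by nlinarith [one_le_pow2 i]
          have hq := IH y hylt q hy (a - i) hi1 hyv
          have hp : i ≤ p := pow2_le_of_le (by have := cr_le hx; simpa using this)
          omega
        · -- x = 2^i*5, y = 2^(a-i)*41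
          subst hu7; subst hv7
          have hi1 : 1 ≤ i := exp_pos_of_even hx (by norm_num)
          have hi2 : 1 ≤ a - i := exp_pos_of_even (hyv ▸ hy) (by norm_num)
          have hp : i + 2 + 1 ≤ p := pow_bits hx (by norm_num)
          have hq : (a - i) + 5 + 1 ≤ q := pow_bits (hyv ▸ hy) (by norm_num)
          omega
        · -- x = 2^i*41, y = 2^(a-i)*5
          subst hu7; subst hv7
          have hi1 : 1 ≤ i := exp_pos_of_even hx (by norm_num)
          have hi2 : 1 ≤ a - i := exp_pos_of_even (hyv ▸ hy) (by norm_num)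
          have hp : i + 5 + 1 ≤ p := pow_bits hx (by norm_num)
          have hq : (a - i) + 2 + 1 ≤ q := pow_bits (hyv ▸ hy) (by norm_num)
          omega
        · -- x = 2^i*205, y = 2^(a-i)
          subst hu7; subst hv7
          have hi1 : 1 ≤ i := exp_pos_of_even hx (by norm_num)
          have hxlt : 2 ^ i * 205 < 2 ^ i * 205 * y := by nlinarith
          have hp := IH (2 ^ i * 205) hxlt p hx i hi1 rfl
          have hq : a - i ≤ q := pow2_le_of_le (by have := cr_le hy; rw [hyv, mul_one] at this; exact this)
          omega

def Tf (α β : ℕ) : ℕ := α + 2 * β - (if 8 ≤ β then 1 else 0)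

lemma Tsuper {i α j β : ℕ} (hi : i ≤ α) (hj : j ≤ β) (hβ : β ≤ 9) :
    Tf α β ≤ Tf i j + Tf (α - i) (β - j) := by
  unfold Tf; split_ifs <;> omega

lemma pow2_lt_exp {s t : ℕ} (h : (2:ℕ) ^ s < 2 ^ t) : s < t := by
  by_contra hc
  have : (2:ℕ) ^ t ≤ 2 ^ s := Nat.pow_le_pow_right (by norm_num) (by omega)
  omega

lemma main_add_small {α β x y p q : ℕ} (hβ3 : 3 ≤ β) (hβ : β ≤ 9) (hα : 1 ≤ α)
    (hx : CanRepr 2 x p) (hy : CanRepr 2 y q) (hn : x + y = 2 ^ α * 3 ^ β) (hp : p ≤ 2) :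
    Tf α β ≤ p + q := by
  set e : ℕ := if 8 ≤ β then 1 else 0 with he
  have he1 : e ≤ 1 := by rw [he]; split_ifs <;> omega
  have hTf : Tf α β = α + 2 * β - e := by rw [he]; rfl
  have ht2 : (2:ℕ) ≤ 2 ^ α := by
    calc (2:ℕ) = 2 ^ 1 := by norm_num
    _ ≤ 2 ^ α := Nat.pow_le_pow_right (by norm_num) hα
  have hN1 : 2 ^ (2 * β - e - 3) + 3 ≤ 3 ^ β := by
    rw [he]; interval_cases β <;> norm_num
  have key : 2 ^ α * 2 ^ (2 * β - e - 3) + 3 * 2 ^ α ≤ 2 ^ α * 3 ^ β := by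
    calc 2 ^ α * 2 ^ (2 * β - e - 3) + 3 * 2 ^ α = 2 ^ α * (2 ^ (2 * β - e - 3) + 3) := by ring
    _ ≤ 2 ^ α * 3 ^ β := Nat.mul_le_mul_left _ hN1
  rcases cr_small hx hp with ⟨hp1, hx1⟩ | ⟨hp1, hx1⟩
  · -- x = 2, p = 1
    subst hx1
    rcases le_or_gt β 4 with hβ4 | hβ5
    · -- β ∈ {3,4}: plain size bound on y suffices
      have he' : e = 0 := by rw [he, if_neg (by omega)]
      have hN3 : 2 ^ (2 * β - 2) + 6 ≤ 3 ^ β := by interval_cases β <;> norm_num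
      have key3 : 2 ^ α * 2 ^ (2 * β - 2) + 6 * 2 ^ α ≤ 2 ^ α * 3 ^ β := by
        calc 2 ^ α * 2 ^ (2 * β - 2) + 6 * 2 ^ α = 2 ^ α * (2 ^ (2 * β - 2) + 6) := by ring
        _ ≤ 2 ^ α * 3 ^ β := Nat.mul_le_mul_left _ hN3
      have hq := bits_ge (cr_le hy) (show 2 ^ (α + (2 * β - 2)) < y by rw [pow_add]; omega)
      omega
    · rcases Nat.eq_or_lt_of_le hα with hα1 | hα2
      · -- α = 1 : concrete numbers
        have hα1' : α = 1 := hα1.symm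
        subst hα1'
        interval_cases β
        · -- β = 5 : y = 484
          norm_num at hn he
          have h10 := Q484 hy (by omega)
          omega
        · -- β = 6 : y = 1456 = 2^4 * 91
          norm_num at hn he
          have h12 := P91 y q hy 4 (by norm_num) (by norm_num; omega)
          omega
        · -- β = 7 : y = 4372
          norm_num at hn he
          have h14 := Q4372 hy (by omega)
          omega
        · -- β = 8 : y = 13120 = 2^6 * 205
          norm_num at hn he
          have h15 := P205 y q hy 6 (by norm_num) (by norm_num; omega)
          omega
        · -- β = 9 : y = 39364
          norm_num at hn he
          have h17 := Q39364 hy (by omega)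
          omega
      · -- α ≥ 2 : y ≡ 2 (mod 4), inner sum analysis
        have hy4 : y % 4 = 2 := by
          obtain ⟨w, hw⟩ : ∃ w, 2 ^ α * 3 ^ β = 4 * w :=
            ⟨2 ^ (α - 2) * 3 ^ β, by
              rw [show (4:ℕ) = 2 ^ 2 by norm_num, ← mul_assoc, ← pow_add,
                show 2 + (α - 2) = α by omega]⟩
          omega
        have hc : α + 2 * β - e - 1 ≤ q := by
          apply addonly_bound hy hy4 (by omega)
          · rw [show α + 2 * β - e - 1 - 2 = α + (2 * β - e - 3) by omega, pow_add]
            omega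
          · rw [show α + 2 * β - e - 1 - 3 = α + (2 * β - e - 4) by omega, pow_add]
            have hAA : (2:ℕ) ^ (2 * β - e - 3) = 2 ^ (2 * β - e - 4) * 2 := by
              rw [← pow_succ]; congr 1; omega
            have hAA' : 2 ^ α * 2 ^ (2 * β - e - 3) = 2 ^ α * 2 ^ (2 * β - e - 4) * 2 := by
              rw [hAA, ← mul_assoc]
            have hpos : 0 < 2 ^ α * 2 ^ (2 * β - e - 4) := by positivity
            omega
        omega
  · -- x = 4, p = 2
    subst hx1
    have hq := bits_ge (cr_le hy) (show 2 ^ (α + (2 * β - e - 3)) < y by rw [pow_add]; omega)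
    omega

lemma main_lb : ∀ n, ∀ k, CanRepr 2 n k → ∀ α β, β ≤ 9 → n = 2 ^ α * 3 ^ β → Tf α β ≤ k := by
  intro n
  induction n using Nat.strong_induction_on with
  | _ n IH =>
    intro k h α β hβ hn
    rcases le_or_gt β 2 with hβ2 | hβ3
    · -- small β : size bound suffices
      have hle := cr_le h
      rw [hn] at hle
      interval_cases β
      · -- β = 0
        simp at hle
        have := pow2_le_of_le hle
        simp [Tf]; omega
      · -- β = 1
        have h1 : (2:ℕ) ^ (α + 1) = 2 ^ α * 2 := by rw [pow_add]; norm_num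
        have h2 : (2:ℕ) ^ (α + 1) < 2 ^ α * 3 ^ 1 := by
          have := one_le_pow2 α; norm_num; omega
        have := bits_ge hle h2
        simp [Tf]; omega
      · -- β = 2
        have h1 : (2:ℕ) ^ (α + 3) = 2 ^ α * 8 := by rw [pow_add]; norm_num
        have h2 : (2:ℕ) ^ (α + 3) < 2 ^ α * 3 ^ 2 := by
          have := one_le_pow2 α; norm_num; omega
        have := bits_ge hle h2
        simp [Tf]; omega
    · -- β ≥ 3
      have hodd3 : (3:ℕ) ^ β % 2 = 1 := by rw [Nat.pow_mod]; norm_num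
      have hα : 1 ≤ α := by
        by_contra hc
        have hα0 : α = 0 := by omega
        subst hα0
        have hev := cr_even h
        simp at hn
        omega
      have h2α : (2:ℕ) ≤ 2 ^ α := by
        calc (2:ℕ) = 2 ^ 1 := by norm_num
        _ ≤ 2 ^ α := Nat.pow_le_pow_right (by norm_num) hα
      cases h with
      | base =>
          exfalso
          have h27 : (27:ℕ) ≤ 3 ^ β := by
            calc (27:ℕ) = 3 ^ 3 := by norm_num
            _ ≤ 3 ^ β := Nat.pow_le_pow_right (by norm_num) hβ3
          have hbig : 2 * 27 ≤ 2 ^ α * 3 ^ β := Nat.mul_le_mul h2α h27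
          omega
      | @mul x y p q hx hy =>
          obtain ⟨i, u, hia, hu, rfl⟩ := dvd_split α hodd3 ⟨y, hn.symm⟩
          obtain ⟨j, hj, hju⟩ := (Nat.dvd_prime_pow Nat.prime_three).mp hu
          subst hju
          have hyv : y = 2 ^ (α - i) * 3 ^ (β - j) :=
            cofactor hia (by rw [← pow_add]; congr 1; omega)
              (Nat.pow_pos (by norm_num)) hn
          have hx2 := cr_two_le hx
          have hy2 := cr_two_le hy
          have hxlt : 2 ^ i * 3 ^ j < 2 ^ i * 3 ^ j * y := by nlinarith
          have hylt : y < 2 ^ i * 3 ^ j * y := by nlinarith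
          have k1 := IH _ hxlt p hx i j (by omega) rfl
          have k2 := IH y hylt q hy (α - i) (β - j) (by omega) hyv
          have hsup := Tsuper hia hj hβ
          omega
      | @add x y p q hx hy =>
          rcases le_or_gt p 2 with hp | hp
          · exact main_add_small hβ3 hβ hα hx hy hn hp
          · rcases le_or_gt q 2 with hq | hq
            · have := main_add_small hβ3 hβ hα hy hx
                (by rw [Nat.add_comm]; exact hn) hq
              omega
            · -- both summands need ≥ 3 twos
              set e : ℕ := if 8 ≤ β then 1 else 0 with he
              have he1 : e ≤ 1 := by rw [he]; split_ifs <;> omega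
              have hTf : Tf α β = α + 2 * β - e := by rw [he]; rfl
              have hN1 : 2 ^ (2 * β - e - 3) + 3 ≤ 3 ^ β := by
                rw [he]; interval_cases β <;> norm_num
              have key : 2 ^ α * 2 ^ (2 * β - e - 3) + 3 * 2 ^ α ≤ 2 ^ α * 3 ^ β := by
                calc 2 ^ α * 2 ^ (2 * β - e - 3) + 3 * 2 ^ α
                    = 2 ^ α * (2 ^ (2 * β - e - 3) + 3) := by ring
                _ ≤ 2 ^ α * 3 ^ β := Nat.mul_le_mul_left _ hN1
              have hA : x ≤ 2 ^ (p + q - 3) :=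
                le_trans (cr_le hx) (Nat.pow_le_pow_right (by norm_num) (by omega))
              have hB : y ≤ 2 ^ (p + q - 3) :=
                le_trans (cr_le hy) (Nat.pow_le_pow_right (by norm_num) (by omega))
              have hsum : x + y ≤ 2 ^ (p + q - 2) := by
                have hd : 2 ^ (p + q - 2) = 2 ^ (p + q - 3) * 2 := by
                  rw [← pow_succ]; congr 1; omega
                omega
              have hlt : (2:ℕ) ^ (α + (2 * β - e - 3)) < 2 ^ (p + q - 2) := by
                apply lt_of_lt_of_le _ hsum
                rw [pow_add]
                omega
              have := pow2_lt_exp hlt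
              omega

lemma cr6 : CanRepr 2 6 3 := by
  have h4 : CanRepr 2 4 2 := CanRepr.add CanRepr.base CanRepr.base
  exact CanRepr.add CanRepr.base h4

lemma cr6pow : ∀ r, 1 ≤ r → CanRepr 2 (6 ^ r) (3 * r) := by
  intro r hr
  induction r with
  | zero => omega
  | succ r ih =>
      rcases Nat.eq_zero_or_pos r with h0 | h0
      · subst h0; simpa using cr6
      · have h := CanRepr.mul (ih h0) cr6
        have e1 : (6:ℕ) ^ r * 6 = 6 ^ (r + 1) := by rw [pow_succ]
        have e2 : 3 * r + 3 = 3 * (r + 1) := by ring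
        rw [e1, e2] at h
        exact h

lemma cr2pow : ∀ m X c, CanRepr 2 X c → CanRepr 2 (2 ^ m * X) (m + c) := by
  intro m
  induction m with
  | zero => intro X c h; simpa using h
  | succ m ih =>
      intro X c h
      have h2 := CanRepr.mul CanRepr.base (ih X c h)
      have e1 : (2:ℕ) * (2 ^ m * X) = 2 ^ (m + 1) * X := by ring
      have e2 : 1 + (m + c) = (m + 1) + c := by ring
      rw [e1, e2] at h2
      exact h2

theorem stmt_13 (m r : ℕ) (hr1 : 8 ≤ r) (hr2 : r ≤ 9) :
    m + 3 * r - 1 ≤ complexity 2 (2 ^ m * 6 ^ r) ∧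
      complexity 2 (2 ^ m * 6 ^ r) ≤ m + 3 * r := by
  have hmem : CanRepr 2 (2 ^ m * 6 ^ r) (m + 3 * r) := cr2pow m _ _ (cr6pow r (by omega))
  have hupper : complexity 2 (2 ^ m * 6 ^ r) ≤ m + 3 * r := Nat.sInf_le hmem
  have hinf : CanRepr 2 (2 ^ m * 6 ^ r) (complexity 2 (2 ^ m * 6 ^ r)) :=
    Nat.sInf_mem (⟨m + 3 * r, hmem⟩ : {k | CanRepr 2 (2 ^ m * 6 ^ r) k}.Nonempty)
  have hform : 2 ^ m * 6 ^ r = 2 ^ (m + r) * 3 ^ r := by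
    rw [show (6:ℕ) = 2 * 3 by norm_num, mul_pow, pow_add]; ring
  have hlow := main_lb _ _ hinf (m + r) r hr2 hform
  have hTf : Tf (m + r) r = m + r + 2 * r - 1 := by
    unfold Tf; rw [if_pos hr1]
  constructor
  · omega
  · exact hupper
end

section
/- For all integers m ≥ 0 and r with 1 ≤ r ≤ 4, one has ‖2^m · 10^r‖₂ = m + 4r. -/
namespace Stmt14Aux

/-- powers of two -/
def famA (n k : ℕ) : Prop := ∃ a, a ≤ k ∧ n = 2^a
/-- `2^c (2^b + 2)` -/
def famB (n k : ℕ) : Prop := ∃ c b, 2 ≤ b ∧ c + b + 1 ≤ k ∧ n = 2^c * (2^b + 2)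
/-- `2^c (2^b₁+2)(2^b₂+2)` -/
def famC (n k : ℕ) : Prop :=
  ∃ c b₁ b₂, 2 ≤ b₁ ∧ 3 ≤ b₂ ∧ c + b₁ + b₂ + 2 ≤ k ∧ n = 2^c * ((2^b₁ + 2) * (2^b₂ + 2))
/-- `2^c (2^b (2^d+2) + 2)` -/
def famD (n k : ℕ) : Prop :=
  ∃ c b d, 1 ≤ b ∧ 2 ≤ d ∧ c + b + d + 2 ≤ k ∧ n = 2^c * (2^b * (2^d + 2) + 2)

def Fam4 (n k : ℕ) : Prop := famA n k ∨ famB n k ∨ famC n k ∨ famD n k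

/-- the master invariant -/
def Good (n k : ℕ) : Prop :=
  2 ≤ n ∧ n % 2 = 0 ∧ n ≤ 2^k ∧
  (25 * 2^(k+1) ≤ 64 * n → n = 2^k) ∧
  (125 * 2^(k+1) ≤ 512 * n → famA n k ∨ famB n k) ∧
  (625 * 2^(k+1) ≤ 4096 * n → Fam4 n k)

lemma pow2_pos (a : ℕ) : 0 < 2^a := Nat.two_pow_pos a

lemma pow2_mono {a b : ℕ} (h : a ≤ b) : (2:ℕ)^a ≤ 2^b :=
  Nat.pow_le_pow_right (by norm_num) h

lemma odd_cancel : ∀ i j u v : ℕ, u % 2 = 1 → v % 2 = 1 → 2^i * u = 2^j * v → u = v := by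
  intro i
  induction i with
  | zero =>
    intro j u v hu hv h
    cases j with
    | zero => simpa using h
    | succ j =>
      exfalso
      rw [pow_succ] at h
      simp only [pow_zero, one_mul] at h
      rw [show (2:ℕ)^j * 2 * v = 2 * (2^j * v) from by ring] at h
      omega
  | succ i ih =>
    intro j u v hu hv h
    cases j with
    | zero =>
      exfalso
      rw [pow_succ] at h
      simp only [pow_zero, one_mul] at h
      rw [show (2:ℕ)^i * 2 * u = 2 * (2^i * u) from by ring] at h
      omega
    | succ j =>
      rw [pow_succ, pow_succ] at h
      rw [show (2:ℕ)^i * 2 * u = 2 * (2^i * u) from by ring,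
          show (2:ℕ)^j * 2 * v = 2 * (2^j * v) from by ring] at h
      exact ih j u v hu hv (Nat.eq_of_mul_eq_mul_left (by norm_num) h)

lemma cancel_le {c A B : ℕ} (h : A * 2^c ≤ B * 2^c) : A ≤ B :=
  Nat.le_of_mul_le_mul_right h (pow2_pos c)

/-- transfer a global inequality past a factor `2^cc` -/
lemma bridge {P Q W T cc k : ℕ} (hyp : P * 2^k ≤ Q * (W * 2^cc)) (hk : T + cc ≤ k) :
    P * 2^T ≤ Q * W := by
  apply cancel_le (c := cc)
  calc P * 2^T * 2^cc = P * 2^(T+cc) := by rw [pow_add]; ring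
    _ ≤ P * 2^k := Nat.mul_le_mul_left _ (pow2_mono hk)
    _ ≤ Q * (W * 2^cc) := hyp
    _ = Q * W * 2^cc := by ring

/-- hypothesis transfer to children in the `mul`/`add` cases -/
lemma hyp_child {M C a b p q : ℕ} (hb : b ≤ 2^q) (h : M * 2^(p+q+1) ≤ C * (a*b)) :
    M * 2^(p+1) ≤ C * a := by
  apply cancel_le (c := q)
  calc M * 2^(p+1) * 2^q = M * 2^(p+q+1) := by
        rw [mul_assoc, ← pow_add]
        congr 2
        omega
    _ ≤ C * (a*b) := h
    _ ≤ C * a * 2^q := by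
        calc C * (a*b) = C * a * b := by ring
          _ ≤ C * a * 2^q := Nat.mul_le_mul_left _ hb

-- scaling lemmas
lemma famA_scale {n k : ℕ} (α : ℕ) (h : famA n k) : famA (2^α * n) (α + k) := by
  obtain ⟨a, hak, rfl⟩ := h
  exact ⟨α + a, by omega, by rw [pow_add]⟩

lemma famB_scale {n k : ℕ} (α : ℕ) (h : famB n k) : famB (2^α * n) (α + k) := by
  obtain ⟨c, b, hb, hk, rfl⟩ := h
  exact ⟨α + c, b, hb, by omega, by rw [pow_add, mul_assoc]⟩

lemma famC_scale {n k : ℕ} (α : ℕ) (h : famC n k) : famC (2^α * n) (α + k) := by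
  obtain ⟨c, b₁, b₂, h1, h2, hk, rfl⟩ := h
  exact ⟨α + c, b₁, b₂, h1, h2, by omega, by rw [pow_add, mul_assoc]⟩

lemma famD_scale {n k : ℕ} (α : ℕ) (h : famD n k) : famD (2^α * n) (α + k) := by
  obtain ⟨c, b, d, h1, h2, hk, rfl⟩ := h
  exact ⟨α + c, b, d, h1, h2, by omega, by rw [pow_add, mul_assoc]⟩

lemma Fam4_scale {n k : ℕ} (α : ℕ) (h : Fam4 n k) : Fam4 (2^α * n) (α + k) := by
  rcases h with h | h | h | h
  · exact Or.inl (famA_scale α h)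
  · exact Or.inr (Or.inl (famB_scale α h))
  · exact Or.inr (Or.inr (Or.inl (famC_scale α h)))
  · exact Or.inr (Or.inr (Or.inr (famD_scale α h)))

-- value bounds
lemma famC_ge {n k : ℕ} (h : famC n k) : 60 ≤ n := by
  obtain ⟨c, b₁, b₂, h1, h2, hk, rfl⟩ := h
  have hx : (4:ℕ) ≤ 2^b₁ := by calc (4:ℕ) = 2^2 := by norm_num
                                  _ ≤ 2^b₁ := pow2_mono h1
  have hy : (8:ℕ) ≤ 2^b₂ := by calc (8:ℕ) = 2^3 := by norm_num
                                  _ ≤ 2^b₂ := pow2_mono h2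
  have hc : (1:ℕ) ≤ 2^c := Nat.one_le_two_pow
  calc (60:ℕ) ≤ 1 * ((2^b₁+2) * (2^b₂+2)) := by nlinarith
    _ ≤ 2^c * ((2^b₁+2) * (2^b₂+2)) := Nat.mul_le_mul_right _ hc

lemma famD_ge {n k : ℕ} (h : famD n k) : 14 ≤ n := by
  obtain ⟨c, b, d, h1, h2, hk, rfl⟩ := h
  have hx : (2:ℕ) ≤ 2^b := by calc (2:ℕ) = 2^1 := by norm_num
                                 _ ≤ 2^b := pow2_mono h1
  have hy : (4:ℕ) ≤ 2^d := by calc (4:ℕ) = 2^2 := by norm_num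
                                 _ ≤ 2^d := pow2_mono h2
  have hc : (1:ℕ) ≤ 2^c := Nat.one_le_two_pow
  calc (14:ℕ) ≤ 1 * (2^b * (2^d+2) + 2) := by nlinarith
    _ ≤ 2^c * (2^b * (2^d+2) + 2) := Nat.mul_le_mul_right _ hc

-- defect bounds for families
lemma famB_light {n k : ℕ} (h : famB n k) : 4 * n ≤ 3 * 2^k := by
  obtain ⟨c, b, hb, hk, rfl⟩ := h
  have hx : (4:ℕ) ≤ 2^b := by calc (4:ℕ) = 2^2 := by norm_num
                                 _ ≤ 2^b := pow2_mono hb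
  calc 4 * (2^c * (2^b+2)) = (4 * (2^b+2)) * 2^c := by ring
    _ ≤ (3 * (2^b * 2)) * 2^c := by
        have : 4 * (2^b+2) ≤ 3 * (2^b * 2) := by nlinarith
        exact Nat.mul_le_mul_right _ this
    _ = 3 * 2^(c+b+1) := by rw [pow_add, pow_add, pow_one]; ring
    _ ≤ 3 * 2^k := Nat.mul_le_mul_left _ (pow2_mono hk)

lemma famB_heavy {n k c b : ℕ} (hb : 3 ≤ b) (hk : c + b + 1 ≤ k)
    (hn : n = 2^c * (2^b+2)) : 8 * n ≤ 5 * 2^k := by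
  subst hn
  have hx : (8:ℕ) ≤ 2^b := by calc (8:ℕ) = 2^3 := by norm_num
                                 _ ≤ 2^b := pow2_mono hb
  calc 8 * (2^c * (2^b+2)) = (8 * (2^b+2)) * 2^c := by ring
    _ ≤ (5 * (2^b * 2)) * 2^c := by
        have : 8 * (2^b+2) ≤ 5 * (2^b * 2) := by nlinarith
        exact Nat.mul_le_mul_right _ this
    _ = 5 * 2^(c+b+1) := by rw [pow_add, pow_add, pow_one]; ring
    _ ≤ 5 * 2^k := Nat.mul_le_mul_left _ (pow2_mono hk)

lemma famC_heavy {n k : ℕ} (h : famC n k) : 32 * n ≤ 15 * 2^k := by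
  obtain ⟨c, b₁, b₂, h1, h2, hk, rfl⟩ := h
  have hx : (4:ℕ) ≤ 2^b₁ := by calc (4:ℕ) = 2^2 := by norm_num
                                  _ ≤ 2^b₁ := pow2_mono h1
  have hy : (8:ℕ) ≤ 2^b₂ := by calc (8:ℕ) = 2^3 := by norm_num
                                  _ ≤ 2^b₂ := pow2_mono h2
  calc 32 * (2^c * ((2^b₁+2) * (2^b₂+2))) = (32 * ((2^b₁+2) * (2^b₂+2))) * 2^c := by ring
    _ ≤ (15 * (2^b₁ * 2^b₂ * 4)) * 2^c := by
        have h8 : 8 * 2^b₁ ≤ 2^b₁ * 2^b₂ := by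
          calc 8 * 2^b₁ = 2^b₁ * 8 := by ring
            _ ≤ 2^b₁ * 2^b₂ := Nat.mul_le_mul_left _ hy
        have h4 : 4 * 2^b₂ ≤ 2^b₁ * 2^b₂ := Nat.mul_le_mul_right _ hx
        have h32 : 32 ≤ 2^b₁ * 2^b₂ := by
          calc 32 = 4 * 8 := by norm_num
            _ ≤ 2^b₁ * 2^b₂ := Nat.mul_le_mul hx hy
        have : 32 * ((2^b₁+2) * (2^b₂+2)) ≤ 15 * (2^b₁ * 2^b₂ * 4) := by nlinarith
        exact Nat.mul_le_mul_right _ this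
    _ = 15 * 2^(c+b₁+b₂+2) := by
        rw [pow_add, pow_add, pow_add]
        norm_num
        ring
    _ ≤ 15 * 2^k := Nat.mul_le_mul_left _ (pow2_mono hk)

lemma famD_heavy {n k : ℕ} (h : famD n k) : 32 * n ≤ 15 * 2^k := by
  obtain ⟨c, b, d, h1, h2, hk, rfl⟩ := h
  have hx : (2:ℕ) ≤ 2^b := by calc (2:ℕ) = 2^1 := by norm_num
                                 _ ≤ 2^b := pow2_mono h1
  have hy : (4:ℕ) ≤ 2^d := by calc (4:ℕ) = 2^2 := by norm_num
                                 _ ≤ 2^d := pow2_mono h2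
  calc 32 * (2^c * (2^b * (2^d+2) + 2)) = (32 * (2^b * (2^d+2) + 2)) * 2^c := by ring
    _ ≤ (15 * (2^b * 2^d * 4)) * 2^c := by
        have h4 : 4 * 2^b ≤ 2^b * 2^d := by
          calc 4 * 2^b = 2^b * 4 := by ring
            _ ≤ 2^b * 2^d := Nat.mul_le_mul_left _ hy
        have h8 : 8 ≤ 2^b * 2^d := by
          calc (8:ℕ) = 2 * 4 := by norm_num
            _ ≤ 2^b * 2^d := Nat.mul_le_mul hx hy
        have : 32 * (2^b * (2^d+2) + 2) ≤ 15 * (2^b * 2^d * 4) := by nlinarith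
        exact Nat.mul_le_mul_right _ this
    _ = 15 * 2^(c+b+d+2) := by
        rw [pow_add, pow_add, pow_add]
        norm_num
        ring
    _ ≤ 15 * 2^k := Nat.mul_le_mul_left _ (pow2_mono hk)

-- generic exclusion lemmas
lemma excl_heavy_heavy {a p b q : ℕ} (ha : 0 < a) (hb : 0 < b)
    (h1 : 32 * a ≤ 15 * 2^p) (h2 : 32 * b ≤ 15 * 2^q)
    (hyp : 625 * 2^(p+q+1) ≤ 4096 * (a*b)) : False := by
  have key : 1024 * (a*b) ≤ 225 * 2^(p+q) := by
    calc 1024 * (a*b) = (32*a) * (32*b) := by ring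
      _ ≤ (15 * 2^p) * (15 * 2^q) := Nat.mul_le_mul h1 h2
      _ = 225 * 2^(p+q) := by rw [pow_add]; ring
  have e : (2:ℕ)^(p+q+1) = 2 * 2^(p+q) := by rw [pow_succ]; ring
  rw [e] at hyp
  nlinarith

lemma excl_b3_heavy {a p b q : ℕ} (ha : 0 < a) (hb : 0 < b)
    (h1 : 8 * a ≤ 5 * 2^p) (h2 : 32 * b ≤ 15 * 2^q)
    (hyp : 625 * 2^(p+q+1) ≤ 4096 * (a*b)) : False := by
  have key : 256 * (a*b) ≤ 75 * 2^(p+q) := by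
    calc 256 * (a*b) = (8*a) * (32*b) := by ring
      _ ≤ (5 * 2^p) * (15 * 2^q) := Nat.mul_le_mul h1 h2
      _ = 75 * 2^(p+q) := by rw [pow_add]; ring
  have e : (2:ℕ)^(p+q+1) = 2 * 2^(p+q) := by rw [pow_succ]; ring
  rw [e] at hyp
  nlinarith

lemma pow2_le_imp {p t : ℕ} (h : (2:ℕ)^p ≤ 2^t) : p ≤ t := by
  by_contra hc
  push_neg at hc
  have h2 := pow2_mono (show t+1 ≤ p by omega)
  rw [pow_succ] at h2
  have h3 := pow2_pos t
  omega

lemma sum_case {a p b q : ℕ} (Ga : Good a p) (Gb : Good b q) (hpq : p ≤ q) :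
    Good (a+b) (p+q) := by
  obtain ⟨ha2, haev, haP, hK1a, hK2a, hK3a⟩ := Ga
  obtain ⟨hb2, hbev, hbP, hK1b, hK2b, hK3b⟩ := Gb
  have hp1 : 1 ≤ p := by
    by_contra hc
    push_neg at hc
    interval_cases p
    simp at haP
    omega
  have hq1 : 1 ≤ q := le_trans hp1 hpq
  have hpq2 : (2:ℕ)^p ≤ 2^q := pow2_mono hpq
  have hiq : (2:ℕ)^(q+1) ≤ 2^(p+q) := pow2_mono (by omega)
  have hq1e : (2:ℕ)^(q+1) = 2 * 2^q := by rw [pow_succ]; ring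
  have hsum_le : a + b ≤ 2^(p+q) := by omega
  refine ⟨by omega, by omega, hsum_le, ?_, ?_, ?_⟩
  -- K1
  · intro h
    have e1 : 25 * 2^(p+q+1) = (25 * 2^p * 2) * 2^q := by rw [pow_add, pow_add, pow_one]; ring
    have hp2 : 25 * 2^p * 2 ≤ 128 := by
      apply cancel_le (c := q)
      calc 25 * 2^p * 2 * 2^q = 25 * 2^(p+q+1) := by rw [e1]
        _ ≤ 64 * (a+b) := h
        _ ≤ 128 * 2^q := by omega
    have hp' : p = 1 := by
      by_contra hc
      have h4 : (4:ℕ) ≤ 2^p := by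
        calc (4:ℕ) = 2^2 := by norm_num
          _ ≤ 2^p := pow2_mono (by omega)
      omega
    subst hp'
    norm_num at haP
    have ha : a = 2 := by omega
    subst ha
    have e2 : 25 * 2^(1+q+1) = 100 * 2^q := by
      rw [show 1+q+1 = q+2 by omega, pow_add]
      ring
    rw [e2] at h
    have hq' : q = 1 := by
      by_contra hc
      have h4 : (4:ℕ) ≤ 2^q := by
        calc (4:ℕ) = 2^2 := by norm_num
          _ ≤ 2^q := pow2_mono (by omega)
      omega
    subst hq'
    norm_num at hbP
    have hb : b = 2 := by omega
    subst hb
    norm_num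
  -- K2
  · intro h
    have e1 : 125 * 2^(p+q+1) = (125 * 2^p * 2) * 2^q := by rw [pow_add, pow_add, pow_one]; ring
    have hp2 : 125 * 2^p * 2 ≤ 1024 := by
      apply cancel_le (c := q)
      calc 125 * 2^p * 2 * 2^q = 125 * 2^(p+q+1) := by rw [e1]
        _ ≤ 512 * (a+b) := h
        _ ≤ 1024 * 2^q := by omega
    have hple : p ≤ 2 := by
      by_contra hc
      have h8 : (8:ℕ) ≤ 2^p := by
        calc (8:ℕ) = 2^3 := by norm_num
          _ ≤ 2^p := pow2_mono (by omega)
      omega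
    rcases (show p = 1 ∨ p = 2 by omega) with hp' | hp'
    · -- p = 1, a = 2
      subst hp'
      norm_num at haP
      have ha : a = 2 := by omega
      subst ha
      have e2 : 125 * 2^(1+q+1) = 250 * 2^(q+1) := by
        rw [show 1+q+1 = (q+1)+1 by omega, pow_succ]
        ring
      have hypb : 125 * 2^(q+1) ≤ 512 * b := by
        rw [e2] at h
        omega
      rcases hK2b hypb with ⟨α, hαk, rfl⟩ | ⟨c, e, he, hck, rfl⟩
      · -- b = 2^α
        have hα1 : 1 ≤ α := by
          by_contra hc
          push_neg at hc
          interval_cases α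
          norm_num at hb2
        rcases (show α = 1 ∨ 2 ≤ α by omega) with hα | hα
        · subst hα
          left
          exact ⟨2, by omega, by norm_num⟩
        · right
          exact ⟨0, α, hα, by omega, by rw [pow_zero]; ring⟩
      · -- b = 2^c * (2^e + 2)
        rcases Nat.eq_zero_or_pos c with hc0 | hc1
        · subst hc0
          rw [pow_zero, one_mul] at *
          rcases (show e = 2 ∨ 3 ≤ e by omega) with he' | he'
          · subst he'
            left
            exact ⟨3, by omega, by norm_num⟩
          · obtain ⟨f, rfl⟩ : ∃ f, e = f + 1 := ⟨e-1, by omega⟩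
            right
            refine ⟨1, f, by omega, by omega, by ring⟩
        · -- c ≥ 1 : excluded
          exfalso
          have hX : (2:ℕ) ≤ 2^c := by
            calc (2:ℕ) = 2^1 := by norm_num
              _ ≤ 2^c := pow2_mono hc1
          have hY : (4:ℕ) ≤ 2^e := by
            calc (4:ℕ) = 2^2 := by norm_num
              _ ≤ 2^e := pow2_mono he
          have hZ : 8 * (2^c * 2^e) ≤ 2^(q+2) := by
            calc 8 * (2^c * 2^e) = 2^(c+e+3) := by rw [pow_add, pow_add]; norm_num; ring
              _ ≤ 2^(q+2) := pow2_mono (by omega)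
          have h' : 125 * 2^(1+q+1) = 125 * 2^(q+2) := by
            rw [show 1+q+1 = q+2 by omega]
          rw [h'] at h
          have hrhs : 512 * (2 + 2^c * (2^e+2)) = 1024 + 512 * (2^c * 2^e) + 1024 * 2^c := by ring
          rw [hrhs] at h
          have h4X : 4 * 2^c ≤ 2^c * 2^e := by
            calc 4 * 2^c = 2^c * 4 := by ring
              _ ≤ 2^c * 2^e := Nat.mul_le_mul_left _ hY
          have key : 1000 * (2^c * 2^e) ≤ 1024 + 512 * (2^c * 2^e) + 1024 * 2^c := by
            calc 1000 * (2^c * 2^e) = 125 * (8 * (2^c * 2^e)) := by ring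
              _ ≤ 125 * 2^(q+2) := Nat.mul_le_mul_left _ hZ
              _ ≤ _ := h
          omega
    · -- p = 2
      subst hp'
      norm_num at haP
      have hq2' : 2 ≤ q := hpq
      have ha : a = 2 ∨ a = 4 := by omega
      have e2 : 125 * 2^(2+q+1) = 1000 * 2^q := by
        rw [show 2+q+1 = q+3 by omega, pow_add]
        ring
      rw [e2] at h
      rcases ha with ha | ha
      · -- a = 2, p = 2: impossible
        exfalso
        subst ha
        have h4 : (4:ℕ) ≤ 2^q := by
          calc (4:ℕ) = 2^2 := by norm_num
            _ ≤ 2^q := pow2_mono hq2'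
        omega
      · -- a = 4
        subst ha
        have hq' : q = 2 := by
          by_contra hc
          have h8 : (8:ℕ) ≤ 2^q := by
            calc (8:ℕ) = 2^3 := by norm_num
              _ ≤ 2^q := pow2_mono (by omega)
          omega
        subst hq'
        norm_num at hbP h
        have hb4 : b = 2 ∨ b = 4 := by omega
        rcases hb4 with hb' | hb'
        · subst hb'
          right
          exact ⟨0, 2, by omega, by omega, by norm_num⟩
        · subst hb'
          left
          exact ⟨3, by omega, by norm_num⟩
  -- K3
  · intro h
    have e1 : 625 * 2^(p+q+1) = (625 * 2^p * 2) * 2^q := by rw [pow_add, pow_add, pow_one]; ring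
    have hp2 : 625 * 2^p * 2 ≤ 8192 := by
      apply cancel_le (c := q)
      calc 625 * 2^p * 2 * 2^q = 625 * 2^(p+q+1) := by rw [e1]
        _ ≤ 4096 * (a+b) := h
        _ ≤ 8192 * 2^q := by omega
    have hple : p ≤ 2 := by
      by_contra hc
      have h8 : (8:ℕ) ≤ 2^p := by
        calc (8:ℕ) = 2^3 := by norm_num
          _ ≤ 2^p := pow2_mono (by omega)
      omega
    rcases (show p = 1 ∨ p = 2 by omega) with hp' | hp'
    · -- p = 1, a = 2
      subst hp'
      norm_num at haP
      have ha : a = 2 := by omega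
      subst ha
      have e2 : 625 * 2^(1+q+1) = 1250 * 2^(q+1) := by
        rw [show 1+q+1 = (q+1)+1 by omega, pow_succ]
        ring
      have hypb : 625 * 2^(q+1) ≤ 4096 * b := by
        rw [e2] at h
        omega
      rcases hK3b hypb with ⟨α, hαk, rfl⟩ | ⟨c, e, he, hck, rfl⟩ | hC | hD
      · -- b = 2^α
        have hα1 : 1 ≤ α := by
          by_contra hc
          push_neg at hc
          interval_cases α
          norm_num at hb2
        rcases (show α = 1 ∨ 2 ≤ α by omega) with hα | hα
        · subst hα
          left
          exact ⟨2, by omega, by norm_num⟩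
        · right; left
          exact ⟨0, α, hα, by omega, by rw [pow_zero]; ring⟩
      · -- b = 2^c (2^e+2)
        rcases Nat.eq_zero_or_pos c with hc0 | hc1
        · subst hc0
          rw [pow_zero, one_mul] at *
          rcases (show e = 2 ∨ 3 ≤ e by omega) with he' | he'
          · subst he'
            left
            exact ⟨3, by omega, by norm_num⟩
          · obtain ⟨f, rfl⟩ : ∃ f, e = f + 1 := ⟨e-1, by omega⟩
            right; left
            refine ⟨1, f, by omega, by omega, by ring⟩
        · -- c ≥ 1 → famD
          right; right; right
          exact ⟨0, c, e, hc1, he, by omega, by rw [pow_zero]; ring⟩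
      · -- famC: excluded
        exfalso
        have hheavy := famC_heavy hC
        have hge := famC_ge hC
        have e3 : 625 * 2^(1+q+1) = 2500 * 2^q := by
          rw [show 1+q+1 = q+2 by omega, pow_add]
          ring
        rw [e3] at h
        omega
      · -- famD: excluded
        exfalso
        have hheavy := famD_heavy hD
        have hge := famD_ge hD
        have e3 : 625 * 2^(1+q+1) = 2500 * 2^q := by
          rw [show 1+q+1 = q+2 by omega, pow_add]
          ring
        rw [e3] at h
        omega
    · -- p = 2 : small enumeration
      subst hp'
      norm_num at haP
      have hq2' : 2 ≤ q := hpq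
      have e2 : 625 * 2^(2+q+1) = 5000 * 2^q := by
        rw [show 2+q+1 = q+3 by omega, pow_add]
        ring
      rw [e2] at h
      have hq4 : q ≤ 4 := by
        by_contra hc
        have h32 : (32:ℕ) ≤ 2^q := by
          calc (32:ℕ) = 2^5 := by norm_num
            _ ≤ 2^q := pow2_mono (by omega)
        omega
      interval_cases q <;> norm_num at hbP h
      · -- q = 2 : (a,b) ∈ {(2,4),(4,2),(4,4)}
        have hab : (a = 2 ∧ b = 4) ∨ (a = 4 ∧ b = 2) ∨ (a = 4 ∧ b = 4) := by omega
        rcases hab with ⟨rfl, rfl⟩ | ⟨rfl, rfl⟩ | ⟨rfl, rfl⟩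
        · right; left; exact ⟨0, 2, by omega, by omega, by norm_num⟩
        · right; left; exact ⟨0, 2, by omega, by omega, by norm_num⟩
        · left; exact ⟨3, by omega, by norm_num⟩
      · -- q = 3 : (a,b) ∈ {(2,8),(4,6),(4,8)}
        have hab : (a = 2 ∧ b = 8) ∨ (a = 4 ∧ b = 6) ∨ (a = 4 ∧ b = 8) := by omega
        rcases hab with ⟨rfl, rfl⟩ | ⟨rfl, rfl⟩ | ⟨rfl, rfl⟩
        · right; left; exact ⟨0, 3, by omega, by omega, by norm_num⟩
        · right; left; exact ⟨0, 3, by omega, by omega, by norm_num⟩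
        · right; left; exact ⟨1, 2, by omega, by omega, by norm_num⟩
      · -- q = 4 : (a,b) = (4,16)
        have hab : a = 4 ∧ b = 16 := by omega
        obtain ⟨rfl, rfl⟩ := hab
        right; left
        exact ⟨1, 3, by omega, by omega, by norm_num⟩

-- monotonicity
lemma famA_mono {n k k' : ℕ} (h : famA n k) (hk : k ≤ k') : famA n k' := by
  obtain ⟨a, h1, h2⟩ := h; exact ⟨a, by omega, h2⟩
lemma famB_mono {n k k' : ℕ} (h : famB n k) (hk : k ≤ k') : famB n k' := by
  obtain ⟨c, b, h1, h2, h3⟩ := h; exact ⟨c, b, h1, by omega, h3⟩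
lemma famC_mono {n k k' : ℕ} (h : famC n k) (hk : k ≤ k') : famC n k' := by
  obtain ⟨c, b₁, b₂, h1, h2, h3, h4⟩ := h; exact ⟨c, b₁, b₂, h1, h2, by omega, h4⟩
lemma famD_mono {n k k' : ℕ} (h : famD n k) (hk : k ≤ k') : famD n k' := by
  obtain ⟨c, b, d, h1, h2, h3, h4⟩ := h; exact ⟨c, b, d, h1, h2, by omega, h4⟩
lemma Fam4_mono {n k k' : ℕ} (h : Fam4 n k) (hk : k ≤ k') : Fam4 n k' := by
  rcases h with h | h | h | h
  · exact Or.inl (famA_mono h hk)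
  · exact Or.inr (Or.inl (famB_mono h hk))
  · exact Or.inr (Or.inr (Or.inl (famC_mono h hk)))
  · exact Or.inr (Or.inr (Or.inr (famD_mono h hk)))

/-- `famB × famB` is always `famB` (case 6·6) or `famC`. -/
lemma mulBB {a p b q : ℕ} (hA : famB a p) (hB : famB b q) : Fam4 (a*b) (p+q) := by
  obtain ⟨c₁, e₁, he₁, hk₁, rfl⟩ := hA
  obtain ⟨c₂, e₂, he₂, hk₂, rfl⟩ := hB
  rcases (show (e₁ = 2 ∧ e₂ = 2) ∨ 3 ≤ e₂ ∨ (3 ≤ e₁ ∧ e₂ = 2) by omega) with ⟨rfl, rfl⟩ | he | ⟨he, rfl⟩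
  · right; left
    exact ⟨c₁+c₂+1, 4, by norm_num, by omega, by simp only [pow_add, pow_one]; ring⟩
  · right; right; left
    exact ⟨c₁+c₂, e₁, e₂, he₁, he, by omega, by simp only [pow_add]; ring⟩
  · right; right; left
    exact ⟨c₁+c₂, 2, e₁, by norm_num, he, by omega, by simp only [pow_add]; ring⟩

/-- the `famB × famB` exclusion at the `K2` level -/
lemma mulBB2 {a p b q : ℕ} (hA : famB a p) (hB : famB b q)
    (h : 125 * 2^(p+q+1) ≤ 512 * (a*b)) : famA (a*b) (p+q) ∨ famB (a*b) (p+q) := by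
  obtain ⟨c₁, e₁, he₁, hk₁, rfl⟩ := hA
  obtain ⟨c₂, e₂, he₂, hk₂, rfl⟩ := hB
  rcases (show (e₁ = 2 ∧ e₂ = 2) ∨ 3 ≤ e₂ ∨ (3 ≤ e₁ ∧ e₂ = 2) by omega) with ⟨rfl, rfl⟩ | he | ⟨he, rfl⟩
  · right
    exact ⟨c₁+c₂+1, 4, by norm_num, by omega, by simp only [pow_add, pow_one]; ring⟩
  · exfalso
    have eq1 : (2^c₁*(2^e₁+2)) * (2^c₂*(2^e₂+2)) = ((2^e₁+2)*(2^e₂+2)) * 2^(c₁+c₂) := by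
      simp only [pow_add]; ring
    rw [eq1] at h
    have key : 125 * 2^(e₁+e₂+3) ≤ 512 * ((2^e₁+2)*(2^e₂+2)) := bridge h (by omega)
    have e2 : (2:ℕ)^(e₁+e₂+3) = 8 * (2^e₁ * 2^e₂) := by simp only [pow_add]; ring
    rw [e2] at key
    have hx : (4:ℕ) ≤ 2^e₁ := by
      calc (4:ℕ) = 2^2 := by norm_num
        _ ≤ 2^e₁ := pow2_mono he₁
    have hy : (8:ℕ) ≤ 2^e₂ := by
      calc (8:ℕ) = 2^3 := by norm_num
        _ ≤ 2^e₂ := pow2_mono he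
    have h1 : 4 * 2^e₂ ≤ 2^e₁ * 2^e₂ := Nat.mul_le_mul hx (le_refl _)
    have h2 : 2^e₁ * 8 ≤ 2^e₁ * 2^e₂ := Nat.mul_le_mul (le_refl _) hy
    have h3 : 4 * 8 ≤ 2^e₁ * 2^e₂ := Nat.mul_le_mul hx hy
    nlinarith
  · exfalso
    have eq1 : (2^c₁*(2^e₁+2)) * (2^c₂*(2^2+2)) = ((2^2+2)*(2^e₁+2)) * 2^(c₁+c₂) := by
      simp only [pow_add]; ring
    rw [eq1] at h
    have key : 125 * 2^(2+e₁+3) ≤ 512 * ((2^2+2)*(2^e₁+2)) := bridge h (by omega)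
    have e2 : (2:ℕ)^(2+e₁+3) = 8 * (2^2 * 2^e₁) := by simp only [pow_add]; ring
    rw [e2] at key
    have hy : (8:ℕ) ≤ 2^e₁ := by
      calc (8:ℕ) = 2^3 := by norm_num
        _ ≤ 2^e₁ := pow2_mono he
    have h2 : (4:ℕ) * 8 ≤ 4 * 2^e₁ := Nat.mul_le_mul (le_refl _) hy
    nlinarith

/-- `famB × famC` at the `K3` level: include `6·6(2^b+2)` for `b ≤ 4`, else excluded. -/
lemma mulBC {a p b q : ℕ} (hA : famB a p) (hB : famC b q)
    (h : 625 * 2^(p+q+1) ≤ 4096 * (a*b)) : Fam4 (a*b) (p+q) := by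
  obtain ⟨c₃, e₃, he₃, hk₃, rfl⟩ := hA
  obtain ⟨c, b₁, b₂, hb₁, hb₂, hk, rfl⟩ := hB
  rcases (show 3 ≤ e₃ ∨ e₃ = 2 by omega) with he | rfl
  · exfalso
    exact excl_b3_heavy (by positivity) (by positivity)
      (famB_heavy he hk₃ rfl) (famC_heavy ⟨c, b₁, b₂, hb₁, hb₂, hk, rfl⟩) h
  rcases (show 3 ≤ b₁ ∨ b₁ = 2 by omega) with hb₁' | rfl
  · -- both b₁ b₂ ≥ 3 : excluded
    exfalso
    have eq1 : (2^c₃*(2^2+2)) * (2^c*((2^b₁+2)*(2^b₂+2)))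
        = (6*((2^b₁+2)*(2^b₂+2))) * 2^(c₃+c) := by
      simp only [pow_add]; ring
    rw [eq1] at h
    have key : 625 * 2^(b₁+b₂+6) ≤ 4096 * (6*((2^b₁+2)*(2^b₂+2))) := bridge h (by omega)
    have e2 : (2:ℕ)^(b₁+b₂+6) = 64 * (2^b₁ * 2^b₂) := by simp only [pow_add]; ring
    rw [e2] at key
    have hx : (8:ℕ) ≤ 2^b₁ := by
      calc (8:ℕ) = 2^3 := by norm_num
        _ ≤ 2^b₁ := pow2_mono hb₁'
    have hy : (8:ℕ) ≤ 2^b₂ := by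
      calc (8:ℕ) = 2^3 := by norm_num
        _ ≤ 2^b₂ := pow2_mono hb₂
    have h1 : 8 * 2^b₂ ≤ 2^b₁ * 2^b₂ := Nat.mul_le_mul hx (le_refl _)
    have h2 : 2^b₁ * 8 ≤ 2^b₁ * 2^b₂ := Nat.mul_le_mul (le_refl _) hy
    have h3 : 8 * 8 ≤ 2^b₁ * 2^b₂ := Nat.mul_le_mul hx hy
    nlinarith
  rcases (show b₂ = 3 ∨ b₂ = 4 ∨ 5 ≤ b₂ by omega) with rfl | rfl | hb₂'
  · -- 6 · (6·10) · 2^c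
    right; right; left
    exact ⟨c₃+c+1, 4, 3, by norm_num, by norm_num, by omega,
      by simp only [pow_add, pow_one]; ring⟩
  · -- 6 · (6·18) · 2^c
    right; right; left
    exact ⟨c₃+c+1, 4, 4, by norm_num, by norm_num, by omega,
      by simp only [pow_add, pow_one]; ring⟩
  · -- b₂ ≥ 5 : excluded
    exfalso
    have eq1 : (2^c₃*(2^2+2)) * (2^c*((2^2+2)*(2^b₂+2)))
        = (36*(2^b₂+2)) * 2^(c₃+c) := by
      simp only [pow_add]; ring
    rw [eq1] at h
    have key : 625 * 2^(b₂+8) ≤ 4096 * (36*(2^b₂+2)) := bridge h (by omega)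
    have e2 : (2:ℕ)^(b₂+8) = 256 * 2^b₂ := by simp only [pow_add]; ring
    rw [e2] at key
    have hy : (32:ℕ) ≤ 2^b₂ := by
      calc (32:ℕ) = 2^5 := by norm_num
        _ ≤ 2^b₂ := pow2_mono hb₂'
    omega

/-- `famB × famD` at the `K3` level: include `6·14·2^c`, else excluded. -/
lemma mulBD {a p b q : ℕ} (hA : famB a p) (hB : famD b q)
    (h : 625 * 2^(p+q+1) ≤ 4096 * (a*b)) : Fam4 (a*b) (p+q) := by
  obtain ⟨c₃, e₃, he₃, hk₃, rfl⟩ := hA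
  obtain ⟨c, bb, d, hbb, hd, hk, rfl⟩ := hB
  rcases (show 3 ≤ e₃ ∨ e₃ = 2 by omega) with he | rfl
  · exfalso
    exact excl_b3_heavy (by positivity) (by positivity)
      (famB_heavy he hk₃ rfl) (famD_heavy ⟨c, bb, d, hbb, hd, hk, rfl⟩) h
  rcases (show 2 ≤ bb ∨ bb = 1 by omega) with hbb' | rfl
  · -- bb ≥ 2 : excluded
    exfalso
    have eq1 : (2^c₃*(2^2+2)) * (2^c*(2^bb*(2^d+2)+2))
        = (6*(2^bb*(2^d+2)+2)) * 2^(c₃+c) := by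
      simp only [pow_add]; ring
    rw [eq1] at h
    have key : 625 * 2^(bb+d+6) ≤ 4096 * (6*(2^bb*(2^d+2)+2)) := bridge h (by omega)
    have e2 : (2:ℕ)^(bb+d+6) = 64 * (2^bb * 2^d) := by simp only [pow_add]; ring
    rw [e2] at key
    have hu : (4:ℕ) ≤ 2^bb := by
      calc (4:ℕ) = 2^2 := by norm_num
        _ ≤ 2^bb := pow2_mono hbb'
    have hv : (4:ℕ) ≤ 2^d := by
      calc (4:ℕ) = 2^2 := by norm_num
        _ ≤ 2^d := pow2_mono hd
    have h1 : 2^bb * 4 ≤ 2^bb * 2^d := Nat.mul_le_mul (le_refl _) hv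
    nlinarith
  rcases (show d = 2 ∨ 3 ≤ d by omega) with rfl | hd'
  · -- 6·14·2^c → famD
    right; right; right
    exact ⟨c₃+c+1, 2, 3, by norm_num, by norm_num, by omega,
      by simp only [pow_add, pow_one]; ring⟩
  · -- d ≥ 3 : excluded
    exfalso
    have eq1 : (2^c₃*(2^2+2)) * (2^c*(2^1*(2^d+2)+2))
        = (6*(2*(2^d+2)+2)) * 2^(c₃+c) := by
      simp only [pow_add, pow_one]; ring
    rw [eq1] at h
    have key : 625 * 2^(d+7) ≤ 4096 * (6*(2*(2^d+2)+2)) := bridge h (by omega)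
    have e2 : (2:ℕ)^(d+7) = 128 * 2^d := by simp only [pow_add]; ring
    rw [e2] at key
    have hv : (8:ℕ) ≤ 2^d := by
      calc (8:ℕ) = 2^3 := by norm_num
        _ ≤ 2^d := pow2_mono hd'
    omega

lemma mul_case {a p b q : ℕ} (Ga : Good a p) (Gb : Good b q) : Good (a*b) (p+q) := by
  obtain ⟨ha2, haev, haP, hK1a, hK2a, hK3a⟩ := Ga
  obtain ⟨hb2, hbev, hbP, hK1b, hK2b, hK3b⟩ := Gb
  have hev : (a*b) % 2 = 0 := by
    obtain ⟨a', rfl⟩ : ∃ a', a = 2*a' := ⟨a/2, by omega⟩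
    rw [mul_assoc]
    exact Nat.mul_mod_right 2 _
  have hprod : a * b ≤ 2^(p+q) := by
    rw [pow_add]
    exact Nat.mul_le_mul haP hbP
  have h2ab : 2 ≤ a * b := by nlinarith
  refine ⟨h2ab, hev, hprod, ?_, ?_, ?_⟩
  -- K1
  · intro h
    have hypa : 25 * 2^(p+1) ≤ 64 * a := hyp_child hbP h
    have hypb : 25 * 2^(q+1) ≤ 64 * b := by
      apply hyp_child haP
      rw [show q+p+1 = p+q+1 by omega, mul_comm b a]
      exact h
    rw [hK1a hypa, hK1b hypb, pow_add]
  -- K2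
  · intro h
    have hypa : 125 * 2^(p+1) ≤ 512 * a := hyp_child hbP h
    have hypb : 125 * 2^(q+1) ≤ 512 * b := by
      apply hyp_child haP
      rw [show q+p+1 = p+q+1 by omega, mul_comm b a]
      exact h
    rcases hK2a hypa with ⟨α, hαk, rfl⟩ | FaB
    · rcases hK2b hypb with ⟨β, hβk, rfl⟩ | FbB
      · left; exact ⟨α+β, by omega, by rw [pow_add]⟩
      · right; exact famB_mono (famB_scale α FbB) (by omega)
    · rcases hK2b hypb with ⟨β, hβk, rfl⟩ | FbB
      · right
        have := famB_mono (famB_scale β FaB) (show β + p ≤ p + q by omega)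
        rwa [mul_comm]
      · exact mulBB2 FaB FbB h
  -- K3
  · intro h
    have hypa : 625 * 2^(p+1) ≤ 4096 * a := hyp_child hbP h
    have hypb : 625 * 2^(q+1) ≤ 4096 * b := by
      apply hyp_child haP
      rw [show q+p+1 = p+q+1 by omega, mul_comm b a]
      exact h
    have hcomm : 625 * 2^(q+p+1) ≤ 4096 * (b*a) := by
      rw [show q+p+1 = p+q+1 by omega, mul_comm b a]
      exact h
    rcases hK3a hypa with ⟨α, hαk, rfl⟩ | FaB | FaC | FaD
    · exact Fam4_mono (Fam4_scale α (hK3b hypb)) (by omega)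
    · -- a famB
      rcases hK3b hypb with ⟨β, hβk, rfl⟩ | FbB | FbC | FbD
      · have := Fam4_mono (Fam4_scale β (Or.inr (Or.inl FaB) : Fam4 _ p))
          (show β + p ≤ p + q by omega)
        rwa [mul_comm]
      · exact mulBB FaB FbB
      · exact mulBC FaB FbC h
      · exact mulBD FaB FbD h
    · -- a famC
      rcases hK3b hypb with ⟨β, hβk, rfl⟩ | FbB | FbC | FbD
      · have := Fam4_mono (Fam4_scale β (Or.inr (Or.inr (Or.inl FaC)) : Fam4 _ p))
          (show β + p ≤ p + q by omega)
        rwa [mul_comm]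
      · have := mulBC FbB FaC hcomm
        rw [mul_comm b a, add_comm q p] at this
        exact this
      · exact absurd h (by
          intro hh
          exact excl_heavy_heavy (by omega) (by omega) (famC_heavy FaC) (famC_heavy FbC) hh)
      · exact absurd h (by
          intro hh
          exact excl_heavy_heavy (by omega) (by omega) (famC_heavy FaC) (famD_heavy FbD) hh)
    · -- a famD
      rcases hK3b hypb with ⟨β, hβk, rfl⟩ | FbB | FbC | FbD
      · have := Fam4_mono (Fam4_scale β (Or.inr (Or.inr (Or.inr FaD)) : Fam4 _ p))
          (show β + p ≤ p + q by omega)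
        rwa [mul_comm]
      · have := mulBD FbB FaD hcomm
        rw [mul_comm b a, add_comm q p] at this
        exact this
      · exact absurd h (by
          intro hh
          exact excl_heavy_heavy (by omega) (by omega) (famD_heavy FaD) (famC_heavy FbC) hh)
      · exact absurd h (by
          intro hh
          exact excl_heavy_heavy (by omega) (by omega) (famD_heavy FaD) (famD_heavy FbD) hh)

lemma main : ∀ {n k : ℕ}, CanRepr 2 n k → Good n k := by
  intro n k h
  induction h with
  | base => exact ⟨by norm_num, by norm_num, by norm_num, fun _ => by norm_num,
      fun _ => Or.inl ⟨1, by omega, by norm_num⟩,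
      fun _ => Or.inl ⟨1, by omega, by norm_num⟩⟩
  | @add a b p q ha hb iha ihb =>
    rcases le_total p q with hle | hle
    · exact sum_case iha ihb hle
    · have := sum_case ihb iha hle
      rwa [add_comm b a, add_comm q p] at this
  | mul ha hb iha ihb => exact mul_case iha ihb

-- upper bound constructions
lemma repr_pow2 : ∀ m, CanRepr 2 (2^(m+1)) (m+1) := by
  intro m
  induction m with
  | zero => simpa using CanRepr.base
  | succ i ih =>
    have h := CanRepr.mul CanRepr.base ih
    rw [show (2:ℕ) * 2^(i+1) = 2^(i+1+1) from by rw [pow_succ]; ring,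
        show 1 + (i+1) = i+1+1 from by omega] at h
    exact h

lemma repr_ten : CanRepr 2 10 4 := by
  have h8 : CanRepr 2 8 3 := by
    have h : CanRepr 2 (2*(2*2)) (1+(1+1)) :=
      CanRepr.mul CanRepr.base (CanRepr.mul CanRepr.base CanRepr.base)
    norm_num at h
    exact h
  have h := CanRepr.add CanRepr.base h8
  norm_num at h
  exact h

lemma repr_ten_pow : ∀ r, CanRepr 2 (10^(r+1)) (4*(r+1)) := by
  intro r
  induction r with
  | zero => simpa using repr_ten
  | succ i ih =>
    have h := CanRepr.mul repr_ten ih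
    rw [show (10:ℕ) * 10^(i+1) = 10^(i+1+1) from by rw [pow_succ]; ring,
        show 4 + 4*(i+1) = 4*(i+1+1) from by ring] at h
    exact h

lemma repr_upper (m r : ℕ) (hr : 1 ≤ r) : CanRepr 2 (2^m * 10^r) (m + 4*r) := by
  obtain ⟨s, rfl⟩ : ∃ s, r = s+1 := ⟨r-1, by omega⟩
  cases m with
  | zero => simpa using repr_ten_pow s
  | succ t =>
    have h := CanRepr.mul (repr_pow2 t) (repr_ten_pow s)
    exact h

-- lower bounds
lemma lower1 {m j : ℕ} (G : Good (2^m*10) j) (hj : j < m+4) : False := by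
  obtain ⟨-, -, hle, -, -, -⟩ := G
  have h1 : (2:ℕ)^j ≤ 2^(m+3) := pow2_mono (by omega)
  have e : (2:ℕ)^(m+3) = 2^m*8 := by rw [pow_add]; norm_num
  have := pow2_pos m
  omega

lemma lower2 {m j : ℕ} (G : Good (2^m*100) j) (hj : j < m+8) : False := by
  have h1 : (2:ℕ)^(j+1) ≤ 2^(m+8) := pow2_mono (by omega)
  have e : (2:ℕ)^(m+8) = 2^m*256 := by rw [pow_add]; norm_num
  have hyp : 25 * 2^(j+1) ≤ 64 * (2^m*100) := by omega
  have heq := G.2.2.2.1 hyp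
  have e2 : (2:ℕ)^(m+2)*25 = 2^j*1 := by
    rw [mul_one, ← heq, pow_add]
    ring
  have := odd_cancel (m+2) j 25 1 (by norm_num) (by norm_num) e2
  omega

lemma pow124 {f : ℕ} (h : 2^f + 1 = 125) : False := by
  rcases le_or_gt f 6 with hf | hf
  · have := pow2_mono hf
    norm_num at this
    omega
  · have := pow2_mono (show 7 ≤ f by omega)
    norm_num at this
    omega

lemma lower3 {m j : ℕ} (G : Good (2^m*1000) j) (hj : j < m+12) : False := by
  have h1 : (2:ℕ)^(j+1) ≤ 2^(m+12) := pow2_mono (by omega)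
  have e : (2:ℕ)^(m+12) = 2^m*4096 := by rw [pow_add]; norm_num
  have hyp : 125 * 2^(j+1) ≤ 512 * (2^m*1000) := by omega
  rcases G.2.2.2.2.1 hyp with ⟨α, -, heq⟩ | ⟨c, e', he, -, heq⟩
  · have e2 : (2:ℕ)^(m+3)*125 = 2^α*1 := by
      rw [mul_one, ← heq, pow_add]
      ring
    have := odd_cancel (m+3) α 125 1 (by norm_num) (by norm_num) e2
    omega
  · obtain ⟨f, rfl⟩ : ∃ f, e' = f+1 := ⟨e'-1, by omega⟩
    obtain ⟨g, rfl⟩ : ∃ g, f = g+1 := ⟨f-1, by omega⟩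
    have e2 : (2:ℕ)^(m+3)*125 = 2^(c+1)*(2^(g+1)+1) := by
      calc (2:ℕ)^(m+3)*125 = 2^m*1000 := by rw [pow_add]; ring
        _ = 2^c*(2^(g+1+1)+2) := heq
        _ = 2^(c+1)*(2^(g+1)+1) := by simp only [pow_succ, pow_add]; ring
    have hodd : (2^(g+1)+1) % 2 = 1 := by
      rw [pow_succ]
      omega
    have h125 := odd_cancel (m+3) (c+1) 125 _ (by norm_num) hodd e2
    exact pow124 h125.symm

lemma lower4 {m j : ℕ} (G : Good (2^m*10000) j) (hj : j < m+16) : False := by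
  have h1 : (2:ℕ)^(j+1) ≤ 2^(m+16) := pow2_mono (by omega)
  have e : (2:ℕ)^(m+16) = 2^m*65536 := by rw [pow_add]; norm_num
  have hyp : 625 * 2^(j+1) ≤ 4096 * (2^m*10000) := by omega
  rcases G.2.2.2.2.2 hyp with ⟨α, -, heq⟩ | ⟨c, e', he, -, heq⟩ | hC | hD
  · have e2 : (2:ℕ)^(m+4)*625 = 2^α*1 := by
      rw [mul_one, ← heq, pow_add]
      ring
    have := odd_cancel (m+4) α 625 1 (by norm_num) (by norm_num) e2
    omega
  · obtain ⟨f, rfl⟩ : ∃ f, e' = f+1 := ⟨e'-1, by omega⟩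
    obtain ⟨g, rfl⟩ : ∃ g, f = g+1 := ⟨f-1, by omega⟩
    have e2 : (2:ℕ)^(m+4)*625 = 2^(c+1)*(2^(g+1)+1) := by
      calc (2:ℕ)^(m+4)*625 = 2^m*10000 := by rw [pow_add]; ring
        _ = 2^c*(2^(g+1+1)+2) := heq
        _ = 2^(c+1)*(2^(g+1)+1) := by simp only [pow_succ, pow_add]; ring
    have hodd : (2^(g+1)+1) % 2 = 1 := by
      rw [pow_succ]
      omega
    have h625 := odd_cancel (m+4) (c+1) 625 _ (by norm_num) hodd e2
    -- 2^(g+1) = 624 : impossible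
    rcases le_or_gt (g+1) 9 with hf | hf
    · have := pow2_mono hf
      norm_num at this
      omega
    · have := pow2_mono (show 10 ≤ g+1 by omega)
      norm_num at this
      omega
  · -- famC
    obtain ⟨c, b₁, b₂, hb₁, hb₂, -, heq⟩ := hC
    obtain ⟨f₁, rfl⟩ : ∃ f, b₁ = f+1 := ⟨b₁-1, by omega⟩
    obtain ⟨f₂, rfl⟩ : ∃ f, b₂ = f+1 := ⟨b₂-1, by omega⟩
    obtain ⟨g₁, rfl⟩ : ∃ g, f₁ = g+1 := ⟨f₁-1, by omega⟩
    obtain ⟨g₂, rfl⟩ : ∃ g, f₂ = g+1 := ⟨f₂-1, by omega⟩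
    have e2 : (2:ℕ)^(m+4)*625 = 2^(c+2)*((2^(g₁+1)+1)*(2^(g₂+1)+1)) := by
      calc (2:ℕ)^(m+4)*625 = 2^m*10000 := by rw [pow_add]; ring
        _ = 2^c*((2^(g₁+1+1)+2)*(2^(g₂+1+1)+2)) := heq
        _ = 2^(c+2)*((2^(g₁+1)+1)*(2^(g₂+1)+1)) := by simp only [pow_succ, pow_add]; ring
    have hodd1 : (2^(g₁+1)+1) % 2 = 1 := by rw [pow_succ]; omega
    have hodd2 : (2^(g₂+1)+1) % 2 = 1 := by rw [pow_succ]; omega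
    have hodd : ((2^(g₁+1)+1)*(2^(g₂+1)+1)) % 2 = 1 := by
      rw [Nat.mul_mod, hodd1, hodd2]
    have h625 := odd_cancel (m+4) (c+2) 625 _ (by norm_num) hodd e2
    have hp1 : 0 < 2^(g₂+1)+1 := by positivity
    have hg₁ : g₁+1 ≤ 9 := by
      by_contra hcon
      have h10 : (1024:ℕ) ≤ 2^(g₁+1) := by
        calc (1024:ℕ) = 2^10 := by norm_num
          _ ≤ 2^(g₁+1) := pow2_mono (by omega)
      nlinarith
    have hp2 : 0 < 2^(g₁+1)+1 := by positivity
    have hg₂ : g₂+1 ≤ 9 := by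
      by_contra hcon
      have h10 : (1024:ℕ) ≤ 2^(g₂+1) := by
        calc (1024:ℕ) = 2^10 := by norm_num
          _ ≤ 2^(g₂+1) := pow2_mono (by omega)
      nlinarith
    have hg₁' : g₁ ≤ 8 := by omega
    have hg₂' : g₂ ≤ 8 := by omega
    interval_cases g₁ <;> interval_cases g₂ <;> norm_num at h625
  · -- famD
    obtain ⟨c, bb, d, hbb, hd, -, heq⟩ := hD
    obtain ⟨g, rfl⟩ : ∃ g, bb = g+1 := ⟨bb-1, by omega⟩
    obtain ⟨t, rfl⟩ : ∃ t, d = t+1 := ⟨d-1, by omega⟩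
    obtain ⟨s, rfl⟩ : ∃ s, t = s+1 := ⟨t-1, by omega⟩
    have e2 : (2:ℕ)^(m+4)*625 = 2^(c+1)*(2^g*(2^(s+2)+2)+1) := by
      calc (2:ℕ)^(m+4)*625 = 2^m*10000 := by rw [pow_add]; ring
        _ = 2^c*(2^(g+1)*(2^(s+1+1)+2)+2) := heq
        _ = 2^(c+1)*(2^g*(2^(s+2)+2)+1) := by simp only [pow_succ, pow_add]; ring
    have heven : 2^g*(2^(s+2)+2) = 2*(2^g*(2^(s+1)+1)) := by
      simp only [pow_succ]
      ring
    have hodd : (2^g*(2^(s+2)+2)+1) % 2 = 1 := by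
      rw [heven]
      omega
    have h625 := odd_cancel (m+4) (c+1) 625 _ (by norm_num) hodd e2
    have e3 : 2^(g+1)*(2^(s+1)+1) = 2^4*39 := by
      have : 2^g*(2^(s+2)+2) = 624 := by omega
      calc 2^(g+1)*(2^(s+1)+1) = 2^g*(2^(s+2)+2) := by simp only [pow_succ]; ring
        _ = 624 := this
        _ = 2^4*39 := by norm_num
    have hodd2 : (2^(s+1)+1) % 2 = 1 := by rw [pow_succ]; omega
    have h39 := odd_cancel (g+1) 4 _ 39 hodd2 (by norm_num) e3
    -- 2^(s+1) = 38 : impossible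
    rcases le_or_gt (s+1) 5 with hf | hf
    · have := pow2_mono hf
      norm_num at this
      omega
    · have := pow2_mono (show 6 ≤ s+1 by omega)
      norm_num at this
      omega

end Stmt14Aux

theorem stmt_14 (m r : ℕ) (hr1 : 1 ≤ r) (hr2 : r ≤ 4) :
    complexity 2 (2 ^ m * 10 ^ r) = m + 4 * r := by
  have hup := Stmt14Aux.repr_upper m r hr1
  apply le_antisymm
  · exact Nat.sInf_le hup
  · apply le_csInf ⟨_, hup⟩
    rintro j hj
    have G := Stmt14Aux.main hj
    by_contra hlt
    push_neg at hlt
    interval_cases r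
    · exact Stmt14Aux.lower1 (by norm_num at G ⊢; exact G) (by omega)
    · exact Stmt14Aux.lower2 (by norm_num at G ⊢; exact G) (by omega)
    · exact Stmt14Aux.lower3 (by norm_num at G ⊢; exact G) (by omega)
    · exact Stmt14Aux.lower4 (by norm_num at G ⊢; exact G) (by omega)
end
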